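/- arXiv:2507.06865 — 6 statements merged into one kernel-verified Lean document; each statement's English description precedes it below -/
import Mathlib

section
/- Let k be a field of characteristic ≠ 2, let g ≥ 1 be an integer, and let (V, ψ) be a (2g+1)-dimensional k-vector space equipped with a nondegenerate symmetric bilinear form ψ. Let B = (b₀, …, b_{2g}) be a basis of V such that ψ(b_i, b_j) = 0 whenever i + j < 2g. Then there exists a unique basis P = (p₀, …, p_{2g}) of V satisfying: (1) p_i = b_i for 0 ≤ i ≤ g; (2) p_{g+i} − b_{g+i} ∈ span(b_{g+i−1}, …, b_{g−i+1}, b_{g−i}) for 1 ≤ i ≤ g; (3) ψ(p_i, p_j) = 0 whenever i + j ≠ 2g. -/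
private noncomputable def strq {k V : Type*} [Field k] [AddCommGroup V] [Module k V]
    (ψ : LinearMap.BilinForm k V) (bn : ℕ → V) (g i : ℕ) : ℕ → V
  | 0 => bn (g + i)
  | t + 1 => strq ψ bn g i t -
      (ψ (strq ψ bn g i t) (bn (g - i + t + 1)) /
        ψ (bn (g + i - 1 - t)) (bn (g - i + t + 1))) • bn (g + i - 1 - t)

/-- **Straightening lemma.** Let `k` be a field of characteristic `≠ 2`, `g ≥ 1`, and `(V, ψ)`
a `(2g+1)`-dimensional `k`-vector space with a nondegenerate symmetric bilinear form `ψ`.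
Let `b₀, …, b_{2g}` be a basis of `V` with `ψ(b_i, b_j) = 0` whenever `i + j < 2g`.
Then there is a unique basis `p₀, …, p_{2g}` of `V` such that:
(1) `p_i = b_i` for `0 ≤ i ≤ g`;
(2) `p_{g+i} − b_{g+i} ∈ span(b_{g+i−1}, …, b_{g−i})` for `1 ≤ i ≤ g`;
(3) `ψ(p_i, p_j) = 0` whenever `i + j ≠ 2g`. -/
theorem stmt_0
    (k : Type*) [Field k] (h2 : (2 : k) ≠ 0)
    (g : ℕ) (hg : 1 ≤ g)
    (V : Type*) [AddCommGroup V] [Module k V]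
    (ψ : LinearMap.BilinForm k V)
    (hsymm : ∀ v w : V, ψ v w = ψ w v)
    (hnd : ψ.Nondegenerate)
    (b : Module.Basis (Fin (2 * g + 1)) k V)
    (hb : ∀ i j : Fin (2 * g + 1), (i : ℕ) + (j : ℕ) < 2 * g → ψ (b i) (b j) = 0) :
    ∃! p : Fin (2 * g + 1) → V,
      (LinearIndependent k p ∧ Submodule.span k (Set.range p) = ⊤) ∧
      (∀ i : Fin (2 * g + 1), (i : ℕ) ≤ g → p i = b i) ∧
      (∀ i : ℕ, ∀ _hi1 : 1 ≤ i, ∀ _hi2 : i ≤ g,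
        p ⟨g + i, by omega⟩ - b ⟨g + i, by omega⟩ ∈
          Submodule.span k (⇑b '' {j : Fin (2 * g + 1) | g - i ≤ (j : ℕ) ∧ (j : ℕ) < g + i})) ∧
      (∀ i j : Fin (2 * g + 1), (i : ℕ) + (j : ℕ) ≠ 2 * g → ψ (p i) (p j) = 0) := by
  classical
  -- the basis as a function on ℕ
  set bn : ℕ → V := fun n => if h : n < (2 * g + 1) then b ⟨n, h⟩ else 0 with hbn_def
  have hbn : ∀ n (h : n < (2 * g + 1)), bn n = b ⟨n, h⟩ := fun n h => by simp only [hbn_def, dif_pos h]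
  -- vanishing of low pairings, in ℕ form
  have hlow : ∀ m j : ℕ, m + j < 2 * g → ψ (bn m) (bn j) = 0 := by
    intro m j hmj
    have hm : m < (2 * g + 1) := by omega
    have hj : j < (2 * g + 1) := by omega
    rw [hbn m hm, hbn j hj]
    exact hb ⟨m, hm⟩ ⟨j, hj⟩ hmj
  -- antidiagonal pairings are nonzero
  have hd : ∀ m : ℕ, m ≤ 2 * g → ψ (bn m) (bn (2 * g - m)) ≠ 0 := by
    have hdet0 : (LinearMap.BilinForm.toMatrix b ψ).det ≠ 0 :=
      (LinearMap.BilinForm.nondegenerate_iff_det_ne_zero b).mp hnd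
    have hsign : ((Equiv.Perm.sign (Fin.revPerm : Equiv.Perm (Fin (2 * g + 1)))) : k) ≠ 0 := by
      rcases Int.units_eq_one_or (Equiv.Perm.sign (Fin.revPerm : Equiv.Perm (Fin (2 * g + 1))))
        with h | h <;> rw [h] <;> simp
    have hdet : (((LinearMap.BilinForm.toMatrix b ψ).submatrix Fin.revPerm id)).det ≠ 0 := by
      rw [Matrix.det_permute]
      exact mul_ne_zero hsign hdet0
    have htri : (((LinearMap.BilinForm.toMatrix b ψ).submatrix Fin.revPerm id)).BlockTriangular
        id := by
      intro i j hij
      have hij' : (j : ℕ) < (i : ℕ) := hij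
      have hi : (i : ℕ) < 2 * g + 1 := i.isLt
      simp only [Matrix.submatrix_apply, LinearMap.BilinForm.toMatrix_apply, id]
      apply hb
      have : ((Fin.revPerm i : Fin (2 * g + 1)) : ℕ) = 2 * g + 1 - 1 - (i : ℕ) := by
        simp [Fin.val_rev]
      omega
    rw [Matrix.det_of_upperTriangular htri] at hdet
    have hall := Finset.prod_ne_zero_iff.mp hdet
    intro m hm
    have hmN : 2 * g - m < 2 * g + 1 := by omega
    have := hall ⟨2 * g - m, hmN⟩ (Finset.mem_univ _)
    simp only [Matrix.submatrix_apply, LinearMap.BilinForm.toMatrix_apply, id] at this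
    have hrev : (Fin.revPerm (⟨2 * g - m, hmN⟩ : Fin (2 * g + 1))) = ⟨m, by omega⟩ := by
      apply Fin.ext
      simp [Fin.val_rev]
      omega
    rw [hrev] at this
    rw [hbn m (by omega), hbn (2 * g - m) (by omega)]
    exact this
  -- vanishing pairing with a span
  have spanl : ∀ (S : Set (Fin (2 * g + 1))) (v : V), (∀ m ∈ S, ψ v (b m) = 0) →
      ∀ w ∈ Submodule.span k (⇑b '' S), ψ v w = 0 := by
    intro S v hv w hw
    have : Submodule.span k (⇑b '' S) ≤ LinearMap.ker (ψ v) := by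
      rw [Submodule.span_le]
      rintro _ ⟨m, hm, rfl⟩
      simpa using hv m hm
    exact this hw
  have spanr : ∀ (S : Set (Fin (2 * g + 1))) (u : V), (∀ m ∈ S, ψ (b m) u = 0) →
      ∀ w ∈ Submodule.span k (⇑b '' S), ψ w u = 0 := by
    intro S u hu w hw
    have : Submodule.span k (⇑b '' S) ≤ LinearMap.ker (ψ.flip u) := by
      rw [Submodule.span_le]
      rintro _ ⟨m, hm, rfl⟩
      simpa using hu m hm
    exact this hw
  -- kernel lemma
  have ker0 : ∀ (S : Set (Fin (2 * g + 1))) (w : V), w ∈ Submodule.span k (⇑b '' S) →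
      (∀ m ∈ S, ψ w (b (Fin.rev m)) = 0) → w = 0 := by
    have hbF : ∀ j : Fin (2 * g + 1), bn (j : ℕ) = b j := by
      intro j; rw [hbn _ j.isLt]
    have hrevval : ∀ j : Fin (2 * g + 1), ((Fin.rev j : Fin (2 * g + 1)) : ℕ) = 2 * g - (j : ℕ) :=
      fun j => by simp [Fin.val_rev]
    have hdF : ∀ j : Fin (2 * g + 1), ψ (b j) (b (Fin.rev j)) ≠ 0 := by
      intro j
      have := hd (j : ℕ) (by omega)
      rwa [hbF j, show bn (2 * g - (j : ℕ)) = b (Fin.rev j) by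
        rw [hbn _ (by omega : 2 * g - (j : ℕ) < 2 * g + 1)]
        congr 1
        apply Fin.ext
        simp [hrevval]] at this
    intro S w hw hcond
    by_contra hne
    have hsupp : ((b.repr w).support : Set (Fin (2 * g + 1))) ⊆ S := b.mem_span_image.mp hw
    have hne' : (b.repr w).support.Nonempty := by
      rw [Finsupp.support_nonempty_iff]
      exact fun h => hne (by simpa using b.repr.map_eq_zero_iff.mp h)
    set m₀ := (b.repr w).support.max' hne' with hm₀
    have hm₀S : m₀ ∈ S := hsupp ((b.repr w).support.max'_mem hne')
    have hexp : ψ w (b (Fin.rev m₀)) =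
        ∑ m : Fin (2 * g + 1), b.repr w m * ψ (b m) (b (Fin.rev m₀)) := by
      conv_lhs => rw [← b.sum_repr w]
      simp only [smul_eq_mul, map_sum, LinearMap.sum_apply, map_smul, LinearMap.smul_apply]
    rw [Finset.sum_eq_single m₀ (fun m _ hmne => by
        by_cases hms : m ∈ (b.repr w).support
        · have hlt : (m : ℕ) < (m₀ : ℕ) :=
            lt_of_le_of_ne (Finset.le_max' _ _ hms) (fun h => hmne (Fin.ext h))
          rw [hb m (Fin.rev m₀) (by rw [hrevval]; omega), mul_zero]
        · rw [Finsupp.notMem_support_iff.mp hms, zero_mul])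
      (fun h => absurd (Finset.mem_univ _) h)] at hexp
    rw [hcond m₀ hm₀S] at hexp
    have hr0 : b.repr w m₀ ≠ 0 := Finsupp.mem_support_iff.mp ((b.repr w).support.max'_mem hne')
    exact hdF m₀ (by
      rcases mul_eq_zero.mp hexp.symm with h | h
      · exact absurd h hr0
      · exact h)
  -- properties of the straightening recursion
  have Q : ∀ i : ℕ, 1 ≤ i → i ≤ g → ∀ t : ℕ, t ≤ 2 * i - 1 →
      (strq ψ bn g i t - bn (g + i) ∈
        Submodule.span k
          (⇑b '' {j : Fin (2 * g + 1) | g + i - t ≤ (j : ℕ) ∧ (j : ℕ) < g + i})) ∧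
      (∀ jn : ℕ, g - i + 1 ≤ jn → jn ≤ g - i + t → ψ (strq ψ bn g i t) (bn jn) = 0) := by
    intro i hi1 hi2 t
    induction t with
    | zero =>
      intro _
      refine ⟨by simp [strq], fun jn h1 h2 => absurd (h1.trans h2) (by omega)⟩
    | succ t ih =>
      intro ht
      obtain ⟨ihm, ihc⟩ := ih (by omega)
      have hd' : ψ (bn (g + i - 1 - t)) (bn (g - i + t + 1)) ≠ 0 := by
        have := hd (g + i - 1 - t) (by omega)
        rwa [show 2 * g - (g + i - 1 - t) = g - i + t + 1 by omega] at this
      constructor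
      · simp only [strq]
        have h1 : strq ψ bn g i t - bn (g + i) ∈ Submodule.span k
            (⇑b '' {j : Fin (2 * g + 1) | g + i - (t + 1) ≤ (j : ℕ) ∧ (j : ℕ) < g + i}) := by
          refine Submodule.span_mono (Set.image_mono ?_) ihm
          intro j hj
          obtain ⟨hj1, hj2⟩ := hj
          exact ⟨by omega, hj2⟩
        have h2 : bn (g + i - 1 - t) ∈
            (⇑b '' {j : Fin (2 * g + 1) | g + i - (t + 1) ≤ (j : ℕ) ∧ (j : ℕ) < g + i}) := by
          rw [hbn _ (by omega)]
          exact ⟨⟨g + i - 1 - t, by omega⟩, ⟨by simp only [Set.mem_setOf_eq]; omega, rfl⟩⟩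
        have h3 := Submodule.sub_mem _ h1
          (Submodule.smul_mem _ (ψ (strq ψ bn g i t) (bn (g - i + t + 1)) /
            ψ (bn (g + i - 1 - t)) (bn (g - i + t + 1))) (Submodule.subset_span h2))
        convert h3 using 1
        abel
      · intro jn h1 h2
        simp only [strq, map_sub, LinearMap.sub_apply, map_smul, LinearMap.smul_apply,
          smul_eq_mul]
        by_cases hj : jn = g - i + t + 1
        · subst hj
          rw [div_mul_cancel₀ _ hd', sub_self]
        · rw [ihc jn h1 (by omega), hlow (g + i - 1 - t) jn (by omega), mul_zero, sub_zero]
  -- the straightened vectors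
  set qv : ℕ → V := fun i => strq ψ bn g i (2 * i - 1) with hqv_def
  set pvec : ℕ → V := fun i =>
    qv i + (-(ψ (qv i) (qv i)) / (2 * ψ (bn (g + i)) (bn (g - i)))) • bn (g - i) with hpvec_def
  have hqm : ∀ i : ℕ, 1 ≤ i → i ≤ g → qv i - bn (g + i) ∈ Submodule.span k
      (⇑b '' {j : Fin (2 * g + 1) | g - i + 1 ≤ (j : ℕ) ∧ (j : ℕ) < g + i}) := by
    intro i hi1 hi2
    have := (Q i hi1 hi2 (2 * i - 1) le_rfl).1
    rwa [show g + i - (2 * i - 1) = g - i + 1 by omega] at this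
  have hqc : ∀ i : ℕ, 1 ≤ i → i ≤ g → ∀ jn : ℕ, g - i + 1 ≤ jn → jn ≤ g + i - 1 →
      ψ (qv i) (bn jn) = 0 := by
    intro i hi1 hi2 jn h1 h2
    exact (Q i hi1 hi2 (2 * i - 1) le_rfl).2 jn h1 (by omega)
  have hdgi : ∀ i : ℕ, 1 ≤ i → i ≤ g → ψ (bn (g + i)) (bn (g - i)) ≠ 0 := by
    intro i hi1 hi2
    have := hd (g + i) (by omega)
    rwa [show 2 * g - (g + i) = g - i by omega] at this
  have hqu : ∀ i : ℕ, 1 ≤ i → i ≤ g →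
      ψ (qv i) (bn (g - i)) = ψ (bn (g + i)) (bn (g - i)) := by
    intro i hi1 hi2
    have hz : ψ (qv i - bn (g + i)) (bn (g - i)) = 0 := by
      refine spanr _ _ ?_ _ (hqm i hi1 hi2)
      intro m hm
      obtain ⟨hm1, hm2⟩ := hm
      rw [← hbn _ m.isLt]
      exact hlow _ _ (by omega)
    rw [map_sub, LinearMap.sub_apply] at hz
    exact sub_eq_zero.mp hz
  have E2 : ∀ i : ℕ, 1 ≤ i → i ≤ g → ∀ jn : ℕ, g - i + 1 ≤ jn → jn ≤ g + i - 1 →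
      ψ (pvec i) (bn jn) = 0 := by
    intro i hi1 hi2 jn h1 h2
    show ψ (qv i + _ • bn (g - i)) (bn jn) = 0
    rw [map_add, LinearMap.add_apply, map_smul, LinearMap.smul_apply, smul_eq_mul,
      hqc i hi1 hi2 jn h1 h2, hlow (g - i) jn (by omega), mul_zero, add_zero]
  have E3 : ∀ i : ℕ, 1 ≤ i → i ≤ g → ψ (pvec i) (pvec i) = 0 := by
    intro i hi1 hi2
    have hd' := hdgi i hi1 hi2
    set c := -(ψ (qv i) (qv i)) / (2 * ψ (bn (g + i)) (bn (g - i))) with hc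
    show ψ (qv i + c • bn (g - i)) (qv i + c • bn (g - i)) = 0
    have huu : ψ (bn (g - i)) (bn (g - i)) = 0 := hlow _ _ (by omega)
    have huq : ψ (bn (g - i)) (qv i) = ψ (bn (g + i)) (bn (g - i)) := by
      rw [hsymm]; exact hqu i hi1 hi2
    have expand : ψ (qv i + c • bn (g - i)) (qv i + c • bn (g - i)) =
        ψ (qv i) (qv i) + c * ψ (qv i) (bn (g - i)) + c * ψ (bn (g - i)) (qv i) +
          c * (c * ψ (bn (g - i)) (bn (g - i))) := by
      simp only [map_add, map_smul, LinearMap.add_apply, LinearMap.smul_apply, smul_eq_mul]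
      ring
    rw [expand, huu, huq, hqu i hi1 hi2, mul_zero, mul_zero, add_zero, hc]
    have key : ∀ x d : k, d ≠ 0 → x + -x / (2 * d) * d + -x / (2 * d) * d = 0 := by
      intro x d hd0
      field_simp
      ring
    exact key _ _ hd'
  have E1 : ∀ i : ℕ, 1 ≤ i → i ≤ g → pvec i - bn (g + i) ∈ Submodule.span k
      (⇑b '' {j : Fin (2 * g + 1) | g - i ≤ (j : ℕ) ∧ (j : ℕ) < g + i}) := by
    intro i hi1 hi2
    have h1 : qv i - bn (g + i) ∈ Submodule.span k
        (⇑b '' {j : Fin (2 * g + 1) | g - i ≤ (j : ℕ) ∧ (j : ℕ) < g + i}) := by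
      refine Submodule.span_mono (Set.image_mono ?_) (hqm i hi1 hi2)
      intro j hj
      obtain ⟨hj1, hj2⟩ := hj
      exact ⟨by omega, hj2⟩
    have h2 : bn (g - i) ∈ (⇑b '' {j : Fin (2 * g + 1) | g - i ≤ (j : ℕ) ∧ (j : ℕ) < g + i}) := by
      rw [hbn _ (by omega)]
      exact ⟨⟨g - i, by omega⟩, ⟨by simp only [Set.mem_setOf_eq]; omega, rfl⟩⟩
    have h3 := Submodule.add_mem _ h1
      (Submodule.smul_mem _ (-(ψ (qv i) (qv i)) / (2 * ψ (bn (g + i)) (bn (g - i))))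
        (Submodule.subset_span h2))
    have he : pvec i - bn (g + i) = (qv i - bn (g + i)) +
        (-(ψ (qv i) (qv i)) / (2 * ψ (bn (g + i)) (bn (g - i)))) • bn (g - i) := by
      show (qv i + (-(ψ (qv i) (qv i)) / (2 * ψ (bn (g + i)) (bn (g - i)))) • bn (g - i)) -
        bn (g + i) = _
      abel
    rw [he]
    exact h3
  have Elow : ∀ i : ℕ, 1 ≤ i → i ≤ g → ∀ jn : ℕ, jn < g - i → ψ (pvec i) (bn jn) = 0 := by
    intro i hi1 hi2 jn hjn
    have hz : ψ (pvec i - bn (g + i)) (bn jn) = 0 := by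
      refine spanr _ _ ?_ _ (E1 i hi1 hi2)
      intro m hm
      rw [← hbn _ m.isLt]
      have hm1 := hm.1
      have hm2 := hm.2
      exact hlow _ _ (by omega)
    rw [map_sub, LinearMap.sub_apply, hlow (g + i) jn (by omega), sub_zero] at hz
    exact hz
  have Eψb : ∀ i : ℕ, 1 ≤ i → i ≤ g → ∀ jn : ℕ, jn ≤ g + i - 1 → jn ≠ g - i →
      ψ (pvec i) (bn jn) = 0 := by
    intro i hi1 hi2 jn h1 h2
    rcases lt_or_ge jn (g - i) with h | h
    · exact Elow i hi1 hi2 jn h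
    · exact E2 i hi1 hi2 jn (by omega) h1
  have Emem : ∀ i : ℕ, 1 ≤ i → i ≤ g → pvec i ∈ Submodule.span k
      (⇑b '' {j : Fin (2 * g + 1) | g - i ≤ (j : ℕ) ∧ (j : ℕ) ≤ g + i}) := by
    intro i hi1 hi2
    have h1 : pvec i - bn (g + i) ∈ Submodule.span k
        (⇑b '' {j : Fin (2 * g + 1) | g - i ≤ (j : ℕ) ∧ (j : ℕ) ≤ g + i}) := by
      refine Submodule.span_mono (Set.image_mono ?_) (E1 i hi1 hi2)
      intro j hj
      obtain ⟨hj1, hj2⟩ := hj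
      exact ⟨hj1, by omega⟩
    have h2 : bn (g + i) ∈ (⇑b '' {j : Fin (2 * g + 1) | g - i ≤ (j : ℕ) ∧ (j : ℕ) ≤ g + i}) := by
      rw [hbn _ (by omega)]
      exact ⟨⟨g + i, by omega⟩, ⟨by simp only [Set.mem_setOf_eq]; omega, rfl⟩⟩
    have h3 := Submodule.add_mem _ h1 (Submodule.subset_span h2)
    simpa using h3
  have Epu : ∀ i : ℕ, 1 ≤ i → i ≤ g →
      ψ (pvec i) (bn (g - i)) = ψ (bn (g + i)) (bn (g - i)) := by
    intro i hi1 hi2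
    show ψ (qv i + _ • bn (g - i)) (bn (g - i)) = _
    rw [map_add, LinearMap.add_apply, map_smul, LinearMap.smul_apply, smul_eq_mul,
      hqu i hi1 hi2, hlow (g - i) (g - i) (by omega), mul_zero, add_zero]
  -- pairing of two straightened vectors
  have hpp : ∀ ii jj : ℕ, 1 ≤ jj → jj < ii → ii ≤ g → ψ (pvec ii) (pvec jj) = 0 := by
    intro ii jj hjj1 hlt hii2
    refine spanl _ _ ?_ _ (Emem jj hjj1 (by omega))
    intro m hm
    obtain ⟨hm1, hm2⟩ := hm
    rw [← hbn _ m.isLt]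
    exact Eψb ii (by omega) hii2 m (by omega) (by omega)
  -- the candidate family
  set p : Fin (2 * g + 1) → V :=
    fun j => if (j : ℕ) ≤ g then b j else pvec ((j : ℕ) - g) with hp_def
  have hp_le : ∀ j : Fin (2 * g + 1), (j : ℕ) ≤ g → p j = b j := by
    intro j hj; simp only [hp_def, if_pos hj]
  have hp_gt : ∀ j : Fin (2 * g + 1), g < (j : ℕ) → p j = pvec ((j : ℕ) - g) := by
    intro j hj; simp only [hp_def, if_neg (Nat.not_le.mpr hj)]
  -- condition (3) for p
  have h3p : ∀ i j : Fin (2 * g + 1), (i : ℕ) + (j : ℕ) ≠ 2 * g → ψ (p i) (p j) = 0 := by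
    intro i j hij
    have hiN := i.isLt
    have hjN := j.isLt
    rcases le_or_gt (i : ℕ) g with hi | hi <;> rcases le_or_gt (j : ℕ) g with hj | hj
    · rw [hp_le i hi, hp_le j hj]
      exact hb i j (by omega)
    · rw [hp_le i hi, hp_gt j hj, hsymm]
      rw [← hbn _ i.isLt]
      exact Eψb ((j : ℕ) - g) (by omega) (by omega) (i : ℕ) (by omega) (by omega)
    · rw [hp_gt i hi, hp_le j hj]
      rw [← hbn _ j.isLt]
      exact Eψb ((i : ℕ) - g) (by omega) (by omega) (j : ℕ) (by omega) (by omega)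
    · rw [hp_gt i hi, hp_gt j hj]
      rcases lt_trichotomy ((i : ℕ) - g) ((j : ℕ) - g) with h | h | h
      · rw [hsymm]
        exact hpp _ _ (by omega) h (by omega)
      · rw [h]
        exact E3 _ (by omega) (by omega)
      · exact hpp _ _ (by omega) h (by omega)
  -- p spans
  have hspan : Submodule.span k (Set.range p) = ⊤ := by
    have hmem : ∀ n : ℕ, ∀ j : Fin (2 * g + 1), (j : ℕ) = n →
        b j ∈ Submodule.span k (Set.range p) := by
      intro n
      induction n using Nat.strong_induction_on with
      | _ n ihn =>
        intro j hj
        rcases le_or_gt (j : ℕ) g with h | h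
        · rw [← hp_le j h]
          exact Submodule.subset_span ⟨j, rfl⟩
        · have hjN := j.isLt
          have hii1 : 1 ≤ (j : ℕ) - g := by omega
          have hii2 : (j : ℕ) - g ≤ g := by omega
          have hmem1 : pvec ((j : ℕ) - g) - bn (g + ((j : ℕ) - g)) ∈
              Submodule.span k (Set.range p) := by
            refine Submodule.span_le.mpr ?_ (E1 _ hii1 hii2)
            rintro _ ⟨m, hm, rfl⟩
            obtain ⟨hm1, hm2⟩ := hm
            exact ihn (m : ℕ) (by omega) m rfl
          have hbj : bn (g + ((j : ℕ) - g)) = b j := by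
            rw [hbn _ (by omega)]
            congr 1
            apply Fin.ext
            simp only [Fin.val_mk]
            omega
          have hq := Submodule.sub_mem _
            (Submodule.subset_span ⟨j, rfl⟩ : p j ∈ Submodule.span k (Set.range p)) hmem1
          rw [hp_gt j h, sub_sub_cancel, hbj] at hq
          exact hq
    rw [eq_top_iff, ← b.span_eq]
    refine Submodule.span_le.mpr ?_
    rintro _ ⟨j, rfl⟩
    exact hmem (j : ℕ) j rfl
  haveI hfd : FiniteDimensional k V := Module.Finite.of_basis b
  have hcard : Fintype.card (Fin (2 * g + 1)) = Module.finrank k V :=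
    (Module.finrank_eq_card_basis b).symm
  have hli : LinearIndependent k p :=
    linearIndependent_of_top_le_span_of_card_eq_finrank (by rw [hspan]) hcard
  -- condition (2) for p
  have h2p : ∀ i : ℕ, ∀ _hi1 : 1 ≤ i, ∀ _hi2 : i ≤ g,
      p ⟨g + i, by omega⟩ - b ⟨g + i, by omega⟩ ∈
        Submodule.span k (⇑b '' {j : Fin (2 * g + 1) | g - i ≤ (j : ℕ) ∧ (j : ℕ) < g + i}) := by
    intro i hi1 hi2
    have hpv : p ⟨g + i, by omega⟩ = pvec i := by
      rw [hp_gt ⟨g + i, by omega⟩ (by simp only [Fin.val_mk]; omega)]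
      congr 1
      simp only [Fin.val_mk]
      omega
    have hbv : (b ⟨g + i, by omega⟩ : V) = bn (g + i) := (hbn _ (by omega)).symm
    rw [hpv, hbv]
    exact E1 i hi1 hi2
  refine ⟨p, ⟨⟨hli, hspan⟩, fun i hi => hp_le i hi, h2p, h3p⟩, ?_⟩
  -- uniqueness
  rintro p' ⟨⟨hli', hsp'⟩, h1', h2', h3'⟩
  funext j
  rcases le_or_gt (j : ℕ) g with hj | hj
  · rw [h1' j hj, hp_le j hj]
  · have hjN := j.isLt
    have hjj1 : 1 ≤ (j : ℕ) - g := by omega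
    have hjj2 : (j : ℕ) - g ≤ g := by omega
    set jj := (j : ℕ) - g with hjj
    set v := p' j with hv_def
    -- (a) middle pairings of v with b vanish
    have hA : ∀ n : ℕ, g - jj + 1 ≤ n → n ≤ g + jj - 1 → ψ v (bn n) = 0 := by
      intro n
      induction n using Nat.strong_induction_on with
      | _ n ihn =>
        intro hn1 hn2
        have hnN : n < 2 * g + 1 := by omega
        rcases le_or_gt n g with hng | hng
        · rw [hbn n hnN, ← h1' ⟨n, hnN⟩ (by simpa using hng)]
          refine h3' j ⟨n, hnN⟩ ?_
          show (j : ℕ) + n ≠ 2 * g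
          omega
        · have hii1 : 1 ≤ n - g := by omega
          have hii2 : n - g ≤ g := by omega
          have heq : bn n = p' ⟨n, hnN⟩ - (p' ⟨n, hnN⟩ - b ⟨n, hnN⟩) := by
            rw [hbn n hnN]; abel
          have hz1 : ψ v (p' ⟨n, hnN⟩) = 0 := by
            refine h3' j ⟨n, hnN⟩ ?_
            show (j : ℕ) + n ≠ 2 * g
            omega
          have hz2 : ψ v (p' ⟨n, hnN⟩ - b ⟨n, hnN⟩) = 0 := by
            have hmm := h2' (n - g) hii1 hii2
            have hfin : (⟨g + (n - g), by omega⟩ : Fin (2 * g + 1)) = ⟨n, hnN⟩ :=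
              Fin.ext (by simp only [Fin.val_mk]; omega)
            rw [hfin] at hmm
            refine spanl _ _ ?_ _ hmm
            intro m hm
            obtain ⟨hm1, hm2⟩ := hm
            rw [← hbn _ m.isLt]
            exact ihn (m : ℕ) (by omega) (by omega) (by omega)
          rw [heq, map_sub, hz1, hz2, sub_zero]
    -- (b) the difference with pvec jj
    set δ : V := v - pvec jj with hδ_def
    have hδmem : δ ∈ Submodule.span k
        (⇑b '' {m : Fin (2 * g + 1) | g - jj ≤ (m : ℕ) ∧ (m : ℕ) < g + jj}) := by
      have hmm := h2' jj hjj1 hjj2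
      have hfin : (⟨g + jj, by omega⟩ : Fin (2 * g + 1)) = j :=
        Fin.ext (by simp only [Fin.val_mk]; omega)
      rw [hfin] at hmm
      have hbj : (b j : V) = bn (g + jj) := by
        rw [hbn _ (by omega)]
        congr 1
        apply Fin.ext
        simp only [Fin.val_mk]
        omega
      rw [hbj] at hmm
      have := Submodule.sub_mem _ hmm (E1 jj hjj1 hjj2)
      have he : v - bn (g + jj) - (pvec jj - bn (g + jj)) = δ := by rw [hδ_def]; abel
      rwa [he] at this
    -- (c) middle pairings of δ with b vanish
    have hδc : ∀ n : ℕ, g - jj + 1 ≤ n → n ≤ g + jj - 1 → ψ δ (bn n) = 0 := by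
      intro n hn1 hn2
      rw [hδ_def, map_sub, LinearMap.sub_apply, hA n hn1 hn2,
        E2 jj hjj1 hjj2 n hn1 hn2, sub_zero]
    -- (d) peel off the coefficient at g - jj
    have hgjN : g - jj < 2 * g + 1 := by omega
    set lo : Fin (2 * g + 1) := ⟨g - jj, hgjN⟩ with hlo
    set c0 : k := b.repr δ lo with hc0
    set δ₂ : V := δ - c0 • b lo with hδ₂
    have hδ₂mem : δ₂ ∈ Submodule.span k
        (⇑b '' {m : Fin (2 * g + 1) | g - jj + 1 ≤ (m : ℕ) ∧ (m : ℕ) < g + jj}) := by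
      rw [b.mem_span_image]
      intro m hm
      rw [Finset.mem_coe, Finsupp.mem_support_iff] at hm
      rw [hδ₂, map_sub, map_smul, b.repr_self, Finsupp.sub_apply, Finsupp.smul_apply,
        Finsupp.single_apply, smul_eq_mul] at hm
      by_cases hml : m = lo
      · rw [hml] at hm
        simp [hc0] at hm
      · have hm' : b.repr δ m ≠ 0 := by
          rwa [if_neg (fun h => hml h.symm), mul_zero, sub_zero] at hm
        have hmS := b.mem_span_image.mp hδmem (Finsupp.mem_support_iff.mpr hm')
        obtain ⟨hm1, hm2⟩ := hmS
        have hne : (m : ℕ) ≠ g - jj := fun h => hml (Fin.ext (by simp [hlo, h]))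
        exact ⟨by omega, hm2⟩
    have hδ₂zero : δ₂ = 0 := by
      refine ker0 _ δ₂ hδ₂mem ?_
      intro m hm
      obtain ⟨hm1, hm2⟩ := hm
      have hmN := m.isLt
      have hrev : (b (Fin.rev m) : V) = bn (2 * g - (m : ℕ)) := by
        rw [hbn _ (by omega)]
        congr 1
        apply Fin.ext
        simp only [Fin.val_rev, Fin.val_mk]
        omega
      rw [hδ₂, map_sub, LinearMap.sub_apply, map_smul, LinearMap.smul_apply, smul_eq_mul,
        hrev, hδc (2 * g - (m : ℕ)) (by omega) (by omega)]
      have hlorev : ψ (b lo) (bn (2 * g - (m : ℕ))) = 0 := by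
        rw [show (b lo : V) = bn (g - jj) from (hbn _ hgjN).symm]
        exact hlow _ _ (by omega)
      rw [hlorev, mul_zero, sub_zero]
    have hδeq : δ = c0 • b lo := by
      have := hδ₂zero
      rw [hδ₂, sub_eq_zero] at this
      exact this
    -- (e) the coefficient vanishes
    have hvv : ψ v v = 0 := by
      refine h3' j j ?_
      omega
    have hveq : v = pvec jj + c0 • bn (g - jj) := by
      rw [show bn (g - jj) = b lo from hbn _ hgjN, ← hδeq, hδ_def]
      abel
    have hd' := hdgi jj hjj1 hjj2
    have huu : ψ (bn (g - jj)) (bn (g - jj)) = 0 := hlow _ _ (by omega)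
    have hupv : ψ (bn (g - jj)) (pvec jj) = ψ (bn (g + jj)) (bn (g - jj)) := by
      rw [hsymm]; exact Epu jj hjj1 hjj2
    have hexp : ψ v v = ψ (pvec jj) (pvec jj) + c0 * ψ (pvec jj) (bn (g - jj)) +
        c0 * ψ (bn (g - jj)) (pvec jj) + c0 * (c0 * ψ (bn (g - jj)) (bn (g - jj))) := by
      rw [hveq]
      simp only [map_add, map_smul, LinearMap.add_apply, LinearMap.smul_apply, smul_eq_mul]
      ring
    rw [hvv, E3 jj hjj1 hjj2, Epu jj hjj1 hjj2, hupv, huu, mul_zero, mul_zero,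
      add_zero, zero_add] at hexp
    have h2d : (2 : k) * (c0 * ψ (bn (g + jj)) (bn (g - jj))) = 0 := by
      rw [two_mul]; exact hexp.symm
    have hc00 : c0 = 0 := by
      rcases mul_eq_zero.mp h2d with h | h
      · exact absurd h h2
      · rcases mul_eq_zero.mp h with h' | h'
        · exact h'
        · exact absurd h' hd'
    rw [hp_gt j hj]
    rw [← hjj] at *
    have : δ = 0 := by rw [hδeq, hc00, zero_smul]
    rw [hδ_def, sub_eq_zero] at this
    exact this
end

section
/- Let R be a commutative ring in which 2 is invertible, g ≥ 1 an integer, and f(x) = x^{2g+1} + c₁x^{2g} + ⋯ + c_{2g+1} ∈ R[x] a monic polynomial. Let V = R[x]/(f(x)), let τ : V → R be the R-linear map sending a₀ + a₁x + ⋯ + a_{2g}x^{2g} to a_{2g}, and set ψ(a, b) = τ(ab). Define p_i = x^i for 0 ≤ i ≤ g, and p_{g+i} = x^{g+i} + c₁x^{g+i−1} + c₂x^{g+i−2} + ⋯ + c_{2i−1}x^{g−i+1} + (1/2)c_{2i}x^{g−i} for 1 ≤ i ≤ g. Then (p₀, …, p_{2g}) is an R-basis of V, and ψ(p_i, p_j)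 = 1 if i + j = 2g and ψ(p_i, p_j) = 0 otherwise. -/
/-- Let `R` be a commutative ring in which `2` is invertible, `g ≥ 1`, and
`f(x) = x^{2g+1} + c₁x^{2g} + ⋯ + c_{2g+1} ∈ R[x]` monic.  Let `V = R[x]/(f)`,
`τ : V → R` the coefficient of `x^{2g}`, and `ψ(a,b) = τ(ab)`.  Define `p_i = x^i` for
`0 ≤ i ≤ g` and `p_{g+i} = x^{g+i} + c₁x^{g+i−1} + ⋯ + c_{2i−1}x^{g−i+1} + (1/2)c_{2i}x^{g−i}`
for `1 ≤ i ≤ g`.  Then `(p₀, …, p_{2g})` is an `R`-basis of `V` and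
`ψ(p_i, p_j) = 1` if `i + j = 2g`, `ψ(p_i, p_j) = 0` otherwise. -/
theorem stmt_1
    (R : Type*) [CommRing R] [Invertible (2 : R)]
    (g : ℕ) (hg : 1 ≤ g)
    (c : ℕ → R)
    (f : Polynomial R)
    (hf : f = Polynomial.X ^ (2 * g + 1) +
      ∑ t ∈ Finset.Icc 1 (2 * g + 1), Polynomial.C (c t) * Polynomial.X ^ (2 * g + 1 - t))
    -- `τ` picks out the coefficient of `x^{2g}`:
    (τ : AdjoinRoot f →ₗ[R] R)
    (hτ : ∀ a : Fin (2 * g + 1) → R,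
      τ (∑ i : Fin (2 * g + 1), a i • AdjoinRoot.root f ^ (i : ℕ)) = a ⟨2 * g, by omega⟩)
    -- the family `p`:
    (p : Fin (2 * g + 1) → AdjoinRoot f)
    (hp1 : ∀ i : Fin (2 * g + 1), (i : ℕ) ≤ g → p i = AdjoinRoot.root f ^ (i : ℕ))
    (hp2 : ∀ i : Fin (2 * g + 1), g < (i : ℕ) →
      p i = AdjoinRoot.root f ^ (i : ℕ)
        + ∑ t ∈ Finset.Icc 1 (2 * ((i : ℕ) - g) - 1), c t • AdjoinRoot.root f ^ ((i : ℕ) - t)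
        + (⅟(2 : R) * c (2 * ((i : ℕ) - g))) • AdjoinRoot.root f ^ (2 * g - (i : ℕ))) :
    (LinearIndependent R p ∧ Submodule.span R (Set.range p) = ⊤) ∧
    ∀ i j : Fin (2 * g + 1),
      τ (p i * p j) = if (i : ℕ) + (j : ℕ) = 2 * g then 1 else 0 := by
  classical
  rcases subsingleton_or_nontrivial R with hR | hR
  · haveI : Subsingleton (AdjoinRoot f) := by
      constructor
      intro a b
      have h1 : (1:R) = 0 := Subsingleton.elim _ _
      calc a = (1:R) • a := (one_smul R a).symm
        _ = (0:R) • b := by rw [h1, zero_smul, zero_smul]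
        _ = b := by rw [h1.symm, one_smul]
    refine ⟨⟨?_, ?_⟩, ?_⟩
    · exact Fintype.linearIndependent_iff.2 fun l _ i => Subsingleton.elim _ _
    · rw [eq_top_iff]
      intro v _
      rw [Subsingleton.elim v 0]
      exact Submodule.zero_mem _
    · intro i j
      exact Subsingleton.elim _ _
  -- Notation
  set x : AdjoinRoot f := AdjoinRoot.root f with hxdef
  set s : ℕ → R := fun k => τ (x ^ k) with hsdef
  have hs : ∀ k, s k = τ (x ^ k) := fun _ => rfl
  -- degree facts
  have hqdeg : (∑ t ∈ Finset.Icc 1 (2 * g + 1),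
      Polynomial.C (c t) * Polynomial.X ^ (2 * g + 1 - t)).degree < ((2 * g + 1 : ℕ) : WithBot ℕ) := by
    apply lt_of_le_of_lt (Polynomial.degree_sum_le _ _)
    rw [Finset.sup_lt_iff (by exact_mod_cast WithBot.bot_lt_coe _)]
    intro t ht
    rw [Finset.mem_Icc] at ht
    refine lt_of_le_of_lt (Polynomial.degree_C_mul_X_pow_le _ _) ?_
    exact_mod_cast Nat.sub_lt (by omega) (by omega)
  have hmonic : f.Monic := by
    rw [hf]; exact Polynomial.monic_X_pow_add hqdeg
  have hdeg : f.natDegree = 2 * g + 1 := by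
    apply Polynomial.natDegree_eq_of_degree_eq_some
    rw [hf, Polynomial.degree_add_eq_left_of_degree_lt, Polynomial.degree_X_pow]
    rw [Polynomial.degree_X_pow]; exact hqdeg
  -- values of s at low exponents
  have hS0 : ∀ k ≤ 2 * g, s k = if k = 2 * g then 1 else 0 := by
    intro k hk
    have hk' : k < 2 * g + 1 := by omega
    have hone : (∑ i : Fin (2 * g + 1), (if (i : ℕ) = k then (1:R) else 0) • x ^ (i : ℕ)) = x ^ k := by
      rw [Finset.sum_eq_single (⟨k, hk'⟩ : Fin (2 * g + 1))]
      · simp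
      · intro j _ hj
        have : (j : ℕ) ≠ k := fun h => hj (Fin.ext h)
        simp [this]
      · simp
    have h2 := hτ (fun i => if (i : ℕ) = k then (1:R) else 0)
    rw [hone] at h2
    rw [hs, h2]
    by_cases h : k = 2 * g <;> simp [h] <;> omega
  -- the fundamental relation
  have hroot : x ^ (2 * g + 1)
      = -∑ t ∈ Finset.Icc 1 (2 * g + 1), c t • x ^ (2 * g + 1 - t) := by
    have h0 : AdjoinRoot.mk f (Polynomial.X ^ (2 * g + 1) +
        ∑ t ∈ Finset.Icc 1 (2 * g + 1), Polynomial.C (c t) * Polynomial.X ^ (2 * g + 1 - t)) = 0 := by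
      rw [← hf]; exact AdjoinRoot.mk_self
    simp only [map_add, map_sum, map_mul, map_pow, AdjoinRoot.mk_X, AdjoinRoot.mk_C] at h0
    rw [eq_comm, neg_eq_iff_add_eq_zero, add_comm, ← h0]
    congr 1
    apply Finset.sum_congr rfl
    intro t _
    rw [Algebra.smul_def]
    congr 1
  have hSrec : ∀ k, s (2 * g + 1 + k)
      = -∑ t ∈ Finset.Icc 1 (2 * g + 1), c t * s (2 * g + 1 + k - t) := by
    intro k
    have hmul : x ^ (2 * g + 1 + k)
        = -∑ t ∈ Finset.Icc 1 (2 * g + 1), c t • x ^ (2 * g + 1 + k - t) := by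
      rw [pow_add, hroot, neg_mul, Finset.sum_mul]
      congr 1
      apply Finset.sum_congr rfl
      intro t ht
      rw [Finset.mem_Icc] at ht
      rw [smul_mul_assoc, ← pow_add]
      congr 2
      omega
    rw [hs, hmul, map_neg, map_sum]
    congr 1
    apply Finset.sum_congr rfl
    intro t _
    rw [map_smul, smul_eq_mul, hs]
  -- expansion of s at high exponents
  have hS1 : ∀ m, 2 * g < m → m ≤ 4 * g + 1 →
      s m = -(c (m - 2 * g)) - ∑ t ∈ Finset.Icc 1 (m - 2 * g - 1), c t * s (m - t) := by
    intro m h1 h2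
    obtain ⟨k, rfl⟩ : ∃ k, m = 2 * g + 1 + k := ⟨m - 2 * g - 1, by omega⟩
    rw [hSrec k]
    simp only [show 2 * g + 1 + k - 2 * g = k + 1 from by omega,
      show k + 1 - 1 = k from by omega]
    have hsplit : ∑ t ∈ Finset.Icc 1 (2 * g + 1), c t * s (2 * g + 1 + k - t)
        = (∑ t ∈ Finset.Icc 1 k, c t * s (2 * g + 1 + k - t)) + c (k + 1) := by
      rw [(by exact Finset.Icc_add_one_left_eq_Ioc 0 _ : Finset.Icc 1 (2 * g + 1) = Finset.Ioc 0 (2 * g + 1)), ← Finset.sum_Ioc_consecutive _ (Nat.zero_le (k + 1)) (by omega : k + 1 ≤ 2 * g + 1)]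
      have hz : ∑ t ∈ Finset.Ioc (k + 1) (2 * g + 1), c t * s (2 * g + 1 + k - t) = 0 := by
        apply Finset.sum_eq_zero
        intro t ht
        rw [Finset.mem_Ioc] at ht
        rw [hS0 (2 * g + 1 + k - t) (by omega), if_neg (by omega), mul_zero]
      rw [hz, add_zero, Finset.sum_Ioc_succ_top (Nat.zero_le k)]
      rw [show 2 * g + 1 + k - (k + 1) = 2 * g by omega, hS0 (2 * g) le_rfl, if_pos rfl, mul_one]
      rw [(by exact Finset.Icc_add_one_left_eq_Ioc 0 _ : Finset.Icc 1 k = Finset.Ioc 0 k)]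
    rw [hsplit]
    ring
  -- the key cancellation lemma
  have hW : ∀ b m, 1 ≤ b → b ≤ g → 2 * b ≤ m → m ≤ 2 * g + 2 * b - 1 →
      s m + (∑ t ∈ Finset.Icc 1 (2 * b - 1), c t * s (m - t)) + ⅟(2:R) * c (2 * b) * s (m - 2 * b)
        = if m = 2 * g then 1 else 0 := by
    intro b m hb1 hbg h2b hm
    by_cases hm2g : m ≤ 2 * g
    · have hz1 : ∑ t ∈ Finset.Icc 1 (2 * b - 1), c t * s (m - t) = 0 := by
        apply Finset.sum_eq_zero
        intro t ht
        rw [Finset.mem_Icc] at ht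
        rw [hS0 (m - t) (by omega), if_neg (by omega), mul_zero]
      rw [hz1, hS0 (m - 2 * b) (by omega), if_neg (by omega), mul_zero, add_zero, add_zero,
        hS0 m hm2g]
    · push_neg at hm2g
      obtain ⟨k, rfl⟩ : ∃ k, m = 2 * g + (k + 1) := ⟨m - 2 * g - 1, by omega⟩
      have hk : k + 1 ≤ 2 * b - 1 := by omega
      rw [hS1 (2 * g + (k + 1)) (by omega) (by omega)]
      simp only [show 2 * g + (k + 1) - 2 * g = k + 1 from by omega,
        show k + 1 - 1 = k from by omega]
      have hsplit : ∑ t ∈ Finset.Icc 1 (2 * b - 1), c t * s (2 * g + (k + 1) - t)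
          = (∑ t ∈ Finset.Icc 1 k, c t * s (2 * g + (k + 1) - t)) + c (k + 1) := by
        rw [(by exact Finset.Icc_add_one_left_eq_Ioc 0 _ : Finset.Icc 1 (2 * b - 1) = Finset.Ioc 0 (2 * b - 1)), ← Finset.sum_Ioc_consecutive _ (Nat.zero_le (k + 1)) hk]
        have hz : ∑ t ∈ Finset.Ioc (k + 1) (2 * b - 1), c t * s (2 * g + (k + 1) - t) = 0 := by
          apply Finset.sum_eq_zero
          intro t ht
          rw [Finset.mem_Ioc] at ht
          rw [hS0 (2 * g + (k + 1) - t) (by omega), if_neg (by omega), mul_zero]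
        rw [hz, add_zero, Finset.sum_Ioc_succ_top (Nat.zero_le k)]
        rw [show 2 * g + (k + 1) - (k + 1) = 2 * g by omega, hS0 (2 * g) le_rfl, if_pos rfl,
          mul_one, (by exact Finset.Icc_add_one_left_eq_Ioc 0 _ : Finset.Icc 1 k = Finset.Ioc 0 k)]
      rw [hsplit, hS0 (2 * g + (k + 1) - 2 * b) (by omega), if_neg (by omega), if_neg (by omega)]
      ring
  -- the boundary value
  have hW2 : ∀ b, 1 ≤ b → b ≤ g →
      s (2 * g + 2 * b) + (∑ t ∈ Finset.Icc 1 (2 * b - 1), c t * s (2 * g + 2 * b - t))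
        + ⅟(2:R) * c (2 * b) * s (2 * g + 2 * b - 2 * b)
        = -(⅟(2:R) * c (2 * b)) := by
    intro b hb1 hbg
    rw [hS1 (2 * g + 2 * b) (by omega) (by omega)]
    simp only [show 2 * g + 2 * b - 2 * g = 2 * b from by omega,
      show 2 * g + 2 * b - 2 * b = 2 * g from by omega]
    rw [hS0 (2 * g) le_rfl, if_pos rfl, mul_one]
    have h2 : ⅟(2:R) * 2 = 1 := invOf_mul_self 2
    linear_combination (c (2 * b)) * h2
  -- τ of x^k * p j for j in the upper range
  have hT : ∀ (j : Fin (2 * g + 1)) (k : ℕ), g < (j : ℕ) → k ≤ 2 * g →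
      τ (x ^ k * p j) = s (k + (j : ℕ))
        + (∑ t ∈ Finset.Icc 1 (2 * ((j : ℕ) - g) - 1), c t * s (k + (j : ℕ) - t))
        + ⅟(2:R) * c (2 * ((j : ℕ) - g)) * s (k + (j : ℕ) - 2 * ((j : ℕ) - g)) := by
    intro j k hj hk
    have hj2 : (j : ℕ) < 2 * g + 1 := j.isLt
    rw [hp2 j hj]
    rw [mul_add, mul_add, Finset.mul_sum]
    rw [map_add, map_add, map_sum]
    congr 1
    · congr 1
      · rw [← pow_add, hs]
      · apply Finset.sum_congr rfl
        intro t ht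
        rw [Finset.mem_Icc] at ht
        rw [mul_smul_comm, ← pow_add, map_smul, smul_eq_mul, hs]
        congr 3
        omega
    · rw [mul_smul_comm, ← pow_add, map_smul, smul_eq_mul, hs]
      congr 3
      omega
  -- the symmetric-ordered key computation
  have hkey : ∀ i j : Fin (2 * g + 1), (i : ℕ) ≤ (j : ℕ) →
      τ (p i * p j) = if (i : ℕ) + (j : ℕ) = 2 * g then 1 else 0 := by
    intro i j hij
    have hi2 : (i : ℕ) < 2 * g + 1 := i.isLt
    have hj2 : (j : ℕ) < 2 * g + 1 := j.isLt
    by_cases hj : (j : ℕ) ≤ g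
    · rw [hp1 i (le_trans hij hj), hp1 j hj, ← pow_add, ← hs,
        hS0 ((i : ℕ) + (j : ℕ)) (by omega)]
    · push_neg at hj
      by_cases hi : (i : ℕ) ≤ g
      · rw [hp1 i hi, hT j (i : ℕ) hj (by omega)]
        exact hW ((j : ℕ) - g) ((i : ℕ) + (j : ℕ)) (by omega) (by omega) (by omega) (by omega)
      · push_neg at hi
        rw [hp2 i hi]
        rw [add_mul, add_mul, Finset.sum_mul, map_add, map_add, map_sum]
        have hmid : ∑ t ∈ Finset.Icc 1 (2 * ((i : ℕ) - g) - 1),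
            τ ((c t • x ^ ((i : ℕ) - t)) * p j) = 0 := by
          apply Finset.sum_eq_zero
          intro t ht
          rw [Finset.mem_Icc] at ht
          rw [smul_mul_assoc, map_smul, smul_eq_mul,
            hT j ((i : ℕ) - t) hj (by omega)]
          rw [show (i : ℕ) - t + (j : ℕ) - 2 * ((j : ℕ) - g)
              = (i : ℕ) - t + (j : ℕ) - 2 * ((j : ℕ) - g) from rfl]
          rw [hW ((j : ℕ) - g) ((i : ℕ) - t + (j : ℕ)) (by omega) (by omega) (by omega) (by omega),
            if_neg (by omega), mul_zero]
        rw [hmid, add_zero]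
        by_cases hieqj : (i : ℕ) = (j : ℕ)
        · rw [hT j (i : ℕ) hj (by omega)]
          rw [smul_mul_assoc, map_smul, smul_eq_mul, hT j (2 * g - (i : ℕ)) hj (by omega)]
          rw [show (i : ℕ) + (j : ℕ) = 2 * g + 2 * ((j : ℕ) - g) by omega]
          have e1 : ∀ t, 2 * g + 2 * ((j : ℕ) - g) - t = 2 * g + 2 * ((j : ℕ) - g) - t := fun _ => rfl
          rw [hW2 ((j : ℕ) - g) (by omega) (by omega)]
          rw [show 2 * g - (i : ℕ) + (j : ℕ) = 2 * g by omega]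
          rw [show 2 * g - 2 * ((j : ℕ) - g) = 2 * g - 2 * ((j : ℕ) - g) from rfl]
          have hlast : s (2 * g) + (∑ t ∈ Finset.Icc 1 (2 * ((j : ℕ) - g) - 1),
              c t * s (2 * g - t)) + ⅟(2:R) * c (2 * ((j : ℕ) - g)) * s (2 * g - 2 * ((j : ℕ) - g))
              = 1 := by
            have := hW ((j : ℕ) - g) (2 * g) (by omega) (by omega) (by omega) (by omega)
            rw [if_pos rfl] at this
            exact this
          rw [hieqj, hlast, if_neg (by omega)]
          ring
        · have hilt : (i : ℕ) < (j : ℕ) := by omega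
          have hh1 : τ (x ^ (i : ℕ) * p j) = 0 := by
            rw [hT j (i : ℕ) hj (by omega),
              hW ((j : ℕ) - g) ((i : ℕ) + (j : ℕ)) (by omega) (by omega) (by omega) (by omega),
              if_neg (show ¬((i : ℕ) + (j : ℕ) = 2 * g) from by omega)]
          have hh2 : τ (x ^ (2 * g - (i : ℕ)) * p j) = 0 := by
            rw [hT j (2 * g - (i : ℕ)) hj (by omega),
              hW ((j : ℕ) - g) (2 * g - (i : ℕ) + (j : ℕ)) (by omega) (by omega) (by omega)
                (by omega),
              if_neg (show ¬(2 * g - (i : ℕ) + (j : ℕ) = 2 * g) from by omega)]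
          rw [smul_mul_assoc, map_smul, smul_eq_mul, hh1, hh2, mul_zero, add_zero,
            if_neg (show ¬((i : ℕ) + (j : ℕ) = 2 * g) from by omega)]
  -- the full bilinear computation
  have hψ : ∀ i j : Fin (2 * g + 1),
      τ (p i * p j) = if (i : ℕ) + (j : ℕ) = 2 * g then 1 else 0 := by
    intro i j
    rcases le_total (i : ℕ) (j : ℕ) with h | h
    · exact hkey i j h
    · rw [mul_comm, hkey j i h, Nat.add_comm (j : ℕ) (i : ℕ)]
  -- linear independence
  have hLI : LinearIndependent R p := by
    apply Fintype.linearIndependent_iff.2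
    intro l hl j
    have hj2 : (j : ℕ) < 2 * g + 1 := j.isLt
    set j' : Fin (2 * g + 1) := ⟨2 * g - (j : ℕ), by omega⟩ with hj'def
    have h0 : τ ((∑ i, l i • p i) * p j') = 0 := by
      rw [hl, zero_mul, map_zero]
    rw [Finset.sum_mul] at h0
    rw [map_sum] at h0
    have hterm : ∀ i : Fin (2 * g + 1), τ ((l i • p i) * p j')
        = if i = j then l i else 0 := by
      intro i
      rw [smul_mul_assoc, map_smul, smul_eq_mul, hψ i j']
      have hcond : ((i : ℕ) + (j' : ℕ) = 2 * g) ↔ i = j := by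
        rw [hj'def]
        simp only []
        constructor
        · intro h
          apply Fin.ext
          omega
        · intro h
          rw [h]
          omega
      by_cases h : i = j
      · rw [if_pos (hcond.2 h), if_pos h, mul_one]
      · rw [if_neg (fun hc => h (hcond.1 hc)), if_neg h, mul_zero]
    rw [Finset.sum_congr rfl (fun i _ => hterm i)] at h0
    simp only [Finset.sum_ite_eq', Finset.mem_univ, if_true] at h0
    exact h0
  -- span
  have hspan0 : ∀ k : ℕ, k ≤ 2 * g → x ^ k ∈ Submodule.span R (Set.range p) := by
    intro k
    induction k using Nat.strong_induction_on with
    | _ k ih =>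
      intro hk
      by_cases hkg : k ≤ g
      · have hpk : p ⟨k, by omega⟩ = x ^ k := hp1 ⟨k, by omega⟩ hkg
        rw [← hpk]
        exact Submodule.subset_span ⟨_, rfl⟩
      · push_neg at hkg
        have h2 := hp2 ⟨k, by omega⟩ hkg
        simp only [] at h2
        have hxk : x ^ k = p ⟨k, by omega⟩
            - (∑ t ∈ Finset.Icc 1 (2 * (k - g) - 1), c t • x ^ (k - t))
            - (⅟(2:R) * c (2 * (k - g))) • x ^ (2 * g - k) := by
          rw [h2]
          abel
        rw [hxk]
        apply Submodule.sub_mem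
        apply Submodule.sub_mem
        · exact Submodule.subset_span ⟨_, rfl⟩
        · apply Submodule.sum_mem
          intro t ht
          rw [Finset.mem_Icc] at ht
          exact Submodule.smul_mem _ _ (ih (k - t) (by omega) (by omega))
        · exact Submodule.smul_mem _ _ (ih (2 * g - k) (by omega) (by omega))
  have hspan : Submodule.span R (Set.range p) = ⊤ := by
    rw [eq_top_iff]
    refine le_trans (le_of_eq (AdjoinRoot.powerBasis' hmonic).basis.span_eq.symm)
      (Submodule.span_le.2 ?_)
    rintro v ⟨i, rfl⟩
    rw [(AdjoinRoot.powerBasis' hmonic).basis_eq_pow, AdjoinRoot.powerBasis'_gen]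
    refine hspan0 (i : ℕ) ?_
    have hi := i.isLt
    have hdim : (AdjoinRoot.powerBasis' hmonic).dim = 2 * g + 1 := by
      rw [AdjoinRoot.powerBasis'_dim, hdeg]
    omega
  exact ⟨⟨hLI, hspan⟩, hψ⟩
end

section
/- Let I = {i₁ < ⋯ < i_r} and J = {j₁ < ⋯ < j_s} be subsets of {g+1, …, 2g}. Then β(p_I, p_J) = 0 if J ≠ I^c (the complement of I in {g+1, …, 2g}), and if J = I^c then β(p_I, p_J) = (−1)^{s(s+1)/2}·ε(σ), where σ is the permutation of {g+1, …, 2g} sending i_r, …, i₁ to 2g, …, 2g+1−r and sending j_s, …, j₁ to 2g−r, …, g+1, respectively, and ε(σ) is its sign. -/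
/-- The descending wedge monomial `p_I = p_{i_r} ∧ ⋯ ∧ p_{i_1}` (for `I = {i₁ < ⋯ < i_r}`) in
the model `⋀* (Fin g → k)` of the spin representation `S = ⋀*E`, where the standard basis
vector `e_j` corresponds to the basis vector `p_{g+1+j}` of `E` (so subsets of
`{g+1, …, 2g}` are recorded as finsets of `Fin g` via the shift `i ↦ i − (g+1)`). -/
noncomputable def eMon (k : Type*) [Field k] (g : ℕ) (J : Finset (Fin g)) :
    ExteriorAlgebra k (Fin g → k) :=
  ((J.sort (· ≤ ·)).reverse.map fun j => ExteriorAlgebra.ι k (Pi.single j (1 : k))).prod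

private lemma prodIota (k : Type*) [Field k] {g : ℕ} (l : List (Fin g)) :
    (l.map fun j => ExteriorAlgebra.ι k (Pi.single j (1 : k))).prod
      = ExteriorAlgebra.ιMulti k l.length (fun i => Pi.single l[(i : ℕ)] (1 : k)) := by
  rw [ExteriorAlgebra.ιMulti_apply,
    ← List.ofFn_getElem_eq_map l (fun j => ExteriorAlgebra.ι k (Pi.single j (1 : k)))]

private lemma prodIota' (k : Type*) [Field k] {g : ℕ} (l : List (Fin g)) (h : l.length = g) :
    (l.map fun j => ExteriorAlgebra.ι k (Pi.single j (1 : k))).prod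
      = ExteriorAlgebra.ιMulti k g
        (fun i : Fin g => Pi.single l[((Fin.cast h.symm i) : ℕ)] (1 : k)) := by
  rw [ExteriorAlgebra.ιMulti_apply]
  congr 1
  apply List.ext_getElem
  · simp [h]
  · intro i h1 h2
    simp

private lemma starEMon (k : Type*) [Field k] {g : ℕ} (J : Finset (Fin g)) :
    CliffordAlgebra.involute
        (CliffordAlgebra.reverse (Q := (0 : QuadraticForm k (Fin g → k))) (eMon k g J))
      = (-1 : k) ^ J.card •
        ((J.sort (· ≤ ·)).map fun j => ExteriorAlgebra.ι k (Pi.single j (1 : k))).prod := by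
  have h1 : ∀ l : List (Fin g),
      (l.map fun j => ExteriorAlgebra.ι k (Pi.single j (1 : k))).prod
        = ((l.map fun j => (Pi.single j (1 : k) : Fin g → k)).map
            ⇑(CliffordAlgebra.ι (0 : QuadraticForm k (Fin g → k)))).prod := by
    intro l; rw [List.map_map]; rfl
  rw [eMon, h1, CliffordAlgebra.reverse_prod_map_ι, ← List.map_reverse, ← List.map_reverse,
    List.reverse_reverse, CliffordAlgebra.involute_prod_map_ι, h1 (J.sort (· ≤ ·))]
  simp

private def blockRev (n m : ℕ) (hm : m ≤ n) : Equiv.Perm (Fin n) :=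
  Function.Involutive.toPerm
    (fun x => if h : x.val < m then ⟨m - 1 - x.val, by omega⟩ else x)
    (by
      intro x
      dsimp only
      by_cases h : x.val < m
      · rw [dif_pos h, dif_pos (by dsimp only; omega)]
        ext
        dsimp only
        omega
      · rw [dif_neg h, dif_neg h])

private lemma blockRev_apply (n m : ℕ) (hm : m ≤ n) (x : Fin n) :
    blockRev n m hm x = if h : x.val < m then ⟨m - 1 - x.val, by omega⟩ else x := rfl

private lemma blockRev_val_of_lt (n m : ℕ) (hm : m ≤ n) (x : Fin n) (h : x.val < m) :
    ((blockRev n m hm x : Fin n) : ℕ) = m - 1 - x.val := by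
  rw [blockRev_apply, dif_pos h]

private lemma blockRev_val_of_ge (n m : ℕ) (hm : m ≤ n) (x : Fin n) (h : ¬ x.val < m) :
    ((blockRev n m hm x : Fin n) : ℕ) = x.val := by
  rw [blockRev_apply, dif_neg h]

private lemma sign_blockRev (n : ℕ) : ∀ (m : ℕ) (hm : m ≤ n),
    Equiv.Perm.sign (blockRev n m hm) = (-1) ^ (m * (m - 1) / 2)
  | 0, hm => by
    have h1 : blockRev n 0 hm = 1 := by
      ext x
      simp [blockRev_apply]
    rw [h1, map_one]
    norm_num
  | m + 1, hm => by
    obtain ⟨n', rfl⟩ : ∃ n', n = n' + 1 := ⟨n - 1, by omega⟩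
    have hm' : m ≤ n' + 1 := by omega
    have key : blockRev (n' + 1) (m + 1) hm
        = Fin.cycleRange ⟨m, hm⟩ * blockRev (n' + 1) m hm' := by
      ext x
      rw [Equiv.Perm.mul_apply]
      rcases lt_trichotomy x.val m with h | h | h
      · rw [blockRev_apply, dif_pos (by omega), blockRev_apply, dif_pos h,
          Fin.cycleRange_of_lt (by rw [Fin.lt_def]; dsimp; omega)]
        rw [Fin.val_add_one_of_lt (by rw [Fin.lt_def]; simp [Fin.last]; omega)]
        dsimp
        omega
      · have hx : Fin.cycleRange ⟨m, hm⟩ (blockRev (n' + 1) m hm' x) = 0 := by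
          have hx2 : blockRev (n' + 1) m hm' x = ⟨m, hm⟩ := by
            rw [blockRev_apply, dif_neg (by omega)]
            ext; exact h
          rw [hx2, Fin.cycleRange_self]
        rw [hx, blockRev_apply, dif_pos (by omega)]
        simp
        omega
      · rw [blockRev_apply, dif_neg (by omega), blockRev_apply, dif_neg (by omega),
          Fin.cycleRange_of_gt (by rw [Fin.lt_def]; dsimp; omega)]
    rw [key, map_mul, Fin.sign_cycleRange, sign_blockRev (n' + 1) m hm', ← pow_add]
    congr 1
    dsimp
    have h2 : (m + 1) * m = 2 * m + m * (m - 1) := by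
      cases m with
      | zero => rfl
      | succ t => simp only [Nat.succ_sub_one]; ring
    rw [h2, Nat.mul_add_div (by norm_num)]

attribute [irreducible] blockRev

private lemma unitsSmul (k : Type*) [Field k] {M : Type*} [AddCommGroup M] [Module k M]
    (u : ℤˣ) (x : M) : u • x = ((u : ℤ) : k) • x := by
  rw [Units.smul_def, Int.cast_smul_eq_zsmul]

private lemma ιMulti_basis_ne_zero (k : Type*) [Field k] (g : ℕ) :
    ExteriorAlgebra.ιMulti k g (fun i : Fin g => (Pi.single i 1 : Fin g → k)) ≠ 0 := by
  classical
  intro h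
  let F : ∀ i, (Fin g → k) [⋀^Fin i]→ₗ[k] k :=
    fun i => if hi : i = g then hi.symm ▸ ((Pi.basisFun k (Fin g)).det) else 0
  have h1 := congrArg (ExteriorAlgebra.liftAlternating F) h
  rw [ExteriorAlgebra.liftAlternating_apply_ιMulti, map_zero] at h1
  have h2 : F g = (Pi.basisFun k (Fin g)).det := by
    simp only [F, dif_pos rfl]
  rw [h2] at h1
  have h3 : (fun i : Fin g => (Pi.single i 1 : Fin g → k)) = ⇑(Pi.basisFun k (Fin g)) := by
    funext i
    rw [Pi.basisFun_apply]
  rw [h3, Module.Basis.det_self] at h1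
  exact (one_ne_zero : (1 : k) ≠ 0) h1

private lemma natHalf (s : ℕ) : s + s * (s - 1) / 2 = s * (s + 1) / 2 := by
  have h2 : s * (s + 1) = 2 * s + s * (s - 1) := by
    cases s with
    | zero => rfl
    | succ t => simp only [Nat.succ_sub_one]; ring
  rw [h2, Nat.mul_add_div (by norm_num)]

private lemma castUnit_mul_self (k : Type*) [Field k] (u : ℤˣ) :
    ((u : ℤ) : k) * ((u : ℤ) : k) = 1 := by
  rcases Int.units_eq_one_or u with h | h <;> simp [h]

set_option maxHeartbeats 2000000 in
/-- For `I = {i₁ < ⋯ < i_r}` and `J = {j₁ < ⋯ < j_s}` subsets of `{g+1, …, 2g}`, one has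
`β(p_I, p_J) = 0` if `J ≠ Iᶜ`, and if `J = Iᶜ` then `β(p_I, p_J) = (−1)^{s(s+1)/2}·ε(σ)`,
where `σ` is the permutation of `{g+1, …, 2g}` sending `i_r, …, i₁` to `2g, …, 2g+1−r` and
`j_s, …, j₁` to `2g−r, …, g+1` respectively.  (Here everything is written in the shifted
indexing `{g+1, …, 2g} ≃ Fin g`, `i ↦ i − (g+1)`, under which `σ` sends the `t`-th smallest
element of `I` to `g − r + t` and the `t`-th smallest element of `J` to `t`, `0`-indexed.) -/
theorem stmt_3
    (k : Type*) [Field k] (h2 : (2 : k) ≠ 0)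
    (g : ℕ) (hg : 1 ≤ g)
    -- the bilinear form `β` on `S`: `β ω ω'` is the coefficient of `p_{2g} ∧ ⋯ ∧ p_{g+1}`
    -- in `ω ∧ (ω')*`, where `(ω')* = involute (reverse ω')`:
    (β : ExteriorAlgebra k (Fin g → k) →ₗ[k] ExteriorAlgebra k (Fin g → k) →ₗ[k] k)
    (hβ : ∀ s s' : ExteriorAlgebra k (Fin g → k),
      GradedAlgebra.proj (fun i : ℕ => ⋀[k]^i (Fin g → k)) g
          (s * CliffordAlgebra.involute (CliffordAlgebra.reverse s')) =
        β s s' • eMon k g Finset.univ)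
    (I J : Finset (Fin g)) :
    (J ≠ Iᶜ → β (eMon k g I) (eMon k g J) = 0) ∧
    (J = Iᶜ → ∀ σ : Equiv.Perm (Fin g),
      (∀ t : Fin I.card, σ ↑(I.orderIsoOfFin rfl t) =
        ⟨g - I.card + (t : ℕ), by
          have h := Finset.card_le_univ I
          rw [Fintype.card_fin] at h
          have := t.isLt
          omega⟩) →
      (∀ t : Fin J.card, σ ↑(J.orderIsoOfFin rfl t) =
        ⟨(t : ℕ), by
          have h := Finset.card_le_univ J
          rw [Fintype.card_fin] at h
          have := t.isLt
          omega⟩) →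
      β (eMon k g I) (eMon k g J) =
        (-1 : k) ^ (J.card * (J.card + 1) / 2) * ((Equiv.Perm.sign σ : ℤ) : k)) := by
  classical
  have hIcard : I.card ≤ g := by
    have h := Finset.card_le_univ I
    rwa [Fintype.card_fin] at h
  -- split the product
  have hsplit : eMon k g I *
      CliffordAlgebra.involute
        (CliffordAlgebra.reverse (Q := (0 : QuadraticForm k (Fin g → k))) (eMon k g J))
      = (-1 : k) ^ J.card •
        ((((I.sort (· ≤ ·)).reverse ++ J.sort (· ≤ ·)).map
          fun j => ExteriorAlgebra.ι k (Pi.single j (1 : k))).prod) := by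
    rw [starEMon, mul_smul_comm, List.map_append, List.prod_append, eMon]
  -- eMon univ as ιMulti
  have hUlen : (((Finset.univ : Finset (Fin g)).sort (· ≤ ·)).reverse).length = g := by
    simp
  have hUeq : eMon k g Finset.univ
      = ExteriorAlgebra.ιMulti k g (fun i : Fin g => Pi.single (Fin.rev i) (1 : k)) := by
    rw [eMon, prodIota' k _ hUlen]
    congr 1
    funext i
    have hi := i.isLt
    rw [List.getElem_reverse]
    refine congrArg (fun x : Fin g => (Pi.single x (1 : k) : Fin g → k)) (Fin.ext ?_)
    simp only [Fin.sort_univ, List.getElem_finRange, List.length_finRange, Fin.coe_cast,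
      Fin.val_rev]
    omega
  have hXne := ιMulti_basis_ne_zero k g
  have hUeq2 : eMon k g Finset.univ
      = ((Equiv.Perm.sign (Fin.revPerm : Equiv.Perm (Fin g)) : ℤ) : k)
        • ExteriorAlgebra.ιMulti k g (fun i : Fin g => (Pi.single i 1 : Fin g → k)) := by
    have hmp := AlternatingMap.map_perm
      (g := (ExteriorAlgebra.ιMulti k g :
        (Fin g → k) [⋀^Fin g]→ₗ[k] ExteriorAlgebra k (Fin g → k)))
      (fun i : Fin g => (Pi.single i 1 : Fin g → k)) Fin.revPerm
    rw [hUeq, ← unitsSmul k, ← hmp]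
    congr 1
  have hcastne : ∀ u : ℤˣ, ((u : ℤ) : k) ≠ 0 := by
    intro u
    rcases Int.units_eq_one_or u with h | h <;> simp [h]
  have hUnz : eMon k g Finset.univ ≠ 0 := by
    rw [hUeq2]
    exact smul_ne_zero (hcastne _) hXne
  have hmem : ∀ (n : ℕ) (v : Fin n → (Fin g → k)),
      ExteriorAlgebra.ιMulti k n v ∈ (fun i : ℕ => ⋀[k]^i (Fin g → k)) n :=
    fun n v => ExteriorAlgebra.ιMulti_range k n (Set.mem_range_self v)
  constructor
  · intro hne
    have h0 : β (eMon k g I) (eMon k g J) • eMon k g Finset.univ = 0 := by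
      rw [← hβ, hsplit, map_smul]
      by_cases hd : ∃ x, x ∈ I ∧ x ∈ J
      · obtain ⟨x, hxI, hxJ⟩ := hd
        have hx1 : x ∈ (I.sort (· ≤ ·)).reverse := by
          rw [List.mem_reverse, Finset.mem_sort]; exact hxI
        have hx2 : x ∈ J.sort (· ≤ ·) := by
          rw [Finset.mem_sort]; exact hxJ
        obtain ⟨n1, hn1, he1⟩ := List.getElem_of_mem hx1
        obtain ⟨n2, hn2, he2⟩ := List.getElem_of_mem hx2
        have hzero : ((((I.sort (· ≤ ·)).reverse ++ J.sort (· ≤ ·)).map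
            fun j => ExteriorAlgebra.ι k (Pi.single j (1 : k))).prod) = 0 := by
          rw [prodIota k]
          refine AlternatingMap.map_eq_zero_of_eq _ _
            (i := ⟨n1, by simp only [List.length_append]; omega⟩)
            (j := ⟨(I.sort (· ≤ ·)).reverse.length + n2, by simp only [List.length_append]; omega⟩)
            ?_ ?_
          · dsimp only
            rw [List.getElem_append_left hn1, List.getElem_append_right (by omega)]
            simp only [Nat.add_sub_cancel_left]
            rw [he1, he2]
          · intro hcon
            rw [Fin.ext_iff] at hcon
            simp only at hcon
            omega
        rw [hzero, map_zero, smul_zero]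
      · have hne2 : ((I.sort (· ≤ ·)).reverse ++ J.sort (· ≤ ·)).length ≠ g := by
          simp only [List.length_append, List.length_reverse, Finset.length_sort]
          intro hcon
          apply hne
          have hdisj : Disjoint I J :=
            Finset.disjoint_left.mpr fun a haI haJ => hd ⟨a, haI, haJ⟩
          have huniv : I ∪ J = Finset.univ := by
            apply Finset.eq_univ_of_card
            rw [Finset.card_union_of_disjoint hdisj, Fintype.card_fin]
            exact hcon
          ext a
          rw [Finset.mem_compl]
          constructor
          · intro haJ haI
            exact Finset.disjoint_left.mp hdisj haI haJ
          · intro haI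
            rcases Finset.mem_union.mp (huniv ▸ Finset.mem_univ a) with h | h
            · exact absurd h haI
            · exact h
        rw [prodIota k, GradedAlgebra.proj_apply,
          DirectSum.decompose_of_mem_ne (fun i : ℕ => ⋀[k]^i (Fin g → k))
            (hmem _ _) hne2, smul_zero]
    rcases smul_eq_zero.mp h0 with h | h
    · exact h
    · exact absurd h hUnz
  · intro hJc σ hσI hσJ
    subst hJc
    have hclen : (Iᶜ : Finset (Fin g)).card = g - I.card := by
      rw [Finset.card_compl, Fintype.card_fin]
    have hsle : (Iᶜ : Finset (Fin g)).card ≤ g := by omega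
    have hlen : ((I.sort (· ≤ ·)).reverse ++ (Iᶜ : Finset (Fin g)).sort (· ≤ ·)).length = g := by
      simp only [List.length_append, List.length_reverse, Finset.length_sort]
      omega
    have hnd : ((I.sort (· ≤ ·)).reverse ++ (Iᶜ : Finset (Fin g)).sort (· ≤ ·)).Nodup := by
      rw [List.nodup_append]
      refine ⟨List.nodup_reverse.mpr (Finset.sort_nodup _ _), Finset.sort_nodup _ _, ?_⟩
      intro a ha1 b ha2
      rw [List.mem_reverse, Finset.mem_sort] at ha1
      rw [Finset.mem_sort, Finset.mem_compl] at ha2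
      rintro rfl
      exact ha2 ha1
    have hinj : Function.Injective (fun t : Fin g =>
        ((I.sort (· ≤ ·)).reverse ++ (Iᶜ : Finset (Fin g)).sort (· ≤ ·)).get
          (Fin.cast hlen.symm t)) := by
      intro a b hab
      have h := List.nodup_iff_injective_get.mp hnd hab
      exact Fin.ext (congrArg Fin.val h :)
    set pL : Equiv.Perm (Fin g) :=
      Equiv.ofBijective _ (Finite.injective_iff_bijective.mp hinj) with hpL
    have hσI' : ∀ u : Fin I.card,
        ((σ ↑(I.orderIsoOfFin rfl u) : Fin g) : ℕ) = g - I.card + (u : ℕ) := fun u => by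
      rw [hσI u]
    have hσJ' : ∀ u : Fin (Iᶜ : Finset (Fin g)).card,
        ((σ ↑((Iᶜ : Finset (Fin g)).orderIsoOfFin rfl u) : Fin g) : ℕ) = (u : ℕ) := fun u => by
      rw [hσJ u]
    have hkey : ∀ t : Fin g,
        σ (((I.sort (· ≤ ·)).reverse ++ (Iᶜ : Finset (Fin g)).sort (· ≤ ·)).get
            (Fin.cast hlen.symm t))
          = blockRev g (Iᶜ : Finset (Fin g)).card hsle (Fin.rev t) := by
      intro t
      have hti := t.isLt
      rw [List.get_eq_getElem]
      by_cases ht : (t : ℕ) < I.card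
      · have hgl : ((I.sort (· ≤ ·)).reverse ++
            (Iᶜ : Finset (Fin g)).sort (· ≤ ·))[((Fin.cast hlen.symm t) : ℕ)]
            = ↑(I.orderIsoOfFin rfl ⟨I.card - 1 - (t : ℕ), by omega⟩) := by
          rw [Finset.coe_orderIsoOfFin_apply, Finset.orderEmbOfFin_apply]
          rw [List.getElem_append_left
            (by simp only [List.length_reverse, Finset.length_sort, Fin.coe_cast]; omega)]
          rw [List.getElem_reverse]
          congr 1
          simp only [Finset.length_sort, Fin.coe_cast]
        have h5 : ((σ (((I.sort (· ≤ ·)).reverse ++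
            (Iᶜ : Finset (Fin g)).sort (· ≤ ·))[((Fin.cast hlen.symm t) : ℕ)]) : Fin g) : ℕ)
            = g - I.card + (I.card - 1 - (t : ℕ)) := by
          rw [hgl, hσI' ⟨I.card - 1 - (t : ℕ), by omega⟩]
        have h6 := blockRev_val_of_ge g (Iᶜ : Finset (Fin g)).card hsle (Fin.rev t)
          (by rw [Fin.val_rev]; omega)
        have h7 : ((Fin.rev t : Fin g) : ℕ) = g - ((t : ℕ) + 1) := Fin.val_rev t
        refine Fin.ext ?_
        rw [h5, h6, h7]
        omega
      · have hgl : ((I.sort (· ≤ ·)).reverse ++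
            (Iᶜ : Finset (Fin g)).sort (· ≤ ·))[((Fin.cast hlen.symm t) : ℕ)]
            = ↑((Iᶜ : Finset (Fin g)).orderIsoOfFin rfl ⟨(t : ℕ) - I.card, by omega⟩) := by
          rw [Finset.coe_orderIsoOfFin_apply, Finset.orderEmbOfFin_apply]
          rw [List.getElem_append_right
            (by simp only [List.length_reverse, Finset.length_sort, Fin.coe_cast]; omega)]
          congr 1
          simp only [List.length_reverse, Finset.length_sort, Fin.coe_cast]
        have h5 : ((σ (((I.sort (· ≤ ·)).reverse ++
            (Iᶜ : Finset (Fin g)).sort (· ≤ ·))[((Fin.cast hlen.symm t) : ℕ)]) : Fin g) : ℕ)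
            = (t : ℕ) - I.card := by
          rw [hgl, hσJ' ⟨(t : ℕ) - I.card, by omega⟩]
        have h6 := blockRev_val_of_lt g (Iᶜ : Finset (Fin g)).card hsle (Fin.rev t)
          (by rw [Fin.val_rev]; omega)
        have h7 : ((Fin.rev t : Fin g) : ℕ) = g - ((t : ℕ) + 1) := Fin.val_rev t
        refine Fin.ext ?_
        rw [h5, h6, h7]
        omega
    have hcomp : σ * pL = blockRev g (Iᶜ : Finset (Fin g)).card hsle * Fin.revPerm :=
      Equiv.ext fun t => hkey t
    have hprodL : ((((I.sort (· ≤ ·)).reverse ++ (Iᶜ : Finset (Fin g)).sort (· ≤ ·)).map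
          fun j => ExteriorAlgebra.ι k (Pi.single j (1 : k))).prod)
        = ((Equiv.Perm.sign pL : ℤ) : k)
          • ExteriorAlgebra.ιMulti k g (fun i : Fin g => (Pi.single i 1 : Fin g → k)) := by
      rw [prodIota' k _ hlen, ← unitsSmul k]
      have hmp := AlternatingMap.map_perm
        (g := (ExteriorAlgebra.ιMulti k g :
          (Fin g → k) [⋀^Fin g]→ₗ[k] ExteriorAlgebra k (Fin g → k)))
        (fun i : Fin g => (Pi.single i 1 : Fin g → k)) pL
      rw [← hmp]
      rfl
    have heq := hβ (eMon k g I) (eMon k g Iᶜ)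
    rw [hsplit, map_smul, hprodL, map_smul, GradedAlgebra.proj_apply,
      DirectSum.decompose_of_mem_same (fun i : ℕ => ⋀[k]^i (Fin g → k)) (hmem _ _),
      hUeq2, smul_smul, smul_smul] at heq
    have hfin := smul_left_injective k hXne heq
    -- sign computation
    have hsg := congrArg Equiv.Perm.sign hcomp
    rw [map_mul, map_mul] at hsg
    have hσσ : Equiv.Perm.sign σ * Equiv.Perm.sign σ = 1 := Int.units_mul_self _
    have hrr : Equiv.Perm.sign (Fin.revPerm : Equiv.Perm (Fin g)) *
        Equiv.Perm.sign (Fin.revPerm : Equiv.Perm (Fin g)) = 1 := Int.units_mul_self _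
    have h1 : Equiv.Perm.sign pL = Equiv.Perm.sign σ *
        (Equiv.Perm.sign (blockRev g (Iᶜ : Finset (Fin g)).card hsle) *
          Equiv.Perm.sign (Fin.revPerm : Equiv.Perm (Fin g))) := by
      calc Equiv.Perm.sign pL
          = (Equiv.Perm.sign σ * Equiv.Perm.sign σ) * Equiv.Perm.sign pL := by
            rw [hσσ, one_mul]
        _ = Equiv.Perm.sign σ * (Equiv.Perm.sign σ * Equiv.Perm.sign pL) := by
            rw [mul_assoc]
        _ = _ := by rw [hsg]
    have h2 : Equiv.Perm.sign pL * Equiv.Perm.sign (Fin.revPerm : Equiv.Perm (Fin g))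
        = Equiv.Perm.sign σ * Equiv.Perm.sign (blockRev g (Iᶜ : Finset (Fin g)).card hsle) := by
      rw [h1, mul_assoc, mul_assoc, hrr, mul_one]
    have hcast : ((Equiv.Perm.sign pL : ℤ) : k) *
        ((Equiv.Perm.sign (Fin.revPerm : Equiv.Perm (Fin g)) : ℤ) : k)
        = ((Equiv.Perm.sign σ : ℤ) : k) *
          (-1 : k) ^ ((Iᶜ : Finset (Fin g)).card * ((Iᶜ : Finset (Fin g)).card - 1) / 2) := by
      rw [← Int.cast_mul, ← Units.val_mul, h2, Units.val_mul, Int.cast_mul]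
      congr 1
      rw [sign_blockRev]
      push_cast
      ring
    have hbeta : β (eMon k g I) (eMon k g Iᶜ)
        = ((-1 : k) ^ (Iᶜ : Finset (Fin g)).card * ((Equiv.Perm.sign pL : ℤ) : k))
          * ((Equiv.Perm.sign (Fin.revPerm : Equiv.Perm (Fin g)) : ℤ) : k) := by
      have h3 := congrArg
        (fun z => z * ((Equiv.Perm.sign (Fin.revPerm : Equiv.Perm (Fin g)) : ℤ) : k)) hfin
      have h4 : β (eMon k g I) (eMon k g Iᶜ) *
          ((Equiv.Perm.sign (Fin.revPerm : Equiv.Perm (Fin g)) : ℤ) : k) *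
          ((Equiv.Perm.sign (Fin.revPerm : Equiv.Perm (Fin g)) : ℤ) : k)
          = β (eMon k g I) (eMon k g Iᶜ) := by
        rw [mul_assoc, castUnit_mul_self, mul_one]
      rw [h4] at h3
      exact h3.symm
    have hpow : (-1 : k) ^ (Iᶜ : Finset (Fin g)).card *
        (-1 : k) ^ ((Iᶜ : Finset (Fin g)).card * ((Iᶜ : Finset (Fin g)).card - 1) / 2)
        = (-1 : k) ^ ((Iᶜ : Finset (Fin g)).card * ((Iᶜ : Finset (Fin g)).card + 1) / 2) := by
      rw [← pow_add, natHalf]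
    rw [hbeta, mul_assoc, hcast, ← hpow]
    ring
end

section
/- For every x ∈ Γ, every y ∈ C(V), and every 0 ≤ r ≤ 2g+1, writing θ_r(y) for the component of θ(y) in ⋀^rV, one has θ_r(σ(x)·y·x^{−1}) = (det ρ(x))^{r−1}·(⋀^r ρ(x))(θ_r(y)). Equivalently, θ : C(V) → ⋀*V is an isomorphism of Γ-modules, where Γ acts on C(V) by y ↦ σ(x)yx^{−1} and on ⋀^rV by (det ρ(x))^{r−1}·⋀^r ρ(x). -/
open CliffordAlgebra

namespace Stmt5Aux

variable {k : Type*} [Field k] {V : Type*} [AddCommGroup V] [Module k V]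
variable {ψ : LinearMap.BilinForm k V} {Q : QuadraticForm k V}

theorem hB_aux (hQ : ∀ v : V, Q v = ψ v v) :
    LinearMap.BilinMap.toQuadraticMap (-ψ) = (0 : QuadraticForm k V) - Q := by
  ext v
  simp [LinearMap.BilinMap.toQuadraticMap_apply, hQ v]

theorem theta_eq_changeForm
    (Θ' : CliffordAlgebra Q →ₐ[k] Module.End k (ExteriorAlgebra k V))
    (hΘ' : ∀ (v : V) (ω : ExteriorAlgebra k V),
      Θ' (ι Q v) ω = ExteriorAlgebra.ι k v * ω + contractLeft (ψ v) ω)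
    (hQ : ∀ v : V, Q v = ψ v v) (y : CliffordAlgebra Q) :
    Θ' y 1 = changeForm (hB_aux hQ) y := by
  induction y using CliffordAlgebra.left_induction with
  | algebraMap r =>
      rw [changeForm_algebraMap, AlgHom.commutes, Module.algebraMap_end_apply,
        Algebra.algebraMap_eq_smul_one]
  | add a b ha hb => rw [map_add, map_add, LinearMap.add_apply, ha, hb]
  | ι_mul m y hy =>
      rw [map_mul, Module.End.mul_apply, hΘ', hy, changeForm_ι_mul]
      simp [sub_eq_add_neg]

theorem ortho_aux (hQ : ∀ v : V, Q v = ψ v v) (hsymm : ∀ v w : V, ψ v w = ψ w v)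
    {a b : V} (h : ψ a b = 0) : Q.IsOrtho a b := by
  have hba : ψ b a = 0 := (hsymm b a).trans h
  show Q (a + b) = Q a + Q b
  simp only [hQ, map_add, LinearMap.add_apply, h, hba]
  ring

theorem swap_prod (hQ : ∀ v : V, Q v = ψ v v) (hsymm : ∀ v w : V, ψ v w = ψ w v)
    (v : V) (l : List V) (h : ∀ a ∈ l, ψ v a = 0) :
    ι Q v * (l.map (ι Q)).prod = ((-1 : k) ^ l.length) • ((l.map (ι Q)).prod * ι Q v) := by
  induction l with
  | nil => simp
  | cons a l ih =>
      have ha : ψ v a = 0 := h a (List.mem_cons_self)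
      have hia : ι Q v * ι Q a = -(ι Q a * ι Q v) :=
        ι_mul_ι_comm_of_isOrtho (ortho_aux hQ hsymm ha)
      simp only [List.map_cons, List.prod_cons, List.length_cons]
      rw [← mul_assoc, hia, neg_mul, mul_assoc,
        ih (fun b hb => h b (List.mem_cons_of_mem _ hb)), mul_smul_comm, pow_succ,
        mul_neg_one, neg_smul, mul_assoc]

theorem swap_prod' (hQ : ∀ v : V, Q v = ψ v v) (hsymm : ∀ v w : V, ψ v w = ψ w v)
    (v : V) (l : List V) (h : ∀ a ∈ l, ψ v a = 0) :
    (l.map (ι Q)).prod * ι Q v = ((-1 : k) ^ l.length) • (ι Q v * (l.map (ι Q)).prod) := by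
  have hs : ((-1 : k) ^ l.length) * ((-1 : k) ^ l.length) = 1 := by
    rw [← pow_add]
    exact Even.neg_one_pow ⟨l.length, rfl⟩
  rw [swap_prod hQ hsymm v l h, smul_smul, hs, one_smul]

theorem prod_sq (hQ : ∀ v : V, Q v = ψ v v) (hsymm : ∀ v w : V, ψ v w = ψ w v)
    (l : List V) (hl : l.Pairwise fun a b => ψ a b = 0) (hQl : ∀ a ∈ l, Q a ≠ 0) :
    ∃ c : k, c ≠ 0 ∧ (l.map (ι Q)).prod * (l.map (ι Q)).prod = algebraMap k _ c := by
  induction l with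
  | nil => exact ⟨1, one_ne_zero, by simp⟩
  | cons a l ih =>
      obtain ⟨horth, hl'⟩ := List.pairwise_cons.mp hl
      obtain ⟨c, hc0, hc⟩ := ih hl' (fun b hb => hQl b (List.mem_cons_of_mem _ hb))
      refine ⟨(-1 : k) ^ l.length * (Q a * c),
        mul_ne_zero (pow_ne_zero _ (neg_ne_zero.mpr one_ne_zero))
          (mul_ne_zero (hQl a (List.mem_cons_self)) hc0), ?_⟩
      simp only [List.map_cons, List.prod_cons]
      rw [mul_assoc, ← mul_assoc ((l.map (ι Q)).prod) (ι Q a) ((l.map (ι Q)).prod),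
        swap_prod' hQ hsymm a l horth, smul_mul_assoc, mul_smul_comm,
        ← mul_assoc, ← mul_assoc, mul_assoc (ι Q a * ι Q a), ι_sq_scalar, hc, ← map_mul,
        Algebra.smul_def, ← map_mul]

theorem commute_mem_prod (hQ : ∀ v : V, Q v = ψ v v) (hsymm : ∀ v w : V, ψ v w = ψ w v)
    (l : List V) (hl : l.Pairwise fun a b => ψ a b = 0) (hlen : ¬ Even l.length)
    {v : V} (hv : v ∈ l) :
    ι Q v * (l.map (ι Q)).prod = (l.map (ι Q)).prod * ι Q v := by
  obtain ⟨l1, l2, rfl⟩ := List.append_of_mem hv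
  rw [List.pairwise_append] at hl
  obtain ⟨h1, h2, h12⟩ := hl
  obtain ⟨hvl2, -⟩ := List.pairwise_cons.mp h2
  have hvl1 : ∀ a ∈ l1, ψ v a = 0 := fun a ha =>
    (hsymm v a).trans (h12 a ha v (List.mem_cons_self))
  have hpar : (-1 : k) ^ l1.length = (-1 : k) ^ l2.length := by
    have : Even (l1.length + l2.length) := by
      have := hlen
      simp only [List.length_append, List.length_cons] at this
      rw [Nat.even_iff] at this ⊢
      omega
    obtain ⟨m, hm⟩ := this
    have h1 : ((-1 : k) ^ l1.length) * ((-1 : k) ^ l2.length) = 1 := by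
      rw [← pow_add, hm, ← two_mul]
      exact Even.neg_one_pow ⟨m, by ring⟩
    have h2 : ((-1 : k) ^ l2.length) * ((-1 : k) ^ l2.length) = 1 := by
      rw [← pow_add]
      exact Even.neg_one_pow ⟨l2.length, rfl⟩
    calc (-1 : k) ^ l1.length = (-1 : k) ^ l1.length * (((-1 : k) ^ l2.length) * ((-1 : k) ^ l2.length)) := by rw [h2, mul_one]
      _ = ((-1 : k) ^ l1.length * ((-1 : k) ^ l2.length)) * ((-1 : k) ^ l2.length) := by ring
      _ = (-1 : k) ^ l2.length := by rw [h1, one_mul]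
  simp only [List.map_append, List.prod_append, List.map_cons, List.prod_cons]
  rw [← mul_assoc, swap_prod hQ hsymm v l1 hvl1, smul_mul_assoc, mul_assoc, ← mul_assoc (ι Q v),
    ι_sq_scalar, hpar]
  conv_rhs => rw [mul_assoc, mul_assoc (ι Q v), swap_prod' hQ hsymm v l2 hvl2, mul_smul_comm,
    ← mul_assoc (ι Q v) (ι Q v), ι_sq_scalar, mul_smul_comm]

theorem contract_orth (v : V) (l : List V) (h : ∀ a ∈ l, ψ v a = 0) :
    contractLeft (Q := (0 : QuadraticForm k V)) (ψ v)
      ((l.map (ExteriorAlgebra.ι k)).prod) = 0 := by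
  induction l with
  | nil => simpa using contractLeft_one (Q := (0 : QuadraticForm k V)) (ψ v)
  | cons a l ih =>
      simp only [List.map_cons, List.prod_cons]
      rw [contractLeft_ι_mul, h a (List.mem_cons_self),
        ih (fun b hb => h b (List.mem_cons_of_mem _ hb))]
      simp

theorem theta_prod (hsymm : ∀ v w : V, ψ v w = ψ w v)
    (Θ' : CliffordAlgebra Q →ₐ[k] Module.End k (ExteriorAlgebra k V))
    (hΘ' : ∀ (v : V) (ω : ExteriorAlgebra k V),
      Θ' (ι Q v) ω = ExteriorAlgebra.ι k v * ω + contractLeft (ψ v) ω)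
    (l : List V) (hl : l.Pairwise fun a b => ψ a b = 0) :
    Θ' ((l.map (ι Q)).prod) 1 = (l.map (ExteriorAlgebra.ι k)).prod := by
  induction l with
  | nil => simp
  | cons a l ih =>
      obtain ⟨horth, hl'⟩ := List.pairwise_cons.mp hl
      simp only [List.map_cons, List.prod_cons]
      rw [map_mul, Module.End.mul_apply, ih hl', hΘ', contract_orth a l horth, add_zero]

theorem alt_det {n : ℕ} (e : Module.Basis (Fin n) k V) {N : Type*} [AddCommGroup N] [Module k N]
    (g : V [⋀^Fin n]→ₗ[k] N) (w : Fin n → V) : g w = e.det w • g e := by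
  have key : g = (LinearMap.toSpanSingleton k N (g e)).compAlternatingMap e.det := by
    refine Module.Basis.ext_alternating e fun i hi => ?_
    let σ : Equiv.Perm (Fin n) := Equiv.ofBijective i (Finite.injective_iff_bijective.1 hi)
    have : (fun j => e (i j)) = (⇑e ∘ σ) := rfl
    rw [this, AlternatingMap.map_perm, LinearMap.compAlternatingMap_apply,
      AlternatingMap.map_perm, Module.Basis.det_self, LinearMap.map_smul_of_tower,
      LinearMap.toSpanSingleton_apply_one]
  conv_lhs => rw [key]
  rw [LinearMap.compAlternatingMap_apply, LinearMap.toSpanSingleton_apply]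

theorem map_contract (f : V →ₗ[k] V) (hf : ∀ a b : V, ψ (f a) (f b) = ψ a b) (v : V)
    (ω : ExteriorAlgebra k V) :
    ExteriorAlgebra.map f (contractLeft (Q := (0 : QuadraticForm k V)) (ψ v) ω) =
      contractLeft (Q := (0 : QuadraticForm k V)) (ψ (f v)) (ExteriorAlgebra.map f ω) := by
  induction ω using CliffordAlgebra.left_induction with
  | algebraMap r =>
      rw [contractLeft_algebraMap, map_zero, AlgHom.commutes, contractLeft_algebraMap]
  | add a b ha hb => simp only [map_add, ha, hb]
  | ι_mul a b ih =>
      rw [contractLeft_ι_mul, map_sub, map_smul, map_mul, ExteriorAlgebra.map_apply_ι,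
        map_mul, ExteriorAlgebra.map_apply_ι, contractLeft_ι_mul, ih, hf v]

theorem map_mem_exteriorPower (f : V →ₗ[k] V) {i : ℕ} {ω : ExteriorAlgebra k V}
    (hω : ω ∈ ⋀[k]^i V) : ExteriorAlgebra.map f ω ∈ ⋀[k]^i V := by
  have h1 : Submodule.map (ExteriorAlgebra.map f).toLinearMap
      (LinearMap.range (ExteriorAlgebra.ι k : V →ₗ[k] ExteriorAlgebra k V)) ≤
      LinearMap.range (ExteriorAlgebra.ι k : V →ₗ[k] ExteriorAlgebra k V) := by
    rintro _ ⟨_, ⟨m, rfl⟩, rfl⟩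
    exact ⟨f m, (ExteriorAlgebra.map_apply_ι _ _).symm⟩
  have h2 : ∀ j : ℕ, (Submodule.map (ExteriorAlgebra.map f).toLinearMap
      (LinearMap.range (ExteriorAlgebra.ι k : V →ₗ[k] ExteriorAlgebra k V))) ^ j ≤
      LinearMap.range (ExteriorAlgebra.ι k : V →ₗ[k] ExteriorAlgebra k V) ^ j := by
    intro j
    induction j with
    | zero => rw [pow_zero, pow_zero]
    | succ n ih =>
        rw [pow_succ, pow_succ (LinearMap.range (ExteriorAlgebra.ι k : V →ₗ[k] ExteriorAlgebra k V))]
        exact mul_le_mul' ih h1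
  refine h2 i ?_
  rw [← Submodule.map_pow]
  exact Submodule.mem_map_of_mem hω

theorem proj_map (f : V →ₗ[k] V) (r : ℕ) (ω : ExteriorAlgebra k V) :
    GradedAlgebra.proj (fun i : ℕ => ⋀[k]^i V) r (ExteriorAlgebra.map f ω) =
      ExteriorAlgebra.map f (GradedAlgebra.proj (fun i : ℕ => ⋀[k]^i V) r ω) := by
  induction ω using DirectSum.Decomposition.inductionOn (fun i : ℕ => ⋀[k]^i V) with
  | zero => simp
  | add a b ha hb => simp only [map_add, ha, hb]
  | homogeneous hx =>
      rename_i i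
      obtain ⟨x, hxm⟩ := hx
      rw [GradedAlgebra.proj_apply, GradedAlgebra.proj_apply]
      by_cases h : i = r
      · subst h
        rw [DirectSum.decompose_of_mem_same (fun i : ℕ => ⋀[k]^i V) hxm,
          DirectSum.decompose_of_mem_same (fun i : ℕ => ⋀[k]^i V) (map_mem_exteriorPower f hxm)]
      · rw [DirectSum.decompose_of_mem_ne (fun i : ℕ => ⋀[k]^i V) hxm h,
          DirectSum.decompose_of_mem_ne (fun i : ℕ => ⋀[k]^i V) (map_mem_exteriorPower f hxm) h,
          map_zero]

theorem map_smul_apply (c : k) (f : V →ₗ[k] V) {r : ℕ} {ω : ExteriorAlgebra k V}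
    (hω : ω ∈ ⋀[k]^r V) :
    ExteriorAlgebra.map (c • f) ω = c ^ r • ExteriorAlgebra.map f ω := by
  induction hω using Submodule.pow_induction_on_left' with
  | algebraMap r => rw [AlgHom.commutes, AlgHom.commutes, pow_zero, one_smul]
  | add x y i hx hy ihx ihy => rw [map_add, map_add, ihx, ihy, smul_add]
  | mem_mul m hm i x hx ih =>
      obtain ⟨w, rfl⟩ := hm
      rw [map_mul, map_mul, ih, ExteriorAlgebra.map_apply_ι, ExteriorAlgebra.map_apply_ι,
        LinearMap.smul_apply, map_smul, smul_mul_assoc, mul_smul_comm, smul_smul, pow_succ]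
      ring_nf

theorem det_sq_one (hnd : ψ.Nondegenerate) [FiniteDimensional k V] (f : V →ₗ[k] V)
    (hf : ∀ a b : V, ψ (f a) (f b) = ψ a b) :
    LinearMap.det f * LinearMap.det f = 1 := by
  classical
  let b := Module.finBasis k V
  have hcomp : ψ.comp f f = ψ := by
    ext v w
    simpa [LinearMap.BilinForm.comp] using hf v w
  have hm := congrArg Matrix.det
    (congrArg (LinearMap.BilinForm.toMatrix b) hcomp)
  rw [LinearMap.BilinForm.toMatrix_comp b b, Matrix.det_mul, Matrix.det_mul,
    Matrix.det_transpose, LinearMap.det_toMatrix] at hm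
  have hdψ : (LinearMap.BilinForm.toMatrix b ψ).det ≠ 0 :=
    (LinearMap.BilinForm.nondegenerate_iff_det_ne_zero b).mp hnd
  have := mul_left_cancel₀ hdψ (show (LinearMap.BilinForm.toMatrix b ψ).det *
      (LinearMap.det f * LinearMap.det f) = (LinearMap.BilinForm.toMatrix b ψ).det * 1 by
    rw [mul_one]
    linear_combination hm)
  exact this

theorem unwind (x : (CliffordAlgebra Q)ˣ) (ρx : V →ₗ[k] V)
    (hσι : ∀ v : V, involute (x : CliffordAlgebra Q) * ι Q v =
      ι Q (ρx v) * (x : CliffordAlgebra Q))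
    (hxι : ∀ v : V, (x : CliffordAlgebra Q) * ι Q v =
      ι Q (ρx v) * involute (x : CliffordAlgebra Q))
    (l : List V) :
    (involute (x : CliffordAlgebra Q) * (l.map (ι Q)).prod =
      (l.map fun a => ι Q (ρx a)).prod *
        (if Even l.length then involute (x : CliffordAlgebra Q) else (x : CliffordAlgebra Q))) ∧
    ((x : CliffordAlgebra Q) * (l.map (ι Q)).prod =
      (l.map fun a => ι Q (ρx a)).prod *
        (if Even l.length then (x : CliffordAlgebra Q) else involute (x : CliffordAlgebra Q))) := by
  induction l with
  | nil => simp
  | cons a l ih =>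
      obtain ⟨ih1, ih2⟩ := ih
      simp only [List.map_cons, List.prod_cons, List.length_cons, Nat.even_add_one]
      constructor
      · rw [← mul_assoc, hσι, mul_assoc, ih2, ← mul_assoc]
        by_cases h : Even l.length <;> simp [h]
      · rw [← mul_assoc, hxι, mul_assoc, ih1, ← mul_assoc]
        by_cases h : Even l.length <;> simp [h]

theorem theta_injective
    (Θ' : CliffordAlgebra Q →ₐ[k] Module.End k (ExteriorAlgebra k V))
    (hΘ' : ∀ (v : V) (ω : ExteriorAlgebra k V),
      Θ' (ι Q v) ω = ExteriorAlgebra.ι k v * ω + contractLeft (ψ v) ω)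
    (hQ : ∀ v : V, Q v = ψ v v) {y z : CliffordAlgebra Q}
    (h : Θ' y 1 = Θ' z 1) : y = z := by
  apply (changeFormEquiv (hB_aux hQ)).injective
  show changeForm (hB_aux hQ) y = changeForm (hB_aux hQ) z
  rw [← theta_eq_changeForm Θ' hΘ' hQ y, ← theta_eq_changeForm Θ' hΘ' hQ z, h]

end Stmt5Aux

open Stmt5Aux in
/-- For every `x ∈ Γ`, every `y ∈ C(V)`, and every `0 ≤ r ≤ 2g+1`, writing `θ_r(y)` for the
component of `θ(y)` in `⋀^r V`, one has
`θ_r(σ(x)·y·x⁻¹) = (det ρ(x))^{r−1} · (⋀^r ρ(x))(θ_r(y))`.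
Here `θ : C(V) → ⋀*V` is the `C(V)`-module isomorphism `x ↦ x·1` for the `C(V)`-module
structure on `⋀*V` in which `v ∈ V` acts by `ω ↦ v ∧ ω + v ⌟ ω`. -/
theorem stmt_5
    (k : Type*) [Field k] (h2 : (2 : k) ≠ 0)
    (g : ℕ) (hg : 1 ≤ g)
    (V : Type*) [AddCommGroup V] [Module k V]
    (ψ : LinearMap.BilinForm k V)
    (hsymm : ∀ v w : V, ψ v w = ψ w v)
    (hnd : ψ.Nondegenerate)
    (hdim : Module.finrank k V = 2 * g + 1) [FiniteDimensional k V]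
    (Q : QuadraticForm k V) (hQ : ∀ v : V, Q v = ψ v v)
    -- the `C(V)`-module structure on `⋀*V`:
    (Θ' : CliffordAlgebra Q →ₐ[k] Module.End k (ExteriorAlgebra k V))
    (hΘ' : ∀ (v : V) (ω : ExteriorAlgebra k V),
      Θ' (ι Q v) ω = ExteriorAlgebra.ι k v * ω + contractLeft (ψ v) ω)
    -- an element `x` of the Clifford group `Γ`, with `ρ(x)`:
    (x : (CliffordAlgebra Q)ˣ)
    (ρx : V →ₗ[k] V)
    (hρx : ∀ v : V, ι Q (ρx v) =
      involute (x : CliffordAlgebra Q) * ι Q v * (↑x⁻¹ : CliffordAlgebra Q)) :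
    ∀ (y : CliffordAlgebra Q) (r : ℕ), r ≤ 2 * g + 1 →
      GradedAlgebra.proj (fun i : ℕ => ⋀[k]^i V) r
          (Θ' (involute (x : CliffordAlgebra Q) * y * (↑x⁻¹ : CliffordAlgebra Q))
            (1 : ExteriorAlgebra k V)) =
        (LinearMap.det ρx) ^ ((r : ℤ) - 1) •
          ExteriorAlgebra.map ρx
            (GradedAlgebra.proj (fun i : ℕ => ⋀[k]^i V) r (Θ' y (1 : ExteriorAlgebra k V))) := by
  intro y r hr
  haveI : Invertible (2 : k) := invertibleOfNonzero h2
  -- fundamental relations in the Clifford algebra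
  have hσι : ∀ v : V, involute (x : CliffordAlgebra Q) * ι Q v =
      ι Q (ρx v) * (x : CliffordAlgebra Q) := by
    intro v
    rw [hρx v, mul_assoc, Units.inv_mul, mul_one]
  have hxι : ∀ v : V, (x : CliffordAlgebra Q) * ι Q v =
      ι Q (ρx v) * involute (x : CliffordAlgebra Q) := by
    intro v
    have h := congrArg involute (hσι v)
    simp only [map_mul, involute_ι, involute_involute, mul_neg, neg_mul, neg_inj] at h
    exact h
  -- ρx is an isometry
  have hQρ : ∀ v : V, Q (ρx v) = Q v := by
    intro v
    have h1 : algebraMap k (CliffordAlgebra Q) (Q (ρx v)) * ↑x =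
        algebraMap k (CliffordAlgebra Q) (Q v) * ↑x := by
      calc algebraMap k (CliffordAlgebra Q) (Q (ρx v)) * ↑x
          = ι Q (ρx v) * ι Q (ρx v) * ↑x := by rw [ι_sq_scalar]
        _ = ι Q (ρx v) * (involute (↑x : CliffordAlgebra Q) * ι Q v) := by
            rw [mul_assoc, hσι]
        _ = (ι Q (ρx v) * involute (↑x : CliffordAlgebra Q)) * ι Q v := by rw [mul_assoc]
        _ = (↑x * ι Q v) * ι Q v := by rw [hxι]
        _ = ↑x * algebraMap k (CliffordAlgebra Q) (Q v) := by rw [mul_assoc, ι_sq_scalar]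
        _ = algebraMap k (CliffordAlgebra Q) (Q v) * ↑x := by rw [← Algebra.commutes]
    exact (algebraMap k (CliffordAlgebra Q)).injective (x.isUnit.mul_right_cancel h1)
  have hψρ : ∀ v w : V, ψ (ρx v) (ρx w) = ψ v w := by
    intro v w
    have hx2 := hQρ (v + w)
    have hv := hQρ v
    have hw := hQρ w
    simp only [map_add, hQ, LinearMap.add_apply] at hx2 hv hw
    have hs1 := hsymm (ρx v) (ρx w)
    have hs2 := hsymm v w
    have h2ψ : (2 : k) * ψ (ρx v) (ρx w) = 2 * ψ v w := by
      linear_combination hx2 - hv - hw + hs1 - hs2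
    exact mul_left_cancel₀ h2 h2ψ
  set d := LinearMap.det ρx with hd
  have hd2 : d * d = 1 := det_sq_one hnd ρx hψρ
  have hd0 : d ≠ 0 := by
    intro h
    rw [h, mul_zero] at hd2
    exact zero_ne_one hd2
  -- an orthogonal basis
  have hψs : LinearMap.IsSymm ψ := ⟨fun v w => by simpa using hsymm v w⟩
  obtain ⟨e, he⟩ := LinearMap.BilinForm.exists_orthogonal_basis hψs
  have heo : ∀ i j, i ≠ j → ψ (e i) (e j) = 0 := fun i j hij => he hij
  have hQe : ∀ i, Q (e i) ≠ 0 := by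
    intro i h0
    have hmap : ψ (e i) = (0 : V →ₗ[k] k) := by
      apply Module.Basis.ext e
      intro j
      simp only [LinearMap.zero_apply]
      by_cases hij : i = j
      · subst hij; rw [← hQ]; exact h0
      · exact heo i j hij
    exact Module.Basis.ne_zero e i (hnd.1 (e i) fun w => by rw [hmap]; rfl)
  -- the volume element
  set ωl : List V := List.ofFn e with hωl
  have hlen : ωl.length = Module.finrank k V := List.length_ofFn (f := e)
  have hodd : ¬ Even ωl.length := by
    rw [hlen, hdim, Nat.even_iff]
    omega
  have hpair : ωl.Pairwise fun a b => ψ a b = 0 := by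
    rw [hωl, List.pairwise_ofFn]
    exact fun i j hij => heo i j hij.ne
  set ω : CliffordAlgebra Q := (ωl.map (ι Q)).prod with hω
  have hcommι : ∀ v : V, ι Q v * ω = ω * ι Q v := by
    have h12 : ((LinearMap.mulRight k ω).comp (ι Q) : V →ₗ[k] CliffordAlgebra Q) =
        (LinearMap.mulLeft k ω).comp (ι Q) := by
      apply Module.Basis.ext e
      intro i
      simp only [LinearMap.comp_apply, LinearMap.mulRight_apply, LinearMap.mulLeft_apply]
      exact commute_mem_prod hQ hsymm ωl hpair hodd ((List.mem_ofFn (f := e)).mpr ⟨i, rfl⟩)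
    intro v
    have h13 := LinearMap.congr_fun h12 v
    simpa using h13
  have hcommAll : ∀ z : CliffordAlgebra Q, ω * z = z * ω := by
    intro z
    induction z using CliffordAlgebra.induction with
    | algebraMap r => exact (Algebra.commutes r ω).symm
    | ι v => exact (hcommι v).symm
    | mul a b ha hb => rw [← mul_assoc, ha, mul_assoc, hb, ← mul_assoc]
    | add a b ha hb => rw [mul_add, ha, hb, add_mul]
  -- θ of volume elements
  have hθω : Θ' ω 1 = ExteriorAlgebra.ιMulti k (Module.finrank k V) ⇑e := by
    rw [hω, theta_prod hsymm Θ' hΘ' ωl hpair, ExteriorAlgebra.ιMulti_apply, hωl, List.map_ofFn]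
    rfl
  set ρe : Fin (Module.finrank k V) → V := fun i => ρx (e i) with hρe
  have hρpair : (List.ofFn ρe).Pairwise fun a b => ψ a b = 0 := by
    rw [List.pairwise_ofFn]
    intro i j hij
    rw [hρe]
    simpa [hψρ] using heo i j hij.ne
  have hθρ : Θ' (((List.ofFn ρe).map (ι Q)).prod) 1 =
      ExteriorAlgebra.ιMulti k (Module.finrank k V) ρe := by
    rw [theta_prod hsymm Θ' hΘ' _ hρpair, ExteriorAlgebra.ιMulti_apply, List.map_ofFn]
    rfl
  have hwedge : ExteriorAlgebra.ιMulti k (Module.finrank k V) ρe =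
      d • ExteriorAlgebra.ιMulti k (Module.finrank k V) ⇑e := by
    rw [alt_det e (ExteriorAlgebra.ιMulti k (Module.finrank k V)) ρe]
    congr 1
    have hco : ρe = ⇑ρx ∘ ⇑e := rfl
    rw [hco, Module.Basis.det_comp, Module.Basis.det_self, mul_one]
  have hPρ : ((List.ofFn ρe).map (ι Q)).prod = d • ω := by
    apply theta_injective Θ' hΘ' hQ
    rw [hθρ, hwedge, ← hθω, ← LinearMap.smul_apply, ← map_smul]
  -- the key homogeneity relation
  have hunw := (unwind x ρx hσι hxι ωl).1
  rw [if_neg hodd] at hunw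
  have hmapmap : (ωl.map fun a => ι Q (ρx a)).prod = ((List.ofFn ρe).map (ι Q)).prod := by
    rw [hωl, List.map_ofFn, List.map_ofFn]
    rfl
  rw [hmapmap, hPρ] at hunw
  obtain ⟨c, hc0, hc⟩ := prod_sq hQ hsymm ωl hpair (fun a ha => by
    obtain ⟨i, rfl⟩ := (List.mem_ofFn (f := e) (a := a)).mp ha
    exact hQe i)
  have hkey : involute (↑x : CliffordAlgebra Q) = d • (↑x : CliffordAlgebra Q) := by
    have h3 : involute (↑x : CliffordAlgebra Q) * (ω * ω) =
        (d • (↑x : CliffordAlgebra Q)) * (ω * ω) := by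
      calc involute (↑x : CliffordAlgebra Q) * (ω * ω)
          = (involute (↑x : CliffordAlgebra Q) * ω) * ω := by rw [mul_assoc]
        _ = ((d • ω) * ↑x) * ω := by rw [hunw]
        _ = (d • ω) * (↑x * ω) := by rw [mul_assoc]
        _ = (d • ω) * (ω * ↑x) := by rw [hcommAll]
        _ = d • (ω * (ω * ↑x)) := by rw [smul_mul_assoc]
        _ = d • ((ω * ω) * ↑x) := by rw [mul_assoc]
        _ = d • (algebraMap k (CliffordAlgebra Q) c * ↑x) := by rw [hc]
        _ = d • ((↑x : CliffordAlgebra Q) * algebraMap k (CliffordAlgebra Q) c) := by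
            rw [Algebra.commutes]
        _ = (d • (↑x : CliffordAlgebra Q)) * algebraMap k (CliffordAlgebra Q) c := by
            rw [smul_mul_assoc]
        _ = (d • (↑x : CliffordAlgebra Q)) * (ω * ω) := by rw [hc]
    rw [hc, ← Algebra.commutes c, ← Algebra.commutes c, ← Algebra.smul_def,
      ← Algebra.smul_def] at h3
    exact smul_right_injective _ hc0 h3
  -- untwisted conjugation sends vectors to vectors
  have hconj : ∀ v : V, (↑x : CliffordAlgebra Q) * ι Q v * ↑x⁻¹ = ι Q (d • ρx v) := by
    intro v
    have hιd : ι Q (d • ρx v) = d • (involute (↑x : CliffordAlgebra Q) * ι Q v * ↑x⁻¹) := by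
      rw [map_smul, hρx v]
    rw [hιd, hkey, smul_mul_assoc, smul_mul_assoc, smul_smul, hd2, one_smul]
  have hρ'iso : ∀ a b : V, ψ ((d • ρx) a) ((d • ρx) b) = ψ a b := by
    intro a b
    simp only [LinearMap.smul_apply, LinearMap.map_smul, LinearMap.smul_apply, smul_eq_mul]
    rw [hψρ, ← mul_assoc, hd2, one_mul]
  have hgroup : ∀ a b : CliffordAlgebra Q,
      ((↑x : CliffordAlgebra Q) * a * ↑x⁻¹) * ((↑x : CliffordAlgebra Q) * b * ↑x⁻¹) =
        (↑x : CliffordAlgebra Q) * (a * b) * ↑x⁻¹ := by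
    intro a b
    simp only [mul_assoc]
    rw [← mul_assoc (↑x⁻¹ : CliffordAlgebra Q) ↑x, Units.inv_mul, one_mul]
  have hconjθ : ∀ z : CliffordAlgebra Q, Θ' ((↑x : CliffordAlgebra Q) * z * ↑x⁻¹) 1 =
      ExteriorAlgebra.map (d • ρx) (Θ' z 1) := by
    intro z
    induction z using CliffordAlgebra.left_induction with
    | algebraMap rr =>
        have hz : (↑x : CliffordAlgebra Q) * algebraMap k (CliffordAlgebra Q) rr * ↑x⁻¹ =
            algebraMap k (CliffordAlgebra Q) rr := by
          rw [← Algebra.commutes rr, mul_assoc, Units.mul_inv, mul_one]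
        rw [hz, AlgHom.commutes, Module.algebraMap_end_apply, map_smul, map_one]
    | add a b ha hb =>
        simp only [mul_add, add_mul, map_add, LinearMap.add_apply, ha, hb]
    | ι_mul z v ih =>
        have hsplit : (↑x : CliffordAlgebra Q) * (ι Q v * z) * ↑x⁻¹ =
            ι Q (d • ρx v) * ((↑x : CliffordAlgebra Q) * z * ↑x⁻¹) := by
          rw [← hgroup, hconj]
        rw [hsplit, map_mul, Module.End.mul_apply, hΘ', ih]
        rw [map_mul Θ', Module.End.mul_apply, hΘ']
        rw [map_add, map_mul, ExteriorAlgebra.map_apply_ι, map_contract (d • ρx) hρ'iso]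
        simp only [LinearMap.smul_apply]
  -- final assembly
  have hσy : involute (↑x : CliffordAlgebra Q) * y * ↑x⁻¹ =
      d • ((↑x : CliffordAlgebra Q) * y * ↑x⁻¹) := by
    rw [hkey, smul_mul_assoc, smul_mul_assoc]
  have hmem : GradedAlgebra.proj (fun i : ℕ => ⋀[k]^i V) r (Θ' y 1) ∈ ⋀[k]^r V := by
    rw [GradedAlgebra.proj_apply]
    exact SetLike.coe_mem _
  have hpow : d * d ^ r = d ^ ((r : ℤ) - 1) := by
    have hzp : d ^ ((r : ℤ) - 1) = d ^ (r : ℤ) / d := by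
      rw [zpow_sub₀ hd0, zpow_one]
    rw [hzp, zpow_natCast, eq_div_iff hd0]
    have hr3 : d * d ^ r * d = d ^ r * (d * d) := by ring
    rw [hr3, hd2, mul_one]
  rw [hσy, map_smul Θ', LinearMap.smul_apply, map_smul, hconjθ y, proj_map,
    map_smul_apply d ρx hmem, smul_smul, hpow]
end

section
/- Let ω ∈ S be nonzero and define L(ω) = {v ∈ V : v·ω = 0 in S}. Then: (1) L(ω) ⊆ L(ω)^⊥ (the orthogonal complement with respect to ψ); in particular L(ω) is an isotropic subspace of V and dim_k L(ω) ≤ g. (2) If dim_k L(ω) = g, then L(ω) is a maximal isotropic subspace of V. (3) For every isotropic subspace L ≤ V of dimension g, there exists a nonzero element ω_L ∈ S, unique up to multiplication by k^×, such that L(ω_L) = L. -/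
open CliffordAlgebra


section Fock

variable {k S : Type*} [Field k] [AddCommGroup S] [Module k S] {g : ℕ}

private lemma fockA1 (U W : Fin g → Module.End k S) (h2 : (2 : k) ≠ 0)
    (hUU : ∀ i j, U i * U j + U j * U i = 0)
    (hUW : ∀ i j, U i * W j + W j * U i = (if i = j then (2:k) else 0) • (1 : Module.End k S))
    (t : S) (ht : t ≠ 0) :
    ∃ s : S, s ≠ 0 ∧ ∀ i, U i s = 0 := by
  have hswap : ∀ {A B : Module.End k S}, A * B + B * A = 0 → ∀ x, A (B x) = -(B (A x)) := by
    intro A B h x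
    have := congrArg (fun f : Module.End k S => f x) h
    simp only [LinearMap.add_apply, Module.End.mul_apply, LinearMap.zero_apply] at this
    exact eq_neg_of_add_eq_zero_left this
  have hUsq : ∀ j x, U j (U j x) = 0 := by
    intro j x
    have h : (2:k) • (U j * U j) = 0 := by rw [two_smul]; exact hUU j j
    have h0 : U j * U j = 0 := (smul_eq_zero.mp h).resolve_left h2
    have := congrArg (fun f : Module.End k S => f x) h0
    simpa [Module.End.mul_apply] using this
  have hUWi : ∀ i x, U i (W i x) + W i (U i x) = (2:k) • x := by
    intro i x
    have := congrArg (fun f : Module.End k S => f x) (hUW i i)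
    simpa [LinearMap.add_apply, Module.End.mul_apply] using this
  suffices h : ∀ n : ℕ, ∃ s : S, s ≠ 0 ∧ ∀ i : Fin g, (i : ℕ) < n → U i s = 0 by
    obtain ⟨s, hs, h⟩ := h g
    exact ⟨s, hs, fun i => h i i.isLt⟩
  intro n
  induction n with
  | zero => exact ⟨t, ht, fun i h => absurd h (by omega)⟩
  | succ n ih =>
    obtain ⟨s, hs, hann⟩ := ih
    by_cases hng : n < g
    · set i : Fin g := ⟨n, hng⟩ with hi
      by_cases hc : U i (W i s) = 0
      · have h1 := hUWi i s
        rw [hc, zero_add] at h1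
        refine ⟨U i s, ?_, ?_⟩
        · intro h0
          rw [h0, map_zero] at h1
          exact hs ((smul_eq_zero.mp h1.symm).resolve_left h2)
        · intro j hj
          rcases eq_or_ne j i with rfl | hne
          · exact hUsq i s
          · have hj' : (j : ℕ) < n := by
              have : (j : ℕ) ≠ n := fun h => hne (Fin.ext (by simp [hi, h]))
              omega
            rw [hswap (hUU j i) s, hann j hj', map_zero, neg_zero]
      · refine ⟨U i (W i s), hc, ?_⟩
        intro j hj
        rcases eq_or_ne j i with rfl | hne
        · exact hUsq i _
        · have hj' : (j : ℕ) < n := by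
            have : (j : ℕ) ≠ n := fun h => hne (Fin.ext (by simp [hi, h]))
            omega
          have hswUU := hswap (hUU j i)
          have hswUW := hswap (by
            have := hUW j i
            rw [if_neg hne, zero_smul] at this
            exact this)
          rw [hswUU, hswUW, hann j hj']
          simp
    · exact ⟨s, hs, fun i h => hann i (by omega)⟩

end Fock

section FockA2

variable {k S : Type*} [Field k] [AddCommGroup S] [Module k S] {g : ℕ}

private lemma fockA2 [Module.Finite k S] (U W : Fin g → Module.End k S) (h2 : (2 : k) ≠ 0)
    (hUU : ∀ i j, U i * U j + U j * U i = 0)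
    (hWW : ∀ i j, W i * W j + W j * W i = 0)
    (hUW : ∀ i j, U i * W j + W j * U i = (if i = j then (2:k) else 0) • (1 : Module.End k S))
    (hdim : Module.finrank k S ≤ 2 ^ g)
    (s₀ : S) (hs₀ : s₀ ≠ 0) (hann : ∀ i, U i s₀ = 0)
    (s : S) (hanns : ∀ i, U i s = 0) :
    ∃ c : k, s = c • s₀ := by
  classical
  have hWsq : ∀ j, W j * W j = 0 := by
    intro j
    have h : (2:k) • (W j * W j) = 0 := by rw [two_smul]; exact hWW j j
    exact (smul_eq_zero.mp h).resolve_left h2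
  have hUWi : ∀ i (x : S), U i (W i x) + W i (U i x) = (2:k) • x := by
    intro i x
    have := congrArg (fun f : Module.End k S => f x) (hUW i i)
    simpa [LinearMap.add_apply, Module.End.mul_apply] using this
  -- products of W's
  set Wl : List (Fin g) → Module.End k S := fun l => (l.map W).prod with hWl
  have hWlnil : Wl [] = 1 := by simp [hWl]
  have hWlcons : ∀ a l, Wl (a :: l) = W a * Wl l := by
    intro a l; simp [hWl]
  -- (f1)
  have hf1 : ∀ (l : List (Fin g)) (j : Fin g), j ∉ l → U j (Wl l s₀) = 0 := by
    intro l
    induction l with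
    | nil => intro j _; simpa [hWlnil] using hann j
    | cons a l ih =>
      intro j hj
      have hja : j ≠ a := fun h => hj (h ▸ List.mem_cons_self)
      have hjl : j ∉ l := fun h => hj (List.mem_cons_of_mem a h)
      have hsw := hUW j a
      rw [if_neg hja, zero_smul] at hsw
      have := congrArg (fun f : Module.End k S => f (Wl l s₀)) hsw
      simp only [LinearMap.add_apply, Module.End.mul_apply, LinearMap.zero_apply] at this
      have h0 : U j (W a (Wl l s₀)) = -(W a (U j (Wl l s₀))) := eq_neg_of_add_eq_zero_left this
      rw [hWlcons, Module.End.mul_apply, h0, ih j hjl, map_zero, neg_zero]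
  -- (f2)
  have hf2 : ∀ (l : List (Fin g)), l.Nodup → Wl l s₀ ≠ 0 := by
    intro l
    induction l with
    | nil => simpa [hWlnil] using hs₀
    | cons a l ih =>
      intro hnd
      have hal : a ∉ l := (List.nodup_cons.mp hnd).1
      have hx : Wl l s₀ ≠ 0 := ih (List.nodup_cons.mp hnd).2
      have hUx : U a (Wl l s₀) = 0 := hf1 l a hal
      intro h0
      rw [hWlcons, Module.End.mul_apply] at h0
      have := hUWi a (Wl l s₀)
      rw [h0, map_zero, hUx, map_zero, add_zero] at this
      exact hx ((smul_eq_zero.mp this.symm).resolve_left h2)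
  -- (g3) operator version
  have hcommW : ∀ (i a : Fin g), i ≠ a → (U i * W i) * W a = W a * (U i * W i) := by
    intro i a hia
    have h1 : U i * W a = -(W a * U i) := by
      have := hUW i a; rw [if_neg hia, zero_smul] at this
      exact eq_neg_of_add_eq_zero_left this
    have h2' : W i * W a = -(W a * W i) := eq_neg_of_add_eq_zero_left (hWW i a)
    calc (U i * W i) * W a = U i * (W i * W a) := by rw [mul_assoc]
      _ = U i * (-(W a * W i)) := by rw [h2']
      _ = -(U i * W a) * W i := by rw [mul_neg, neg_mul, mul_assoc]
      _ = (W a * U i) * W i := by rw [h1, neg_neg]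
      _ = W a * (U i * W i) := by rw [mul_assoc]
  have hg3 : ∀ (i : Fin g) (l : List (Fin g)), i ∈ l → (U i * W i) * Wl l = 0 := by
    intro i l
    induction l with
    | nil => intro h; cases h
    | cons a l ih =>
      intro hmem
      rcases eq_or_ne i a with rfl | hne
      · rw [hWlcons, ← mul_assoc, mul_assoc (U i), hWsq, mul_zero, zero_mul]
      · have : i ∈ l := by
          rcases List.mem_cons.mp hmem with h | h
          · exact absurd h hne
          · exact h
        rw [hWlcons, ← mul_assoc, hcommW i a hne, mul_assoc, ih this, mul_zero]
  -- basis family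
  set ω : Finset (Fin g) → S := fun T => Wl (T.sort (· ≤ ·)) s₀ with hω
  have hωempty : ω ∅ = s₀ := by simp [hω, Finset.sort_empty, hWlnil]
  have hωne : ∀ T, ω T ≠ 0 := fun T => hf2 _ (Finset.sort_nodup _ _)
  -- per-factor action
  have hfact : ∀ (T₀ : Finset (Fin g)) (i : Fin g) (T : Finset (Fin g)),
      (if i ∈ T₀ then W i * U i else U i * W i) (ω T)
        = if (i ∈ T₀ ↔ i ∈ T) then (2:k) • ω T else 0 := by
    intro T₀ i T
    have hmemsort : i ∈ T.sort (· ≤ ·) ↔ i ∈ T := Finset.mem_sort _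
    by_cases hiT : i ∈ T
    · have hUW0 : U i (W i (ω T)) = 0 := by
        have := congrArg (fun f : Module.End k S => f s₀) (hg3 i _ (hmemsort.mpr hiT))
        simpa [hω, Module.End.mul_apply] using this
      by_cases hiT0 : i ∈ T₀
      · rw [if_pos hiT0, if_pos (by tauto)]
        have := hUWi i (ω T)
        rw [hUW0, zero_add] at this
        simpa [Module.End.mul_apply] using this
      · rw [if_neg hiT0, if_neg (by tauto)]
        simpa [Module.End.mul_apply] using hUW0
    · have hU0 : U i (ω T) = 0 := hf1 _ i (fun h => hiT (hmemsort.mp h))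
      by_cases hiT0 : i ∈ T₀
      · rw [if_pos hiT0, if_neg (by tauto)]
        simp [Module.End.mul_apply, hU0]
      · rw [if_neg hiT0, if_pos (by tauto)]
        have := hUWi i (ω T)
        rw [hU0, map_zero, add_zero] at this
        simpa [Module.End.mul_apply] using this
  -- extraction operator action on ω T
  have hextω : ∀ (T₀ T : Finset (Fin g)) (l : List (Fin g)),
      ((l.map fun i => if i ∈ T₀ then W i * U i else U i * W i).prod) (ω T)
        = if (∀ i ∈ l, (i ∈ T₀ ↔ i ∈ T)) then ((2:k) ^ l.length) • ω T else 0 := by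
    intro T₀ T l
    induction l with
    | nil => simp
    | cons a l ih =>
      rw [List.map_cons, List.prod_cons, Module.End.mul_apply, ih]
      by_cases hl : ∀ i ∈ l, (i ∈ T₀ ↔ i ∈ T)
      · rw [if_pos hl, map_smul, hfact T₀ a T]
        by_cases ha : (a ∈ T₀ ↔ a ∈ T)
        · rw [if_pos ha, if_pos (by
            intro i hi
            rcases List.mem_cons.mp hi with rfl | hi
            · exact ha
            · exact hl i hi)]
          rw [smul_smul, List.length_cons, pow_succ]
        · rw [if_neg ha, smul_zero, if_neg (by
            intro hcon
            exact ha (hcon a (List.mem_cons_self)))]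
      · rw [if_neg hl, map_zero, if_neg (by
          intro hcon
          exact hl fun i hi => hcon i (List.mem_cons_of_mem a hi))]
  -- extraction on s (T₀ = ∅ operator)
  have hexts : ∀ (l : List (Fin g)),
      ((l.map fun i => if i ∈ (∅ : Finset (Fin g)) then W i * U i else U i * W i).prod) s
        = ((2:k) ^ l.length) • s := by
    intro l
    induction l with
    | nil => simp
    | cons a l ih =>
      rw [List.map_cons, List.prod_cons, Module.End.mul_apply, ih, map_smul]
      have h2s : (U a * W a) s = (2:k) • s := by
        have := hUWi a s
        rw [hanns a, map_zero, add_zero] at this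
        simpa [Module.End.mul_apply] using this
      simp only [Finset.notMem_empty, if_false] at h2s ⊢
      rw [h2s, smul_smul, List.length_cons, pow_succ]
  -- linear independence
  have hindep : LinearIndependent k ω := by
    rw [Fintype.linearIndependent_iff]
    intro c hc T₀
    have hE := congrArg (fun x : S =>
      (((List.finRange g).map fun i => if i ∈ T₀ then W i * U i else U i * W i).prod) x) hc
    simp only [map_sum, map_smul, map_zero] at hE
    have hsum : ∀ T, T ≠ T₀ →
        c T • (((List.finRange g).map fun i => if i ∈ T₀ then W i * U i else U i * W i).prod)
          (ω T) = 0 := by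
      intro T hT
      rw [hextω T₀ T, if_neg, smul_zero]
      intro hcon
      exact hT (Finset.ext fun i => (hcon i (List.mem_finRange i)).symm)
    rw [Finset.sum_eq_single T₀ (fun T _ hT => hsum T hT) (by simp)] at hE
    rw [hextω T₀ T₀ _, if_pos (fun i _ => Iff.rfl), List.length_finRange] at hE
    rcases smul_eq_zero.mp hE with h | h
    · exact h
    · exact absurd ((smul_eq_zero.mp h).resolve_left (pow_ne_zero _ h2)) (hωne T₀)
  -- spanning
  have hcard : Fintype.card (Finset (Fin g)) = 2 ^ g := by
    rw [Fintype.card_finset, Fintype.card_fin]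
  have hfr : Fintype.card (Finset (Fin g)) = Module.finrank k S :=
    le_antisymm (hindep.fintype_card_le_finrank) (by rw [hcard]; exact hdim)
  have hspan := hindep.span_eq_top_of_card_eq_finrank hfr
  have hmem : s ∈ Submodule.span k (Set.range ω) := by rw [hspan]; trivial
  obtain ⟨c, hc⟩ := (Submodule.mem_span_range_iff_exists_fun k).mp hmem
  -- apply the ∅-extraction operator to hc
  have hE := congrArg (fun x : S =>
    (((List.finRange g).map fun i =>
      if i ∈ (∅ : Finset (Fin g)) then W i * U i else U i * W i).prod) x) hc
  simp only [map_sum, map_smul] at hE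
  rw [hexts, List.length_finRange] at hE
  have hsum : ∀ T, T ≠ (∅ : Finset (Fin g)) →
      c T • (((List.finRange g).map fun i =>
        if i ∈ (∅ : Finset (Fin g)) then W i * U i else U i * W i).prod) (ω T) = 0 := by
    intro T hT
    rw [hextω ∅ T, if_neg, smul_zero]
    intro hcon
    refine hT (Finset.ext fun i => ?_)
    have := hcon i (List.mem_finRange i)
    simp only [Finset.notMem_empty, false_iff] at this
    simp [this]
  rw [Finset.sum_eq_single ∅ (fun T _ hT => hsum T hT) (by simp)] at hE
  rw [hextω ∅ ∅ _, if_pos (fun i _ => Iff.rfl), List.length_finRange, hωempty] at hE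
  refine ⟨c ∅, ?_⟩
  apply smul_right_injective S (pow_ne_zero g h2)
  show (2:k) ^ g • s = (2:k) ^ g • (c ∅ • s₀)
  rw [← hE, smul_comm]

end FockA2

set_option maxHeartbeats 1000000 in
private lemma extSpanFin (k : Type*) [Field k] (g : ℕ) :
    Module.Finite k (ExteriorAlgebra k (Fin g → k)) ∧
      Module.finrank k (ExteriorAlgebra k (Fin g → k)) ≤ 2 ^ g := by
  classical
  set S := ExteriorAlgebra k (Fin g → k) with hS
  set e : Fin g → S := fun j => ExteriorAlgebra.ι k (Pi.single j 1) with he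
  set elist : List (Fin g) → S := fun l => (l.map e).prod with helist
  have helnil : elist [] = 1 := by simp [helist]
  have helcons : ∀ a l, elist (a :: l) = e a * elist l := by intro a l; simp [helist]
  set f : Finset (Fin g) → S := fun T => elist (T.sort (· ≤ ·)) with hf
  set M : Submodule k S := Submodule.span k (Set.range f) with hM
  have hfm : ∀ T, f T ∈ M := fun T => Submodule.subset_span ⟨T, rfl⟩
  have hlm : ∀ (l : List (Fin g)), l.Pairwise (· < ·) → elist l ∈ M := by
    intro l hl
    have hsort : l.toFinset.sort (· ≤ ·) = l :=
      (List.toFinset_sort _ hl.nodup).mpr (hl.imp le_of_lt)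
    simpa only [hf, hsort] using hfm l.toFinset
  -- key reduction lemma
  have key : ∀ (l : List (Fin g)), l.Pairwise (· < ·) → ∀ j : Fin g,
      ∃ (c : k) (l' : List (Fin g)), l'.Pairwise (· < ·) ∧
        (∀ x ∈ l', j ≤ x ∨ x ∈ l) ∧ e j * elist l = c • elist l' := by
    intro l
    induction l with
    | nil =>
      intro _ j
      refine ⟨1, [j], List.pairwise_singleton _ j, ?_, ?_⟩
      · intro x hx
        rw [List.mem_singleton] at hx
        exact Or.inl (le_of_eq hx.symm)
      · rw [helnil, helcons, helnil, mul_one, one_smul]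
    | cons a l ih =>
      intro hs j
      have hs' : l.Pairwise (· < ·) := hs.of_cons
      have hal : ∀ x ∈ l, a < x := (List.pairwise_cons.mp hs).1
      rcases lt_trichotomy j a with hja | hja | hja
      · refine ⟨1, j :: a :: l, ?_, ?_, by simp [helcons, one_smul, mul_assoc]⟩
        · rw [List.pairwise_cons]
          refine ⟨?_, hs⟩
          intro b hb
          rcases List.mem_cons.mp hb with rfl | hb
          · exact hja
          · exact hja.trans (hal b hb)
        · intro x hx
          rcases List.mem_cons.mp hx with rfl | hx
          · exact Or.inl le_rfl
          · exact Or.inr hx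
      · subst hja
        refine ⟨0, [], List.Pairwise.nil, by simp, ?_⟩
        rw [helcons, ← mul_assoc, he]
        rw [ExteriorAlgebra.ι_sq_zero, zero_mul, zero_smul]
      · obtain ⟨c, l', hsort', hmem', heq'⟩ := ih hs' j
        refine ⟨-c, a :: l', ?_, ?_, ?_⟩
        · rw [List.pairwise_cons]
          refine ⟨?_, hsort'⟩
          intro b hb
          rcases hmem' b hb with h | h
          · exact lt_of_lt_of_le hja h
          · exact hal b h
        · intro x hx
          rcases List.mem_cons.mp hx with rfl | hx
          · exact Or.inr (List.mem_cons_self)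
          · rcases hmem' x hx with h | h
            · exact Or.inl h
            · exact Or.inr (List.mem_cons_of_mem a h)
        · have hswap : e j * e a = -(e a * e j) :=
            eq_neg_of_add_eq_zero_left (ExteriorAlgebra.ι_add_mul_swap _ _)
          calc e j * elist (a :: l) = (e j * e a) * elist l := by
                rw [helcons, mul_assoc]
            _ = -(e a * (e j * elist l)) := by rw [hswap]; rw [neg_mul, mul_assoc]
            _ = -(e a * (c • elist l')) := by rw [heq']
            _ = (-c) • elist (a :: l') := by
                rw [mul_smul_comm, helcons, neg_smul]
  -- closure of M under left multiplication by e j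
  have hMe : ∀ (j : Fin g), ∀ m ∈ M, e j * m ∈ M := by
    intro j m hm
    have hle : M ≤ Submodule.comap (LinearMap.mulLeft k (e j)) M := by
      rw [hM, Submodule.span_le]
      rintro _ ⟨T, rfl⟩
      obtain ⟨c, l', hsort', _, heq'⟩ := key (T.sort (· ≤ ·)) (Finset.sortedLT_sort T).pairwise j
      simp only [Submodule.mem_comap, LinearMap.mulLeft_apply, SetLike.mem_coe]
      rw [hf]
      rw [heq']
      exact Submodule.smul_mem _ _ (hlm l' hsort')
    simpa using hle hm
  -- closure under multiplication by elist l
  have hMl : ∀ (l : List (Fin g)), ∀ m ∈ M, elist l * m ∈ M := by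
    intro l
    induction l with
    | nil => intro m hm; rwa [helnil, one_mul]
    | cons a l ih =>
      intro m hm
      rw [helcons, mul_assoc]
      exact hMe a _ (ih m hm)
  -- closure under multiplication
  have hMmul : ∀ a ∈ M, ∀ b ∈ M, a * b ∈ M := by
    intro a ha b hb
    have hle : M ≤ Submodule.comap (LinearMap.mulRight k b) M := by
      rw [hM, Submodule.span_le]
      rintro _ ⟨T, rfl⟩
      simp only [Submodule.mem_comap, LinearMap.mulRight_apply, SetLike.mem_coe]
      exact hMl _ b hb
    simpa using hle ha
  have h1M : (1 : S) ∈ M := by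
    simpa only [hf, Finset.sort_empty, helnil] using hfm ∅
  have hMι : ∀ (x : Fin g → k), ExteriorAlgebra.ι k x ∈ M := by
    intro x
    have hej : ∀ j, e j ∈ M := by
      intro j
      simpa only [hf, Finset.sort_singleton, helcons, helnil, mul_one] using hfm {j}
    have hx : x = ∑ j, x j • (Pi.single j (1:k) : Fin g → k) := by
      conv_lhs => rw [← Finset.univ_sum_single x]
      refine Finset.sum_congr rfl fun j _ => ?_
      rw [← Pi.single_smul, smul_eq_mul, mul_one]
    rw [hx, map_sum]
    refine Submodule.sum_mem _ fun j _ => ?_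
    rw [map_smul]
    exact Submodule.smul_mem _ _ (hej j)
  have htop : M = ⊤ := by
    rw [eq_top_iff]
    rintro a -
    induction a using ExteriorAlgebra.induction with
    | algebraMap r =>
      rw [Algebra.algebraMap_eq_smul_one]
      exact Submodule.smul_mem _ _ h1M
    | ι x => exact hMι x
    | mul a b ha hb => exact hMmul a ha b hb
    | add a b ha hb => exact Submodule.add_mem _ ha hb
  -- conclude
  set φ : ((Finset (Fin g)) → k) →ₗ[k] S := (Pi.basisFun k (Finset (Fin g))).constr ℕ f with hφ
  have hrange : LinearMap.range φ = ⊤ := by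
    rw [hφ, Module.Basis.constr_range, ← hM, htop]
  have hsurj : Function.Surjective φ := LinearMap.range_eq_top.mp hrange
  have hfin : Module.Finite k S := Module.Finite.of_surjective φ hsurj
  refine ⟨hfin, ?_⟩
  have h1 := LinearMap.finrank_range_le φ
  rw [hrange, finrank_top] at h1
  rwa [Module.finrank_pi, Fintype.card_finset, Fintype.card_fin] at h1

set_option maxHeartbeats 1000000



/-- For nonzero `ω ∈ S`, let `L(ω) = {v ∈ V : v·ω = 0}`.  Then:
(1) `L(ω) ⊆ L(ω)^⊥`; in particular `L(ω)` is isotropic and `dim L(ω) ≤ g`;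
(2) if `dim L(ω) = g` then `L(ω)` is a maximal isotropic subspace of `V`;
(3) every `g`-dimensional isotropic subspace `L ≤ V` is `L(ω_L)` for some nonzero `ω_L ∈ S`,
unique up to `k^×`-multiple. -/
theorem stmt_10
    (k : Type*) [Field k] (h2 : (2 : k) ≠ 0)
    (g : ℕ) (hg : 1 ≤ g)
    (V : Type*) [AddCommGroup V] [Module k V]
    (ψ : LinearMap.BilinForm k V)
    (p : Module.Basis (Fin (2 * g + 1)) k V)
    (hψp : ∀ i j : Fin (2 * g + 1), ψ (p i) (p j) = if (i : ℕ) + (j : ℕ) = 2 * g then 1 else 0)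
    (Q : QuadraticForm k V) (hQ : ∀ v : V, Q v = ψ v v)
    -- the spin representation `S = ⋀*E`, modelled on `⋀*(Fin g → k)` with `e_j ↔ p_{g+1+j}`:
    (Θ : CliffordAlgebra Q →ₐ[k] Module.End k (ExteriorAlgebra k (Fin g → k)))
    (hΘE : ∀ (j : Fin g) (s : ExteriorAlgebra k (Fin g → k)),
      Θ (ι Q (p ⟨g + 1 + j, by omega⟩)) s = ExteriorAlgebra.ι k (Pi.single j 1) * s)
    (hΘF : ∀ (i : Fin g) (s : ExteriorAlgebra k (Fin g → k)),
      Θ (ι Q (p ⟨(i : ℕ), by omega⟩)) s =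
        contractLeft ((2 : k) • (ψ (p ⟨(i : ℕ), by omega⟩) ∘ₗ
          (Pi.basisFun k (Fin g)).constr k fun j : Fin g => p ⟨g + 1 + j, by omega⟩)) s)
    (hΘG : ∀ s : ExteriorAlgebra k (Fin g → k),
      Θ (ι Q (p ⟨g, by omega⟩)) s = involute s) :
    -- (1) and (2):
    (∀ ω : ExteriorAlgebra k (Fin g → k), ω ≠ 0 →
      ∀ Lω : Submodule k V, (∀ v : V, v ∈ Lω ↔ Θ (ι Q v) ω = 0) →
        ((∀ v ∈ Lω, ∀ w ∈ Lω, ψ v w = 0) ∧ Module.finrank k Lω ≤ g) ∧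
        (Module.finrank k Lω = g →
          ∀ L' : Submodule k V, Lω ≤ L' → (∀ v ∈ L', ∀ w ∈ L', ψ v w = 0) → L' = Lω)) ∧
    -- (3):
    (∀ L : Submodule k V, (∀ v ∈ L, ∀ w ∈ L, ψ v w = 0) → Module.finrank k L = g →
      ∃ ω : ExteriorAlgebra k (Fin g → k), ω ≠ 0 ∧
        (∀ v : V, v ∈ L ↔ Θ (ι Q v) ω = 0) ∧
        ∀ ω' : ExteriorAlgebra k (Fin g → k), ω' ≠ 0 →
          (∀ v : V, v ∈ L ↔ Θ (ι Q v) ω' = 0) →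
          ∃ c : k, c ≠ 0 ∧ ω' = c • ω) := by
  classical
  set S := ExteriorAlgebra k (Fin g → k) with hSdef
  haveI hfinV : FiniteDimensional k V := Module.Finite.of_basis p
  have hdimV : Module.finrank k V = 2 * g + 1 := by
    rw [Module.finrank_eq_card_basis p, Fintype.card_fin]
  -- symmetry of ψ
  have hsymm : ∀ x y : V, ψ x y = ψ y x := by
    have hflip : ψ = ψ.flip := by
      refine Module.Basis.ext p fun i => Module.Basis.ext p fun j => ?_
      have h1 : (ψ.flip (p i)) (p j) = ψ (p j) (p i) := rfl
      rw [h1, hψp, hψp]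
      simp [Nat.add_comm]
    intro x y
    conv_lhs => rw [hflip]
    rfl
  have hrefl : ψ.IsRefl := fun x y h => by rw [hsymm]; exact h
  -- nondegeneracy of ψ
  have hnd : ψ.Nondegenerate := by
    refine (LinearMap.IsRefl.nondegenerate_iff_separatingLeft hrefl).mpr ?_
    intro x hx
    have hcoord : ∀ m : Fin (2 * g + 1), p.repr x m = 0 := by
      intro m
      have hm : (m : ℕ) ≤ 2 * g := by omega
      set j : Fin (2 * g + 1) := ⟨2 * g - m, by omega⟩ with hj
      have hjval : (j : ℕ) = 2 * g - (m : ℕ) := rfl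
      have h0 := hx (p j)
      conv_lhs at h0 => rw [← p.sum_repr x]
      rw [map_sum, LinearMap.sum_apply] at h0
      simp only [map_smul, LinearMap.smul_apply, hψp, smul_eq_mul] at h0
      have hmain : ∀ i : Fin (2 * g + 1), i ≠ m →
          p.repr x i * (if (i : ℕ) + (j : ℕ) = 2 * g then 1 else 0) = 0 := by
        intro i hi
        rw [if_neg, mul_zero]
        intro hcon
        exact hi (Fin.ext (by omega))
      rw [Finset.sum_eq_single m (fun i _ hi => hmain i hi) (by simp)] at h0
      rw [if_pos (by omega), mul_one] at h0
      exact h0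
    have : p.repr x = 0 := Finsupp.ext hcoord
    have := congrArg p.repr.symm this
    rwa [LinearEquiv.symm_apply_apply, map_zero] at this
  -- isotropic subspaces have dimension at most g
  have hiso_le : ∀ N : Submodule k V, (∀ a ∈ N, ∀ b ∈ N, ψ a b = 0) →
      Module.finrank k N ≤ g := by
    intro N hN
    have hsub : N ≤ ψ.orthogonal N := by
      intro x hx
      rw [LinearMap.BilinForm.mem_orthogonal_iff]
      exact fun n hn => hN n hn x hx
    have hle : Module.finrank k N ≤ Module.finrank k (ψ.orthogonal N) :=
      Submodule.finrank_mono hsub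
    have hsum := LinearMap.BilinForm.finrank_add_finrank_orthogonal hrefl N
    rw [LinearMap.BilinForm.orthogonal_top_eq_bot hnd, inf_bot_eq, finrank_bot, add_zero,
      hdimV] at hsum
    omega
  -- polar identity for operators
  have hpolar : ∀ x y : V,
      Θ (ι Q x) * Θ (ι Q y) + Θ (ι Q y) * Θ (ι Q x)
        = ((2 : k) * ψ x y) • (1 : Module.End k S) := by
    intro x y
    have h := congrArg Θ (CliffordAlgebra.ι_mul_ι_add_swap (Q := Q) x y)
    rw [map_add, map_mul, map_mul, AlgHom.commutes] at h
    rw [h, Algebra.algebraMap_eq_smul_one]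
    congr 1
    simp only [QuadraticMap.polar, hQ, map_add, LinearMap.add_apply]
    rw [hsymm y x]
    ring
  -- the annihilator map is linear
  set Tmap : S → (V →ₗ[k] S) := fun ω =>
    { toFun := fun v => Θ (ι Q v) ω
      map_add' := by intro a b; simp [map_add]
      map_smul' := by intro c a; simp [map_smul] } with hTmapdef
  have hTmap : ∀ (ω : S) (v : V), Tmap ω v = Θ (ι Q v) ω := fun _ _ => rfl
  -- mutual annihilators are ψ-orthogonal
  have hiso_of_ann : ∀ ω : S, ω ≠ 0 → ∀ v w : V,
      Θ (ι Q v) ω = 0 → Θ (ι Q w) ω = 0 → ψ v w = 0 := by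
    intro ω hω v w hv hw
    have h := congrArg (fun f : Module.End k S => f ω) (hpolar v w)
    simp only [LinearMap.add_apply, Module.End.mul_apply, LinearMap.smul_apply,
      Module.End.one_apply, hv, hw, map_zero, add_zero] at h
    rcases smul_eq_zero.mp h.symm with h | h
    · rcases mul_eq_zero.mp h with h | h
      · exact absurd h h2
      · exact h
    · exact absurd h hω
  constructor
  · -- parts (1) and (2)
    intro ω hω Lω hmem
    have hisoL : ∀ v ∈ Lω, ∀ w ∈ Lω, ψ v w = 0 := fun v hv w hw =>
      hiso_of_ann ω hω v w ((hmem v).mp hv) ((hmem w).mp hw)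
    refine ⟨⟨hisoL, hiso_le Lω hisoL⟩, ?_⟩
    intro hrk L' hle hiso'
    exact (Submodule.eq_of_le_of_finrank_le hle (by rw [hrk]; exact hiso_le L' hiso')).symm
  · -- part (3)
    intro L hisoL hfrk
    obtain ⟨hSfin, hSdim⟩ := extSpanFin k g
    haveI := hSfin
    -- basis of L as vectors of V
    set b : Module.Basis (Fin g) k L := Module.finBasisOfFinrankEq k L hfrk with hb
    set u : Fin g → V := fun i => (b i : V) with hu
    have huL : ∀ i, u i ∈ L := fun i => (b i).2
    have hspanu : Submodule.span k (Set.range u) = L := by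
      have : Set.range u = L.subtype '' Set.range b := by
        rw [← Set.range_comp]; rfl
      rw [this, ← Submodule.map_span, Module.Basis.span_eq, Submodule.map_subtype_top]
    -- dual family
    have hvex : ∀ i : Fin g, ∃ vi : V, ∀ j, ψ vi (u j) = if i = j then 1 else 0 := by
      intro i
      refine ⟨(LinearMap.BilinForm.toDual ψ hnd).symm (Subspace.dualLift L (b.coord i)), ?_⟩
      intro j
      have h1 : ψ ((LinearMap.BilinForm.toDual ψ hnd).symm (Subspace.dualLift L (b.coord i))) (u j)
          = Subspace.dualLift L (b.coord i) (u j) := by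
        conv_lhs => rw [← LinearMap.BilinForm.toDual_def hnd]
        rw [(LinearMap.BilinForm.toDual ψ hnd).apply_symm_apply]
      have h2 : Subspace.dualLift L (b.coord i) (u j) = b.coord i (b j) :=
        Subspace.dualLift_of_subtype (b j)
      rw [h1, h2, Module.Basis.coord_apply, Module.Basis.repr_self_apply]
      simp [eq_comm]
    choose v hvu using hvex
    have huv : ∀ i j, ψ (u i) (v j) = if j = i then 1 else 0 := by
      intro i j; rw [hsymm]; exact hvu j i
    have huu : ∀ i j, ψ (u i) (u j) = 0 := fun i j => hisoL _ (huL i) _ (huL j)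
    obtain ⟨C, hCd⟩ : ∃ C : Fin g → Fin g → k, ∀ i m, C i m =
        if m < i then ψ (v i) (v m) else if m = i then ψ (v i) (v i) / 2 else 0 :=
      ⟨_, fun _ _ => rfl⟩
    obtain ⟨w, hwd⟩ : ∃ w : Fin g → V, ∀ i, w i = v i - ∑ m, C i m • u m :=
      ⟨_, fun _ => rfl⟩
    have hCsum : ∀ i j, C i j + C j i = ψ (v i) (v j) := by
      intro i j
      rw [hCd, hCd]
      rcases lt_trichotomy i j with h | h | h
      · rw [if_neg (asymm h), if_neg h.ne', if_pos h, zero_add]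
        exact hsymm _ _
      · subst h
        rw [if_neg (lt_irrefl i), if_pos (Eq.refl i), ← add_div, ← two_mul,
          mul_div_cancel_left₀ _ h2]
      · rw [if_pos h, if_neg (asymm h), if_neg h.ne', add_zero]
    have hψuw : ∀ i j, ψ (u i) (w j) = if i = j then 1 else 0 := by
      intro i j
      rw [hwd j, map_sub, map_sum]
      have hzero : ∀ m ∈ Finset.univ, ψ (u i) (C j m • u m) = 0 := by
        intro m _
        rw [map_smul, huu, smul_zero]
      rw [Finset.sum_congr rfl hzero, Finset.sum_const_zero, sub_zero, huv]
      simp [eq_comm]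
    have hψww : ∀ i j, ψ (w i) (w j) = 0 := by
      intro i j
      have hvw : ψ (v i) (w j) = ψ (v i) (v j) - C j i := by
        rw [hwd j, map_sub, map_sum]
        have hterm : ∀ m ∈ Finset.univ, ψ (v i) (C j m • u m)
            = C j m * (if i = m then 1 else 0) := by
          intro m _
          rw [map_smul, smul_eq_mul, hvu]
        rw [Finset.sum_congr rfl hterm,
          Finset.sum_eq_single i (fun m _ hm => by rw [if_neg (fun h => hm h.symm), mul_zero])
            (by simp), if_pos rfl, mul_one]
      have hexp : ψ (w i) (w j) = ψ (v i) (w j) - ∑ m, C i m * ψ (u m) (w j) := by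
        conv_lhs => rw [hwd i]
        rw [map_sub, LinearMap.sub_apply, map_sum, LinearMap.sum_apply]
        congr 1
        refine Finset.sum_congr rfl fun m _ => ?_
        rw [map_smul, LinearMap.smul_apply, smul_eq_mul]
      rw [hexp, hvw]
      rw [Finset.sum_congr rfl fun m _ => by rw [hψuw m j]]
      rw [Finset.sum_eq_single j (fun m _ hm => by rw [if_neg hm, mul_zero]) (by simp),
        if_pos rfl, mul_one]
      have hs := hCsum j i
      rw [hsymm (v j) (v i)] at hs
      linear_combination -hs
    -- operators
    set Uop : Fin g → Module.End k S := fun i => Θ (ι Q (u i)) with hUop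
    set Wop : Fin g → Module.End k S := fun i => Θ (ι Q (w i)) with hWop
    have hUU : ∀ i j, Uop i * Uop j + Uop j * Uop i = 0 := by
      intro i j
      rw [hUop]
      simp only
      rw [hpolar, huu, mul_zero, zero_smul]
    have hWW : ∀ i j, Wop i * Wop j + Wop j * Wop i = 0 := by
      intro i j
      rw [hWop]
      simp only
      rw [hpolar, hψww, mul_zero, zero_smul]
    have hUW : ∀ i j, Uop i * Wop j + Wop j * Uop i
        = (if i = j then (2:k) else 0) • (1 : Module.End k S) := by
      intro i j
      rw [hUop, hWop]
      simp only
      rw [hpolar, hψuw]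
      by_cases h : i = j
      · rw [if_pos h, if_pos h, mul_one]
      · rw [if_neg h, if_neg h, mul_zero]
    -- existence of a vacuum vector
    obtain ⟨ω, hω0, hωann⟩ := fockA1 Uop Wop h2 hUU hUW 1 one_ne_zero
    -- ω is annihilated by all of L
    have hannL : ∀ x ∈ L, Θ (ι Q x) ω = 0 := by
      intro x hx
      rw [← hspanu] at hx
      obtain ⟨c, hc⟩ := (Submodule.mem_span_range_iff_exists_fun k).mp hx
      rw [← hTmap, ← hc, map_sum]
      refine Finset.sum_eq_zero fun i _ => ?_
      rw [map_smul, hTmap]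
      have := hωann i
      rw [hUop] at this
      simp only at this
      rw [this, smul_zero]
    -- the annihilator of ω is exactly L
    set A : Submodule k V := LinearMap.ker (Tmap ω) with hA
    have hLA : L ≤ A := fun x hx => by
      rw [hA, LinearMap.mem_ker, hTmap]
      exact hannL x hx
    have hAiso : ∀ a ∈ A, ∀ b ∈ A, ψ a b = 0 := by
      intro a ha b hb
      rw [hA, LinearMap.mem_ker, hTmap] at ha hb
      exact hiso_of_ann ω hω0 a b ha hb
    have hLeqA : L = A :=
      Submodule.eq_of_le_of_finrank_le hLA (by rw [hfrk]; exact hiso_le A hAiso)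
    have hiff : ∀ x : V, x ∈ L ↔ Θ (ι Q x) ω = 0 := by
      intro x
      rw [hLeqA, hA, LinearMap.mem_ker, hTmap]
    refine ⟨ω, hω0, hiff, ?_⟩
    -- uniqueness
    intro ω' hω'0 hiff'
    have hann' : ∀ i, Uop i ω' = 0 := by
      intro i
      rw [hUop]
      simp only
      exact (hiff' (u i)).mp (huL i)
    obtain ⟨c, hc⟩ := fockA2 Uop Wop h2 hUU hWW hUW hSdim ω hω0 hωann ω' hann'
    refine ⟨c, ?_, hc⟩
    rintro rfl
    rw [zero_smul] at hc
    exact hω'0 hc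
end

section
/- Let a, b, n, r be integers satisfying n ≥ 1, a ≥ n, b ≥ n, and 1 ≤ r ≤ n. Let J be a totally ordered finite set with a partition J = J₁ ⊔ J₂ such that |J₁| = a and |J₂| = b. Then there exists a family ℱ of r-element subsets of J with |ℱ| = C(n, r) (binomial coefficient) with the following two properties: (1) every I ∈ ℱ satisfies |I ∩ J₁| = ⌊r/2⌋; (2) for every field K, every n-dimensional K-vector space W, and every family of vectors (w_i)_{i ∈ J} in W such that for every subset T ⊆ J with |T| = n the family (w_i)_{i ∈ T} is a basis of W, the family (w_I)_{I ∈ ℱ} is a basis of ⋀^r W, where for I = {i₁ < ⋯ < i_r} one sets w_I = w_{i₁} ∧ ⋯ ∧ w_{i_r}. -/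
universe u v

open ExteriorAlgebra Module

/-! ### Combinatorial auxiliary lemmas -/

/-- rank function: number of elements of `S` below `p`. -/
def rnk (S : Finset ℕ) (p : ℕ) : ℕ := (S.filter (· < p)).card

lemma rnk_succ (S : Finset ℕ) (y : ℕ) :
    rnk S (y + 1) = rnk S y + (if y ∈ S then 1 else 0) := by
  unfold rnk
  have h : S.filter (· < y + 1) = S.filter (· < y) ∪ S.filter (· = y) := by
    rw [← Finset.filter_or]
    apply Finset.filter_congr
    intro x _
    simp [Nat.lt_succ_iff_lt_or_eq, Nat.le_iff_lt_or_eq]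
  rw [h, Finset.card_union_of_disjoint]
  · rw [Finset.filter_eq']
    split <;> simp
  · rw [Finset.disjoint_filter]
    intro x _ hx hx'
    omega

lemma rnk_of_subset_range {N : ℕ} {S : Finset ℕ} (hS : S ⊆ Finset.range N) :
    rnk S N = S.card := by
  unfold rnk
  rw [Finset.filter_true_of_mem]
  intro x hx
  simpa using hS hx

lemma comb_core {N : ℕ} {S T : Finset ℕ} (hS : S ⊆ Finset.range N) (hT : T ⊆ Finset.range N)
    (hcard : T.card = S.card) (hne : T ≠ S)
    (hpar : ∀ p ∈ T, p ∉ S → (rnk T p + rnk S p) % 2 = 0) :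
    ∑ p ∈ T, p < ∑ p ∈ S, p := by
  have claim1 : ∀ y, rnk S y ≤ rnk T y := by
    by_contra hbad
    push_neg at hbad
    obtain ⟨y, hy⟩ := hbad
    have mono : ∀ z, rnk T z < rnk S z → rnk T (z + 1) < rnk S (z + 1) := by
      intro z hz
      rw [rnk_succ, rnk_succ]
      by_cases hzT : z ∈ T
      · by_cases hzS : z ∈ S
        · rw [if_pos hzT, if_pos hzS]; omega
        · have := hpar z hzT hzS
          rw [if_pos hzT, if_neg hzS]; omega
      · rw [if_neg hzT]; split <;> omega
    have upto : ∀ z, y ≤ z → rnk T z < rnk S z := by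
      intro z hz
      induction z, hz using Nat.le_induction with
      | base => exact hy
      | succ k hk ih => exact mono k ih
    have hN : rnk T (max y N) < rnk S (max y N) := upto _ (le_max_left _ _)
    have h1 : rnk T (max y N) = T.card :=
      rnk_of_subset_range (hT.trans (Finset.range_subset_range.2 (le_max_right _ _)))
    have h2 : rnk S (max y N) = S.card :=
      rnk_of_subset_range (hS.trans (Finset.range_subset_range.2 (le_max_right _ _)))
    omega
  have claim2 : ∃ y < N, rnk S y < rnk T y := by
    have hST : (S \ T).Nonempty := by
      rw [Finset.sdiff_nonempty]
      intro hsub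
      exact hne (Finset.eq_of_subset_of_card_le hsub (le_of_eq hcard)).symm
    obtain ⟨p, hp⟩ := hST
    rw [Finset.mem_sdiff] at hp
    refine ⟨p, by simpa using hS hp.1, ?_⟩
    have h1 := claim1 (p + 1)
    rw [rnk_succ, rnk_succ] at h1
    simp [hp.1, hp.2] at h1
    omega
  have sumform : ∀ X : Finset ℕ, X ⊆ Finset.range N →
      ∑ y ∈ Finset.range N, rnk X y = ∑ p ∈ X, (N - 1 - p) := by
    intro X hX
    unfold rnk
    have h1 : ∀ y ∈ Finset.range N, (X.filter (· < y)).card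
        = ∑ p ∈ X, (if p < y then 1 else 0) := by
      intro y _
      rw [Finset.card_filter]
    rw [Finset.sum_congr rfl h1, Finset.sum_comm]
    apply Finset.sum_congr rfl
    intro p hp
    have hpN : p < N := by simpa using hX hp
    have h2 : ∑ y ∈ Finset.range N, (if p < y then 1 else 0)
        = ((Finset.range N).filter (fun y => p < y)).card := (Finset.card_filter _ _).symm
    rw [h2]
    have h3 : (Finset.range N).filter (fun y => p < y) = Finset.Ico (p + 1) N := by
      ext y
      simp [Finset.mem_Ico]
      omega
    rw [h3, Nat.card_Ico]
    omega
  have aux : ∀ X : Finset ℕ, X ⊆ Finset.range N →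
      (∑ p ∈ X, (N - 1 - p)) + ∑ p ∈ X, p = X.card * (N - 1) := by
    intro X hX
    rw [← Finset.sum_add_distrib]
    have h4 : ∀ p ∈ X, (N - 1 - p) + p = N - 1 := by
      intro p hp
      have : p < N := by simpa using hX hp
      omega
    rw [Finset.sum_congr rfl h4, Finset.sum_const, smul_eq_mul]
  obtain ⟨y₀, hy₀N, hy₀⟩ := claim2
  have hlt : ∑ y ∈ Finset.range N, rnk S y < ∑ y ∈ Finset.range N, rnk T y :=
    Finset.sum_lt_sum (fun i _ => claim1 i) ⟨y₀, Finset.mem_range.2 hy₀N, hy₀⟩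
  rw [sumform S hS, sumform T hT] at hlt
  have hA := aux S hS
  have hB := aux T hT
  rw [hcard] at hB
  omega

lemma range_odd_card (r : ℕ) : ((Finset.range r).filter (fun m => m % 2 = 1)).card = r / 2 := by
  induction r with
  | zero => simp
  | succ k ih =>
    rw [Finset.range_add_one, Finset.filter_insert]
    by_cases hk : k % 2 = 1
    · rw [if_pos hk, Finset.card_insert_of_notMem (by simp)]
      omega
    · rw [if_neg hk]
      omega

lemma rnk_orderIsoOfFin {r : ℕ} (S : Finset ℕ) (hS : S.card = r) (j : Fin r) :
    rnk S ((S.orderIsoOfFin hS j : ℕ)) = j.val := by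
  set e := S.orderIsoOfFin hS with he
  unfold rnk
  have hinj : Function.Injective (fun i : Fin r => (e i : ℕ)) :=
    fun i j hij => e.injective (Subtype.coe_injective hij)
  have himg : S.filter (· < (e j : ℕ))
      = (Finset.univ.filter (fun i : Fin r => i < j)).image (fun i => (e i : ℕ)) := by
    ext x
    simp only [Finset.mem_filter, Finset.mem_image, Finset.mem_univ, true_and]
    constructor
    · rintro ⟨hxS, hlt⟩
      obtain ⟨i, hi⟩ := e.surjective ⟨x, hxS⟩
      refine ⟨i, ?_, by rw [hi]⟩
      rw [← e.lt_iff_lt]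
      rw [hi]
      exact Subtype.coe_lt_coe.1 (by simpa using hlt)
    · rintro ⟨i, hij, rfl⟩
      exact ⟨(e i).2, Subtype.coe_lt_coe.2 (e.lt_iff_lt.2 hij)⟩
  rw [himg, Finset.card_image_of_injective _ hinj]
  have h : (Finset.univ.filter (fun i : Fin r => i < j)) = Finset.Iio j := by ext i; simp
  rw [h, Fin.card_Iio]

lemma card_rnk_odd (S : Finset ℕ) : (S.filter (fun p => rnk S p % 2 = 1)).card = S.card / 2 := by
  set r := S.card with hr
  set e := S.orderIsoOfFin hr.symm with he
  have hinj : Function.Injective (fun i : Fin r => (e i : ℕ)) :=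
    fun i j hij => e.injective (Subtype.coe_injective hij)
  have himg : S.filter (fun p => rnk S p % 2 = 1)
      = (Finset.univ.filter (fun j : Fin r => j.val % 2 = 1)).image (fun j => (e j : ℕ)) := by
    ext x
    simp only [Finset.mem_filter, Finset.mem_image, Finset.mem_univ, true_and]
    constructor
    · rintro ⟨hxS, hodd⟩
      obtain ⟨i, hi⟩ := e.surjective ⟨x, hxS⟩
      refine ⟨i, ?_, by rw [hi]⟩
      have h5 := rnk_orderIsoOfFin S hr.symm i
      rw [hi] at h5
      simpa [h5] using hodd
    · rintro ⟨i, hodd, rfl⟩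
      exact ⟨(e i).2, by rw [rnk_orderIsoOfFin S hr.symm i]; exact hodd⟩
  rw [himg, Finset.card_image_of_injective _ hinj]
  have hcb : (Finset.univ.filter (fun j : Fin r => j.val % 2 = 1)).card
      = ((Finset.range r).filter (fun m => m % 2 = 1)).card := by
    apply Finset.card_bij (fun j _ => j.val)
    · intro a ha
      simp only [Finset.mem_filter, Finset.mem_range, Finset.mem_univ, true_and] at *
      exact ⟨a.isLt, ha⟩
    · intro a _ b _ hab
      exact Fin.ext hab
    · intro m hm
      simp only [Finset.mem_filter, Finset.mem_range] at hm
      exact ⟨⟨m, hm.1⟩, by simp [hm.2], rfl⟩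
  rw [hcb, range_odd_card]

/-! ### Exterior algebra auxiliary lemmas -/

section Alg

variable {K : Type*} [Field K] {W : Type*} [AddCommGroup W] [Module K W]

lemma ιMulti_mul (p q : ℕ) (u : Fin p → W) (v : Fin q → W) :
    (ιMulti K p u : ExteriorAlgebra K W) * ιMulti K q v = ιMulti K (p + q) (Fin.append u v) := by
  have h1 : (fun i : Fin p => ι K (Fin.append u v (Fin.castAdd q i))) = fun i => ι K (u i) :=
    funext fun i => by rw [Fin.append_left]
  have h2 : (fun i : Fin q => ι K (Fin.append u v (Fin.natAdd p i))) = fun i => ι K (v i) :=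
    funext fun i => by rw [Fin.append_right]
  rw [ιMulti_apply, ιMulti_apply, ιMulti_apply, List.ofFn_add, List.prod_append, h2, ← h1]
  rfl

lemma ιMulti_ne_zero_of_basis {m : ℕ} (hm0 : 0 < m) [FiniteDimensional K W]
    (v : Fin m → W) (hli : LinearIndependent K v) (hcard : m = finrank K W) :
    (ιMulti K m v : ExteriorAlgebra K W) ≠ 0 := by
  haveI : Nonempty (Fin m) := ⟨⟨0, hm0⟩⟩
  let B := basisOfLinearIndependentOfCardEqFinrank hli (by simpa using hcard)
  have hB : ⇑B = v := coe_basisOfLinearIndependentOfCardEqFinrank _ _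
  intro h0
  have h1 := congrArg
    (liftAlternating (R := K) (M := W) (N := K)
      (Function.update (fun i => (0 : W [⋀^Fin i]→ₗ[K] K)) m B.det)) h0
  rw [liftAlternating_apply_ιMulti, map_zero, Function.update_self] at h1
  rw [← hB, Basis.det_self] at h1
  exact one_ne_zero h1

open scoped Classical in
lemma span_wedges (n' r' : ℕ) (β : Basis (Fin n') K W) :
    Submodule.span K (((Finset.powersetCard r' (Finset.univ : Finset (Fin n'))).image
      (fun C => if hC : C.card = r' then
        (ιMulti K r' (fun i => β (C.orderIsoOfFin hC i)) : ExteriorAlgebra K W) else 0) :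
        Finset (ExteriorAlgebra K W)) : Set (ExteriorAlgebra K W)) = ⋀[K]^r' W := by
  apply le_antisymm
  · rw [Submodule.span_le, Finset.coe_image]
    rintro x ⟨C, hC, rfl⟩
    rw [Finset.mem_coe, Finset.mem_powersetCard] at hC
    dsimp only
    rw [dif_pos hC.2]
    exact ιMulti_range K r' ⟨_, rfl⟩
  · rw [← ιMulti_span_fixedDegree, Submodule.span_le]
    rintro x ⟨v, rfl⟩
    have hv : v = fun i => ∑ j : Fin n', β.repr (v i) j • β j :=
      funext fun i => (β.sum_repr (v i)).symm
    have hexp : (ιMulti K r' v : ExteriorAlgebra K W)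
        = ∑ g : Fin r' → Fin n', (∏ i, β.repr (v i) (g i)) • ιMulti K r' (fun i => β (g i)) := by
      conv_lhs => rw [hv]
      have h1 := MultilinearMap.map_sum
        ((ιMulti K r' (M := W)).toMultilinearMap) (fun i j => β.repr (v i) j • β j)
      simp only [AlternatingMap.coe_multilinearMap] at h1
      rw [h1]
      apply Finset.sum_congr rfl
      intro g _
      have h2 := MultilinearMap.map_smul_univ ((ιMulti K r' (M := W)).toMultilinearMap)
        (fun i => β.repr (v i) (g i)) (fun i => β (g i))
      simp only [AlternatingMap.coe_multilinearMap] at h2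
      exact h2
    rw [hexp]
    apply Submodule.sum_mem
    intro g _
    apply Submodule.smul_mem
    by_cases hg : Function.Injective g
    · set C := Finset.image g Finset.univ with hCdef
      have hCcard : C.card = r' := by
        rw [Finset.card_image_of_injective _ hg, Finset.card_univ, Fintype.card_fin]
      set E := C.orderIsoOfFin hCcard with hE
      have hgen : (ιMulti K r' (fun i => β (E i)) : ExteriorAlgebra K W) ∈
          Submodule.span K (((Finset.powersetCard r' (Finset.univ : Finset (Fin n'))).image
            (fun C => if hC : C.card = r' then
              (ιMulti K r' (fun i => β (C.orderIsoOfFin hC i)) : ExteriorAlgebra K W) else 0) :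
            Finset (ExteriorAlgebra K W)) : Set (ExteriorAlgebra K W)) := by
        apply Submodule.subset_span
        rw [Finset.coe_image]
        refine ⟨C, ?_, ?_⟩
        · rw [Finset.mem_coe, Finset.mem_powersetCard]
          exact ⟨Finset.subset_univ _, hCcard⟩
        · dsimp only
          rw [dif_pos hCcard]
      have hmemC : ∀ i, g i ∈ C := fun i => Finset.mem_image_of_mem _ (Finset.mem_univ i)
      have hgcinj : Function.Injective (fun i => (⟨g i, hmemC i⟩ : {x // x ∈ C})) :=
        fun i j h => hg (congrArg Subtype.val h)
      have hbij : Function.Bijective (fun i => (⟨g i, hmemC i⟩ : {x // x ∈ C})) := by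
        refine (Fintype.bijective_iff_injective_and_card _).2 ⟨hgcinj, ?_⟩
        simp [Fintype.card_coe, hCcard]
      set σ : Equiv.Perm (Fin r') := (Equiv.ofBijective _ hbij).trans E.toEquiv.symm with hσ
      have hcomp : ((fun i => β (E i)) ∘ σ) = fun i => β (g i) := by
        funext i
        have h3 : E (σ i) = (⟨g i, hmemC i⟩ : {x // x ∈ C}) := by
          simp [hσ, Equiv.ofBijective]
        simp only [Function.comp_apply, h3]
      have hperm := AlternatingMap.map_perm (ιMulti K r' (M := W)) (fun i => β (E i)) σ
      rw [hcomp] at hperm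
      rw [hperm]
      rcases Int.units_eq_one_or (Equiv.Perm.sign σ) with h | h <;> rw [h]
      · simpa using hgen
      · simp only [Units.neg_smul, one_smul]
        exact Submodule.neg_mem _ hgen
    · obtain ⟨i, j, hij, hne⟩ := Function.not_injective_iff.1 hg
      rw [(ιMulti K r' (M := W)).map_eq_zero_of_eq (fun i => β (g i))
        (show β (g i) = β (g j) by rw [hij]) hne]
      exact Submodule.zero_mem _

end Alg


/-! ### The letter assignments -/

section Letters

variable {J : Type u} [DecidableEq J]

/-- The element of `J` chosen for `p ∈ S` : `bv p` at even rank, `av p` at odd rank. -/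
def eltF (av bv : ℕ → J) (S : Finset ℕ) (p : ℕ) : J :=
  if rnk S p % 2 = 0 then bv p else av p

/-- The element of `J` chosen for `p ∉ S` (dual letters). -/
def deltF (av bv : ℕ → J) (S : Finset ℕ) (p : ℕ) : J :=
  if rnk S p % 2 = 0 then av p else bv p

/-- The `r`-subset of `J` attached to an `r`-subset `S` of positions. -/
def ISetF (av bv : ℕ → J) (S : Finset ℕ) : Finset J := S.image (eltF av bv S)

/-- The dual `(n-r)`-subset of `J` attached to `S`. -/
def DSetF (av bv : ℕ → J) (n : ℕ) (S : Finset ℕ) : Finset J :=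
  (Finset.range n \ S).image (deltF av bv S)

lemma eltF_or (av bv : ℕ → J) (S : Finset ℕ) (p : ℕ) :
    eltF av bv S p = av p ∨ eltF av bv S p = bv p := by
  unfold eltF; split
  · exact Or.inr rfl
  · exact Or.inl rfl

lemma deltF_or (av bv : ℕ → J) (S : Finset ℕ) (p : ℕ) :
    deltF av bv S p = av p ∨ deltF av bv S p = bv p := by
  unfold deltF; split
  · exact Or.inl rfl
  · exact Or.inr rfl

end Letters

/-! ### The key linear independence lemma -/

lemma indep_aux {J : Type u} [Fintype J] [LinearOrder J] {K : Type v} [Field K]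
    {W : Type v} [AddCommGroup W] [Module K W] [FiniteDimensional K W]
    (n r m : ℕ) (hr1 : 1 ≤ r) (hm : n = r + m) (hrank : Module.finrank K W = n)
    (av bv : ℕ → J)
    (hsep : ∀ p < n, ∀ q < n, ∀ u v : J, (u = av p ∨ u = bv p) → (v = av q ∨ v = bv q) →
      u = v → p = q)
    (hIcard : ∀ S ∈ Finset.powersetCard r (Finset.range n), (ISetF av bv S).card = r)
    (hDcard : ∀ S ∈ Finset.powersetCard r (Finset.range n), (DSetF av bv n S).card = m)
    (w : J → W)
    (hw : ∀ T : Finset J, T.card = n →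
      (LinearIndependent K fun t : T => w t) ∧ Submodule.span K (w '' ↑T) = ⊤) :
    LinearIndependent K (fun S : {S // S ∈ Finset.powersetCard r (Finset.range n)} =>
      (ιMulti K r (fun t => w ((ISetF av bv S.1).orderIsoOfFin (hIcard S.1 S.2) t : J)) :
        ExteriorAlgebra K W)) := by
  classical
  rw [Fintype.linearIndependent_iff]
  intro g hg
  by_contra hex
  push_neg at hex
  obtain ⟨Sbad, hSbad⟩ := hex
  set G : Finset {S // S ∈ Finset.powersetCard r (Finset.range n)} :=
    Finset.univ.filter (fun S => g S ≠ 0) with hG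
  have hGne : G.Nonempty := ⟨Sbad, by simp [hG, hSbad]⟩
  obtain ⟨S₀, hS₀G, hS₀min⟩ := Finset.exists_min_image G (fun S => ∑ p ∈ S.1, p) hGne
  have hgS₀ : g S₀ ≠ 0 := by
    have h := (Finset.mem_filter.1 hS₀G).2
    exact h
  have hmem : ∀ S : {S // S ∈ Finset.powersetCard r (Finset.range n)},
      S.1 ⊆ Finset.range n ∧ S.1.card = r := fun S => Finset.mem_powersetCard.1 S.2
  set y : ExteriorAlgebra K W :=
    ιMulti K m (fun t => w ((DSetF av bv n S₀.1).orderIsoOfFin (hDcard S₀.1 S₀.2) t : J)) with hy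
  have hprod : ∀ S : {S // S ∈ Finset.powersetCard r (Finset.range n)},
      (ιMulti K r (fun t => w ((ISetF av bv S.1).orderIsoOfFin (hIcard S.1 S.2) t : J)) :
        ExteriorAlgebra K W) * y
      = ιMulti K (r + m) (Fin.append
          (fun t => w ((ISetF av bv S.1).orderIsoOfFin (hIcard S.1 S.2) t : J))
          (fun t => w ((DSetF av bv n S₀.1).orderIsoOfFin (hDcard S₀.1 S₀.2) t : J))) := by
    intro S
    rw [hy]
    exact ιMulti_mul r m _ _
  have hg2 : ∑ S : {S // S ∈ Finset.powersetCard r (Finset.range n)},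
      g S • ((ιMulti K r (fun t => w ((ISetF av bv S.1).orderIsoOfFin (hIcard S.1 S.2) t : J)) :
        ExteriorAlgebra K W) * y) = 0 := by
    have h := congrArg (· * y) hg
    simpa [Finset.sum_mul, smul_mul_assoc] using h
  -- terms other than `S₀` vanish
  have hzero : ∀ S : {S // S ∈ Finset.powersetCard r (Finset.range n)}, S ∈ G → S ≠ S₀ →
      (ιMulti K r (fun t => w ((ISetF av bv S.1).orderIsoOfFin (hIcard S.1 S.2) t : J)) :
        ExteriorAlgebra K W) * y = 0 := by
    intro S hSG hSne
    obtain ⟨hSsub, hScard⟩ := hmem S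
    obtain ⟨hS₀sub, hS₀card⟩ := hmem S₀
    have hSmin : ∑ p ∈ S₀.1, p ≤ ∑ p ∈ S.1, p := hS₀min S hSG
    obtain ⟨p, hpS, hpS₀, hpar⟩ :
        ∃ p ∈ S.1, p ∉ S₀.1 ∧ (rnk S.1 p + rnk S₀.1 p) % 2 = 1 := by
      by_contra hall
      push_neg at hall
      have hne2 : S.1 ≠ S₀.1 := fun h => hSne (Subtype.ext h)
      have hlt := comb_core hS₀sub hSsub (by omega) hne2
        (fun p hp hp2 => by have := hall p hp hp2; omega)
      omega
    have hpn : p < n := Finset.mem_range.1 (hSsub hpS)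
    have hcomm : eltF av bv S.1 p = deltF av bv S₀.1 p := by
      unfold eltF deltF
      by_cases h1 : rnk S.1 p % 2 = 0
      · rw [if_pos h1, if_neg (by omega)]
      · rw [if_neg h1, if_pos (by omega)]
    have hcI : eltF av bv S.1 p ∈ ISetF av bv S.1 := Finset.mem_image_of_mem _ hpS
    have hcD : eltF av bv S.1 p ∈ DSetF av bv n S₀.1 := by
      rw [hcomm]
      exact Finset.mem_image_of_mem _ (Finset.mem_sdiff.2 ⟨Finset.mem_range.2 hpn, hpS₀⟩)
    set i0 : Fin r := ((ISetF av bv S.1).orderIsoOfFin (hIcard S.1 S.2)).symm ⟨_, hcI⟩ with hi0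
    set j0 : Fin m := ((DSetF av bv n S₀.1).orderIsoOfFin (hDcard S₀.1 S₀.2)).symm ⟨_, hcD⟩
      with hj0
    have h5 : ((ISetF av bv S.1).orderIsoOfFin (hIcard S.1 S.2)) i0
        = ⟨eltF av bv S.1 p, hcI⟩ := by
      rw [hi0]; exact OrderIso.apply_symm_apply _ _
    have h6 : ((DSetF av bv n S₀.1).orderIsoOfFin (hDcard S₀.1 S₀.2)) j0
        = ⟨eltF av bv S.1 p, hcD⟩ := by
      rw [hj0]; exact OrderIso.apply_symm_apply _ _
    rw [hprod S]
    refine AlternatingMap.map_eq_zero_of_eq _ _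
      (i := Fin.castAdd m i0) (j := Fin.natAdd r j0) ?_ ?_
    · rw [Fin.append_left, Fin.append_right]
      rw [h5, h6]
    · intro h
      have h7 := congrArg Fin.val h
      simp only [Fin.coe_castAdd, Fin.coe_natAdd] at h7
      omega
  -- the `S₀` term does not vanish
  obtain ⟨hS₀sub, hS₀card⟩ := hmem S₀
  have hdisj : Disjoint (ISetF av bv S₀.1) (DSetF av bv n S₀.1) := by
    rw [Finset.disjoint_left]
    rintro x hxI hxD
    obtain ⟨p, hp, rfl⟩ := Finset.mem_image.1 hxI
    obtain ⟨q, hq, hq2⟩ := Finset.mem_image.1 hxD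
    rw [Finset.mem_sdiff, Finset.mem_range] at hq
    have hpq := hsep q hq.1 p (Finset.mem_range.1 (hS₀sub hp)) _ _
      (deltF_or av bv S₀.1 q) (eltF_or av bv S₀.1 p) hq2
    exact hq.2 (hpq ▸ hp)
  have hT₀card : (ISetF av bv S₀.1 ∪ DSetF av bv n S₀.1).card = n := by
    rw [Finset.card_union_of_disjoint hdisj, hIcard S₀.1 S₀.2, hDcard S₀.1 S₀.2]
    omega
  obtain ⟨hli0, hsp0⟩ := hw _ hT₀card
  set uapp : Fin (r + m) → J := Fin.append
    (fun t => ((ISetF av bv S₀.1).orderIsoOfFin (hIcard S₀.1 S₀.2) t : J))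
    (fun t => ((DSetF av bv n S₀.1).orderIsoOfFin (hDcard S₀.1 S₀.2) t : J)) with huapp
  have hcases : ∀ k : Fin (r + m),
      (∃ i1 : Fin r, k = Fin.castAdd m i1) ∨ (∃ j1 : Fin m, k = Fin.natAdd r j1) :=
    fun k => Fin.addCases (fun i1 => Or.inl ⟨i1, rfl⟩) (fun j1 => Or.inr ⟨j1, rfl⟩) k
  have hmemT : ∀ i, uapp i ∈ ISetF av bv S₀.1 ∪ DSetF av bv n S₀.1 := by
    intro i
    rcases hcases i with ⟨i1, rfl⟩ | ⟨j1, rfl⟩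
    · rw [huapp, Fin.append_left]
      exact Finset.mem_union_left _ (((ISetF av bv S₀.1).orderIsoOfFin (hIcard S₀.1 S₀.2) i1).2)
    · rw [huapp, Fin.append_right]
      exact Finset.mem_union_right _
        (((DSetF av bv n S₀.1).orderIsoOfFin (hDcard S₀.1 S₀.2) j1).2)
  have huinj : Function.Injective uapp := by
    intro i j h
    rcases hcases i with ⟨i1, rfl⟩ | ⟨i1, rfl⟩ <;> rcases hcases j with ⟨j1, rfl⟩ | ⟨j1, rfl⟩
    · rw [huapp, Fin.append_left, Fin.append_left] at h
      have h8 : i1 = j1 :=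
        ((ISetF av bv S₀.1).orderIsoOfFin (hIcard S₀.1 S₀.2)).injective
          (Subtype.coe_injective h)
      rw [h8]
    · rw [huapp, Fin.append_left, Fin.append_right] at h
      exfalso
      have hmem1 := (((ISetF av bv S₀.1).orderIsoOfFin (hIcard S₀.1 S₀.2)) i1).2
      have hmem2 := (((DSetF av bv n S₀.1).orderIsoOfFin (hDcard S₀.1 S₀.2)) j1).2
      rw [h] at hmem1
      exact (Finset.disjoint_left.1 hdisj) hmem1 hmem2
    · rw [huapp, Fin.append_right, Fin.append_left] at h
      exfalso
      have hmem1 := (((ISetF av bv S₀.1).orderIsoOfFin (hIcard S₀.1 S₀.2)) j1).2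
      have hmem2 := (((DSetF av bv n S₀.1).orderIsoOfFin (hDcard S₀.1 S₀.2)) i1).2
      rw [← h] at hmem1
      exact (Finset.disjoint_left.1 hdisj) hmem1 hmem2
    · rw [huapp, Fin.append_right, Fin.append_right] at h
      have h8 : i1 = j1 :=
        ((DSetF av bv n S₀.1).orderIsoOfFin (hDcard S₀.1 S₀.2)).injective
          (Subtype.coe_injective h)
      rw [h8]
  have hranu : Set.range uapp = ↑(ISetF av bv S₀.1 ∪ DSetF av bv n S₀.1) := by
    apply Set.Subset.antisymm
    · rintro x ⟨i, rfl⟩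
      exact hmemT i
    · intro x hx
      rw [Finset.coe_union, Set.mem_union] at hx
      rcases hx with hx | hx
      · rw [Finset.mem_coe] at hx
        refine ⟨Fin.castAdd m (((ISetF av bv S₀.1).orderIsoOfFin (hIcard S₀.1 S₀.2)).symm
          ⟨x, hx⟩), ?_⟩
        rw [huapp, Fin.append_left, OrderIso.apply_symm_apply]
      · rw [Finset.mem_coe] at hx
        refine ⟨Fin.natAdd r (((DSetF av bv n S₀.1).orderIsoOfFin (hDcard S₀.1 S₀.2)).symm
          ⟨x, hx⟩), ?_⟩
        rw [huapp, Fin.append_right, OrderIso.apply_symm_apply]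
  have hvli : LinearIndependent K (fun i => w (uapp i)) := by
    have h9 := hli0.comp
      (fun i => (⟨uapp i, hmemT i⟩ : {x // x ∈ ISetF av bv S₀.1 ∪ DSetF av bv n S₀.1}))
      (fun i j h => huinj (congrArg Subtype.val h))
    exact h9
  have hvsp : Submodule.span K (Set.range (fun i => w (uapp i))) = ⊤ := by
    have h1 : Set.range (fun i => w (uapp i))
        = w '' ↑(ISetF av bv S₀.1 ∪ DSetF av bv n S₀.1) := by
      rw [show (fun i => w (uapp i)) = w ∘ uapp from rfl, Set.range_comp, hranu]
    rw [h1, hsp0]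
  have hnz : (ιMulti K (r + m) (fun i => w (uapp i)) : ExteriorAlgebra K W) ≠ 0 :=
    ιMulti_ne_zero_of_basis (by omega) _ hvli (by rw [hrank]; omega)
  rw [Finset.sum_eq_single S₀ (fun S _ hSne => by
      by_cases hgS : g S = 0
      · rw [hgS, zero_smul]
      · rw [hzero S (by simp [hG, hgS]) hSne, smul_zero])
    (fun h => absurd (Finset.mem_univ S₀) h)] at hg2
  rw [hprod S₀] at hg2
  have happ : Fin.append
      (fun t => w ((ISetF av bv S₀.1).orderIsoOfFin (hIcard S₀.1 S₀.2) t : J))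
      (fun t => w ((DSetF av bv n S₀.1).orderIsoOfFin (hDcard S₀.1 S₀.2) t : J))
      = fun i => w (uapp i) := by
    funext i
    rcases hcases i with ⟨i1, rfl⟩ | ⟨j1, rfl⟩
    · rw [huapp, Fin.append_left, Fin.append_left]
    · rw [huapp, Fin.append_right, Fin.append_right]
  rw [happ] at hg2
  rcases smul_eq_zero.1 hg2 with h | h
  · exact hgS₀ h
  · exact hnz h

/-- Let `n ≥ 1`, `a, b ≥ n`, `1 ≤ r ≤ n`, and let `J` be a totally ordered finite set with a
partition `J = J₁ ⊔ J₂`, `|J₁| = a`, `|J₂| = b`.  Then there is a family `ℱ` of `r`-element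
subsets of `J` with `|ℱ| = C(n, r)` such that:
(1) every `I ∈ ℱ` satisfies `|I ∩ J₁| = ⌊r/2⌋`;
(2) for every field `K`, every `n`-dimensional `K`-vector space `W`, and every family
`(w_i)_{i∈J}` in `W` such that every `n`-element subfamily is a basis of `W`, the family
`(w_I)_{I∈ℱ}` is a basis of `⋀^r W`, where `w_I = w_{i₁} ∧ ⋯ ∧ w_{i_r}` for
`I = {i₁ < ⋯ < i_r}`.  (Here being a basis of `⋀^r W` is expressed as: the family is
linearly independent and spans the submodule `⋀[K]^r W` of the exterior algebra.) -/
theorem stmt_18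
    (a b n r : ℕ) (hn : 1 ≤ n) (ha : n ≤ a) (hb : n ≤ b) (hr1 : 1 ≤ r) (hrn : r ≤ n)
    (J : Type u) [Fintype J] [LinearOrder J]
    (J₁ : Finset J) (hJ₁ : J₁.card = a) (hJ₂ : J₁ᶜ.card = b) :
    ∃ ℱ : Finset (Finset J), ∃ hcard : ∀ I ∈ ℱ, I.card = r,
      ℱ.card = n.choose r ∧
      (∀ I ∈ ℱ, (I ∩ J₁).card = r / 2) ∧
      (∀ (K : Type v) [Field K] (W : Type v) [AddCommGroup W], ∀ [Module K W],
        FiniteDimensional K W → Module.finrank K W = n →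
        ∀ w : J → W,
        (∀ T : Finset J, T.card = n →
          (LinearIndependent K fun t : T => w t) ∧
            Submodule.span K (w '' ↑T) = ⊤) →
        (LinearIndependent K fun I : ℱ =>
          ExteriorAlgebra.ιMulti K r
            (fun t : Fin r => w ((I.1.orderIsoOfFin (hcard I.1 I.2) t : J)))) ∧
        Submodule.span K (Set.range fun I : ℱ =>
            ExteriorAlgebra.ιMulti K r
              (fun t : Fin r => w ((I.1.orderIsoOfFin (hcard I.1 I.2) t : J)))) =
          ⋀[K]^r W) := by
  classical
  have hn0 : 0 < n := hn
  obtain ⟨A', hA'sub, hA'card⟩ := Finset.exists_subset_card_eq (show n ≤ J₁.card by omega)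
  obtain ⟨B', hB'sub, hB'card⟩ := Finset.exists_subset_card_eq (show n ≤ J₁ᶜ.card by omega)
  set av : ℕ → J := fun i => (A'.orderIsoOfFin hA'card ⟨i % n, Nat.mod_lt _ hn0⟩ : J) with hav
  set bv : ℕ → J := fun i => (B'.orderIsoOfFin hB'card ⟨i % n, Nat.mod_lt _ hn0⟩ : J) with hbv
  have havJ₁ : ∀ i, av i ∈ J₁ := fun i => hA'sub (A'.orderIsoOfFin hA'card _).2
  have hbvJ₁ : ∀ i, bv i ∉ J₁ := fun i =>
    Finset.mem_compl.1 (hB'sub (B'.orderIsoOfFin hB'card _).2)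
  have hane : ∀ i j, av i ≠ bv j := fun i j h => hbvJ₁ j (h ▸ havJ₁ i)
  have havinj : ∀ p < n, ∀ q < n, av p = av q → p = q := by
    intro p hp q hq h
    have h1 := (A'.orderIsoOfFin hA'card).injective (Subtype.coe_injective h)
    have h2 : p % n = q % n := congrArg Fin.val h1
    rwa [Nat.mod_eq_of_lt hp, Nat.mod_eq_of_lt hq] at h2
  have hbvinj : ∀ p < n, ∀ q < n, bv p = bv q → p = q := by
    intro p hp q hq h
    have h1 := (B'.orderIsoOfFin hB'card).injective (Subtype.coe_injective h)
    have h2 : p % n = q % n := congrArg Fin.val h1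
    rwa [Nat.mod_eq_of_lt hp, Nat.mod_eq_of_lt hq] at h2
  have hsep : ∀ p < n, ∀ q < n, ∀ u v : J, (u = av p ∨ u = bv p) → (v = av q ∨ v = bv q) →
      u = v → p = q := by
    rintro p hp q hq u v (rfl | rfl) (rfl | rfl) h
    · exact havinj p hp q hq h
    · exact absurd h (hane p q)
    · exact absurd h.symm (hane q p)
    · exact hbvinj p hp q hq h
  have h𝒮mem : ∀ S ∈ Finset.powersetCard r (Finset.range n),
      S ⊆ Finset.range n ∧ S.card = r := by
    intro S hS
    rw [Finset.mem_powersetCard] at hS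
    exact hS
  have hIcard : ∀ S ∈ Finset.powersetCard r (Finset.range n), (ISetF av bv S).card = r := by
    intro S hS
    obtain ⟨hSsub, hScard⟩ := h𝒮mem S hS
    unfold ISetF
    rw [Finset.card_image_of_injOn, hScard]
    intro p hp q hq h
    exact hsep p (Finset.mem_range.1 (hSsub hp)) q (Finset.mem_range.1 (hSsub hq))
      _ _ (eltF_or av bv S p) (eltF_or av bv S q) h
  have hIinj : ∀ S ∈ Finset.powersetCard r (Finset.range n),
      ∀ T ∈ Finset.powersetCard r (Finset.range n), ISetF av bv S = ISetF av bv T → S = T := by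
    intro S hS T hT h
    obtain ⟨hSsub, hScard⟩ := h𝒮mem S hS
    obtain ⟨hTsub, hTcard⟩ := h𝒮mem T hT
    apply Finset.eq_of_subset_of_card_le _ (by omega)
    intro p hp
    have h1 : eltF av bv S p ∈ ISetF av bv T := by
      rw [← h]
      exact Finset.mem_image_of_mem _ hp
    obtain ⟨q, hq, hq2⟩ := Finset.mem_image.1 h1
    have h2 := hsep q (Finset.mem_range.1 (hTsub hq)) p (Finset.mem_range.1 (hSsub hp))
      _ _ (eltF_or av bv T q) (eltF_or av bv S p) hq2
    rwa [← h2]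
  have hcards : ∀ I ∈ (Finset.powersetCard r (Finset.range n)).image (ISetF av bv),
      I.card = r := by
    intro I hI
    obtain ⟨S, hS, rfl⟩ := Finset.mem_image.1 hI
    exact hIcard S hS
  refine ⟨(Finset.powersetCard r (Finset.range n)).image (ISetF av bv), hcards, ?_, ?_, ?_⟩
  · -- the family has `C(n, r)` members
    rw [Finset.card_image_of_injOn (fun S hS T hT h => hIinj S hS T hT h),
      Finset.card_powersetCard, Finset.card_range]
  · -- intersection with J₁ has `r / 2` elements
    intro I hI
    obtain ⟨S, hS, rfl⟩ := Finset.mem_image.1 hI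
    obtain ⟨hSsub, hScard⟩ := h𝒮mem S hS
    have hinter : ISetF av bv S ∩ J₁ = (S.filter (fun p => rnk S p % 2 = 1)).image av := by
      ext x
      rw [Finset.mem_inter]
      unfold ISetF
      simp only [Finset.mem_image, Finset.mem_filter]
      constructor
      · rintro ⟨⟨p, hpS, rfl⟩, hx1⟩
        have hodd : rnk S p % 2 = 1 := by
          by_contra hodd
          have h0 : rnk S p % 2 = 0 := by omega
          have hbp : eltF av bv S p = bv p := by unfold eltF; rw [if_pos h0]
          rw [hbp] at hx1
          exact hbvJ₁ p hx1
        have heq : eltF av bv S p = av p := by unfold eltF; rw [if_neg (by omega)]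
        exact ⟨p, ⟨hpS, hodd⟩, heq.symm⟩
      · rintro ⟨p, ⟨hpS, hodd⟩, rfl⟩
        constructor
        · refine ⟨p, hpS, ?_⟩
          unfold eltF
          rw [if_neg (by omega)]
        · exact havJ₁ p
    rw [hinter, Finset.card_image_of_injOn, card_rnk_odd, hScard]
    intro p hp q hq h
    have hp' := Finset.mem_range.1 (hSsub (Finset.mem_filter.1 hp).1)
    have hq' := Finset.mem_range.1 (hSsub (Finset.mem_filter.1 hq).1)
    exact havinj p hp' q hq' h
  · -- the linear algebra statement
    intro K _instK W _instW _instM hfd hrank w hw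
    obtain ⟨m, hm⟩ : ∃ m, n = r + m := ⟨n - r, by omega⟩
    have hDcard : ∀ S ∈ Finset.powersetCard r (Finset.range n), (DSetF av bv n S).card = m := by
      intro S hS
      obtain ⟨hSsub, hScard⟩ := h𝒮mem S hS
      unfold DSetF
      rw [Finset.card_image_of_injOn, Finset.card_sdiff_of_subset hSsub, Finset.card_range, hScard]
      · omega
      · intro p hp q hq h
        exact hsep p (Finset.mem_range.1 (Finset.mem_sdiff.1 hp).1)
          q (Finset.mem_range.1 (Finset.mem_sdiff.1 hq).1)
          _ _ (deltF_or av bv S p) (deltF_or av bv S q) h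
    have hliS := indep_aux n r m hr1 hm hrank av bv hsep hIcard hDcard w hw
    have hEbij : Function.Bijective
        (fun S : {S // S ∈ Finset.powersetCard r (Finset.range n)} =>
          (⟨ISetF av bv S.1, Finset.mem_image_of_mem _ S.2⟩ :
            {I // I ∈ (Finset.powersetCard r (Finset.range n)).image (ISetF av bv)})) := by
      constructor
      · intro S T h
        exact Subtype.ext (hIinj S.1 S.2 T.1 T.2 (congrArg Subtype.val h))
      · rintro ⟨I, hI⟩
        obtain ⟨S, hS, rfl⟩ := Finset.mem_image.1 hI
        exact ⟨⟨S, hS⟩, rfl⟩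
    have hcomp : (fun I : {I // I ∈ (Finset.powersetCard r (Finset.range n)).image (ISetF av bv)}
          => (ιMulti K r (fun t => w ((I.1.orderIsoOfFin (hcards I.1 I.2) t : J))) :
            ExteriorAlgebra K W)) ∘ (Equiv.ofBijective _ hEbij)
        = fun S : {S // S ∈ Finset.powersetCard r (Finset.range n)} =>
            (ιMulti K r (fun t => w ((ISetF av bv S.1).orderIsoOfFin (hIcard S.1 S.2) t : J)) :
              ExteriorAlgebra K W) := rfl
    constructor
    · -- linear independence
      exact (linearIndependent_equiv (Equiv.ofBijective _ hEbij)).1 (hcomp.symm ▸ hliS)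
    · -- spanning
      -- a basis of `W` built from the `n`-subset `B'`
      haveI : Nonempty (Fin n) := ⟨⟨0, hn0⟩⟩
      have hβli : LinearIndependent K
          (fun i : Fin n => w ((B'.orderIsoOfFin hB'card i : J))) :=
        (hw B' hB'card).1.comp _ (fun i j h =>
          (B'.orderIsoOfFin hB'card).injective (Subtype.ext (congrArg Subtype.val h)))
      set β : Basis (Fin n) K W := basisOfLinearIndependentOfCardEqFinrank hβli
        (by rw [Fintype.card_fin, hrank]) with hβ
      have hYspan := span_wedges n r β
      have hfinP : FiniteDimensional K ↥(⋀[K]^r W) := by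
        rw [← hYspan]
        exact FiniteDimensional.span_finset K _
      haveI := hfinP
      have hfr_le : Module.finrank K ↥(⋀[K]^r W) ≤ n.choose r := by
        have h1 := finrank_span_finset_le_card (R := K)
          ((Finset.powersetCard r (Finset.univ : Finset (Fin n))).image
            (fun C => if hC : C.card = r then
              (ιMulti K r (fun i => β (C.orderIsoOfFin hC i)) : ExteriorAlgebra K W) else 0))
        unfold Set.finrank at h1
        rw [hYspan] at h1
        refine h1.trans (Finset.card_image_le.trans ?_)
        rw [Finset.card_powersetCard, Finset.card_univ, Fintype.card_fin]
      have hmemP : ∀ S : {S // S ∈ Finset.powersetCard r (Finset.range n)},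
          (ιMulti K r (fun t => w ((ISetF av bv S.1).orderIsoOfFin (hIcard S.1 S.2) t : J)) :
            ExteriorAlgebra K W) ∈ ⋀[K]^r W :=
        fun S => ιMulti_range K r ⟨_, rfl⟩
      have hliP : LinearIndependent K
          (fun S : {S // S ∈ Finset.powersetCard r (Finset.range n)} =>
            (⟨ιMulti K r (fun t => w ((ISetF av bv S.1).orderIsoOfFin (hIcard S.1 S.2) t : J)),
              hmemP S⟩ : ↥(⋀[K]^r W))) := by
        apply LinearIndependent.of_comp ((⋀[K]^r W).subtype)
        exact hliS
      have h𝒮ne : (Finset.powersetCard r (Finset.range n)).Nonempty := by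
        rw [← Finset.card_pos, Finset.card_powersetCard, Finset.card_range]
        exact Nat.choose_pos hrn
      haveI : Nonempty {S // S ∈ Finset.powersetCard r (Finset.range n)} := by
        obtain ⟨S1, hS1⟩ := h𝒮ne
        exact ⟨⟨S1, hS1⟩⟩
      have hcardS : Fintype.card {S // S ∈ Finset.powersetCard r (Finset.range n)}
          = n.choose r := by
        rw [Fintype.card_coe, Finset.card_powersetCard, Finset.card_range]
      have hfr_ge : n.choose r ≤ Module.finrank K ↥(⋀[K]^r W) := by
        rw [← hcardS]
        exact hliP.fintype_card_le_finrank
      have hsp_top : Submodule.span K (Set.range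
          (fun S : {S // S ∈ Finset.powersetCard r (Finset.range n)} =>
            (⟨ιMulti K r (fun t => w ((ISetF av bv S.1).orderIsoOfFin (hIcard S.1 S.2) t : J)),
              hmemP S⟩ : ↥(⋀[K]^r W)))) = ⊤ :=
        hliP.span_eq_top_of_card_eq_finrank (by omega)
      have h2 : Submodule.span K (Set.range
          (fun S : {S // S ∈ Finset.powersetCard r (Finset.range n)} =>
            (ιMulti K r (fun t => w ((ISetF av bv S.1).orderIsoOfFin (hIcard S.1 S.2) t : J)) :
              ExteriorAlgebra K W))) = ⋀[K]^r W := by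
        have h3 := congrArg (Submodule.map ((⋀[K]^r W).subtype)) hsp_top
        rw [Submodule.map_span, Submodule.map_top, Submodule.range_subtype] at h3
        rw [← h3]
        congr 1
        rw [← Set.range_comp]
        rfl
      rw [← h2]
      congr 1
      calc Set.range (fun I : {I // I ∈ (Finset.powersetCard r
              (Finset.range n)).image (ISetF av bv)} =>
            (ιMulti K r (fun t => w ((I.1.orderIsoOfFin (hcards I.1 I.2) t : J))) :
              ExteriorAlgebra K W))
          = Set.range ((fun I : {I // I ∈ (Finset.powersetCard r
              (Finset.range n)).image (ISetF av bv)} =>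
            (ιMulti K r (fun t => w ((I.1.orderIsoOfFin (hcards I.1 I.2) t : J))) :
              ExteriorAlgebra K W)) ∘ (Equiv.ofBijective _ hEbij)) :=
            ((Equiv.ofBijective _ hEbij).surjective.range_comp _).symm
        _ = _ := by rw [hcomp]
end
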